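/- arXiv:2009.13989 — 10 statements merged into one kernel-verified Lean document; each statement's English description precedes it below -/
import Mathlib

section
/- Under the Setting, for every θ ∈ Θ and every n ∈ ℕ₀ the map {0,1,…,K} × 𝒪 × Ω ∋ (k,x,ω) ↦ V^θ_{k,n}(x,ω) ∈ ℝ is measurable with respect to the product sigma-algebra 2^{{0,…,K}} ⊗ ℬ(𝒪) ⊗ σ((ℛ^{(θ,ϑ)}_s)_{(s,ϑ)∈{1,…,K}×Θ}, (W^{(θ,ϑ)}_s)_{(s,ϑ)∈{0,…,K−1}×Θ}) and the Borel sigma-algebra on ℝ. -/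
open MeasureTheory ProbabilityTheory

/-- Auxiliary lemma: measurability of the MLP approximations `V` jointly in `(x, ω)`
for every fixed level `k ≤ K` and every list extending a fixed base `θ₀`, with respect to
an arbitrary measurable space structure on `Ω` making the relevant `R` and `W` measurable. -/
lemma mlp_aux {d K M : ℕ}
    {O : Set (Fin d → ℝ)}
    {S : Type*} [MeasurableSpace S]
    {Ω : Type*} [mΩ : MeasurableSpace Ω]
    (f : ℕ → O → ℝ → ℝ) (hf : ∀ k, k ≤ K → Measurable (fun q : O × ℝ => f k q.1 q.2))
    (g : O → ℝ) (hg : Measurable g)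
    (φ : ℕ → O → S → O) (hφ : ∀ k, k ≤ K → Measurable (fun q : O × S => φ k q.1 q.2))
    (W : List ℤ → ℕ → Ω → S)
    (R : List ℤ → ℕ → Ω → ℕ)
    (θ₀ : List ℤ)
    (hW : ∀ (q : List ℤ), q ≠ [] → ∀ k, k < K → Measurable (W (θ₀ ++ q) k))
    (hR : ∀ (q : List ℤ), q ≠ [] → ∀ k, 1 ≤ k → k ≤ K → Measurable (R (θ₀ ++ q) k))
    (hRle : ∀ (θ : List ℤ) (k : ℕ) (ω : Ω), 1 ≤ k → k ≤ K → R θ k ω ≤ k - 1)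
    (p : ℕ → ℕ → ℝ)
    (X : List ℤ → ℕ → ℕ → O → Ω → O)
    (hXk : ∀ (θ : List ℤ) (k : ℕ) (x : O) (ω : Ω), k ≤ K → X θ k k x ω = x)
    (hXl : ∀ (θ : List ℤ) (k l : ℕ) (x : O) (ω : Ω), l < k → k ≤ K →
      X θ k l x ω = φ l (X θ k (l + 1) x ω) (W θ l ω))
    (V : List ℤ → ℕ → ℕ → O → Ω → ℝ)
    (hV0 : ∀ (θ : List ℤ) (k : ℕ) (x : O) (ω : Ω), V θ k 0 x ω = 0)
    (hVrec : ∀ (θ : List ℤ) (k n : ℕ) (x : O) (ω : Ω), k ≤ K → 1 ≤ n → V θ k n x ω =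
      ((M : ℝ) ^ n)⁻¹ * (∑ m ∈ Finset.range (M ^ n),
        (g (X (θ ++ [0, -((m : ℤ) + 1)]) k 0 x ω)
          + ∑ l ∈ Finset.range k, f l (X (θ ++ [0, (m : ℤ) + 1]) k l x ω) 0))
      + ∑ j ∈ Finset.Ico 1 n, ((M : ℝ) ^ (n - j))⁻¹ *
          ∑ m ∈ Finset.range (M ^ (n - j)),
            (if 1 ≤ k then (p k (R (θ ++ [(j : ℤ), (m : ℤ) + 1]) k ω))⁻¹ else 0) *
            ((f (R (θ ++ [(j : ℤ), (m : ℤ) + 1]) k ω) (X (θ ++ [(j : ℤ), (m : ℤ) + 1]) k (R (θ ++ [(j : ℤ), (m : ℤ) + 1]) k ω) x ω)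
                (V (θ ++ [(j : ℤ), (m : ℤ) + 1]) (R (θ ++ [(j : ℤ), (m : ℤ) + 1]) k ω) j (X (θ ++ [(j : ℤ), (m : ℤ) + 1]) k (R (θ ++ [(j : ℤ), (m : ℤ) + 1]) k ω) x ω) ω)
              - V (θ ++ [(j : ℤ), (m : ℤ) + 1]) (R (θ ++ [(j : ℤ), (m : ℤ) + 1]) k ω) j (X (θ ++ [(j : ℤ), (m : ℤ) + 1]) k (R (θ ++ [(j : ℤ), (m : ℤ) + 1]) k ω) x ω) ω)
            - (f (R (θ ++ [(j : ℤ), (m : ℤ) + 1]) k ω) (X (θ ++ [(j : ℤ), (m : ℤ) + 1]) k (R (θ ++ [(j : ℤ), (m : ℤ) + 1]) k ω) x ω)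
                (V (θ ++ [(j : ℤ), -((m : ℤ) + 1)]) (R (θ ++ [(j : ℤ), (m : ℤ) + 1]) k ω) (j - 1) (X (θ ++ [(j : ℤ), (m : ℤ) + 1]) k (R (θ ++ [(j : ℤ), (m : ℤ) + 1]) k ω) x ω) ω)
              - V (θ ++ [(j : ℤ), -((m : ℤ) + 1)]) (R (θ ++ [(j : ℤ), (m : ℤ) + 1]) k ω) (j - 1) (X (θ ++ [(j : ℤ), (m : ℤ) + 1]) k (R (θ ++ [(j : ℤ), (m : ℤ) + 1]) k ω) x ω) ω))) :
    ∀ (n : ℕ) (q : List ℤ) (k : ℕ), k ≤ K →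
      Measurable (fun z : O × Ω => V (θ₀ ++ q) k n z.1 z.2) := by
  intro n
  induction n using Nat.strong_induction_on with
  | _ n IH =>
  intro q k hk
  -- measurability of the state processes X
  have hX0 : ∀ (jj : ℕ) (q' : List ℤ), q' ≠ [] → ∀ l, l + jj = k →
      Measurable (fun z : O × Ω => X (θ₀ ++ q') k l z.1 z.2) := by
    intro jj
    induction jj with
    | zero =>
      intro q' hq' l hl
      have hlk : l = k := by omega
      subst hlk
      have e : (fun z : O × Ω => X (θ₀ ++ q') l l z.1 z.2) = fun z : O × Ω => z.1 :=
        funext fun z => hXk _ _ _ _ hk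
      rw [e]; exact measurable_fst
    | succ jj ih =>
      intro q' hq' l hl
      have hlk : l < k := by omega
      have e : (fun z : O × Ω => X (θ₀ ++ q') k l z.1 z.2)
          = fun z : O × Ω => φ l (X (θ₀ ++ q') k (l + 1) z.1 z.2) (W (θ₀ ++ q') l z.2) :=
        funext fun z => hXl _ _ _ _ _ hlk hk
      rw [e]
      exact (hφ l (le_trans (le_of_lt hlk) hk)).comp
        ((ih q' hq' (l + 1) (by omega)).prodMk
          ((hW q' hq' l (lt_of_lt_of_le hlk hk)).comp measurable_snd))
  have hX : ∀ (q' : List ℤ), q' ≠ [] → ∀ l, l ≤ k →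
      Measurable (fun z : O × Ω => X (θ₀ ++ q') k l z.1 z.2) :=
    fun q' hq' l hl => hX0 (k - l) q' hq' l (by omega)
  rcases Nat.eq_zero_or_pos n with hn | hn
  · subst hn
    have e : (fun z : O × Ω => V (θ₀ ++ q) k 0 z.1 z.2) = fun _ => (0 : ℝ) :=
      funext fun z => hV0 _ _ _ _
    rw [e]; exact measurable_const
  -- the recursion step
  have hterm : ∀ (q₁ q₂ : List ℤ), q₁ ≠ [] → q₂ ≠ [] → ∀ (j₁ j₂ : ℕ), j₁ < n → j₂ < n →
      1 ≤ k →
      Measurable (fun z : O × Ω =>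
        (p k (R (θ₀ ++ q₁) k z.2))⁻¹ *
          ((f (R (θ₀ ++ q₁) k z.2) (X (θ₀ ++ q₁) k (R (θ₀ ++ q₁) k z.2) z.1 z.2)
              (V (θ₀ ++ q₁) (R (θ₀ ++ q₁) k z.2) j₁ (X (θ₀ ++ q₁) k (R (θ₀ ++ q₁) k z.2) z.1 z.2) z.2)
            - V (θ₀ ++ q₁) (R (θ₀ ++ q₁) k z.2) j₁ (X (θ₀ ++ q₁) k (R (θ₀ ++ q₁) k z.2) z.1 z.2) z.2)
          - (f (R (θ₀ ++ q₁) k z.2) (X (θ₀ ++ q₁) k (R (θ₀ ++ q₁) k z.2) z.1 z.2)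
              (V (θ₀ ++ q₂) (R (θ₀ ++ q₁) k z.2) j₂ (X (θ₀ ++ q₁) k (R (θ₀ ++ q₁) k z.2) z.1 z.2) z.2)
            - V (θ₀ ++ q₂) (R (θ₀ ++ q₁) k z.2) j₂ (X (θ₀ ++ q₁) k (R (θ₀ ++ q₁) k z.2) z.1 z.2) z.2))) := by
    intro q₁ q₂ hq₁ hq₂ j₁ j₂ hj₁ hj₂ hk1
    have e : (fun z : O × Ω =>
        (p k (R (θ₀ ++ q₁) k z.2))⁻¹ *
          ((f (R (θ₀ ++ q₁) k z.2) (X (θ₀ ++ q₁) k (R (θ₀ ++ q₁) k z.2) z.1 z.2)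
              (V (θ₀ ++ q₁) (R (θ₀ ++ q₁) k z.2) j₁ (X (θ₀ ++ q₁) k (R (θ₀ ++ q₁) k z.2) z.1 z.2) z.2)
            - V (θ₀ ++ q₁) (R (θ₀ ++ q₁) k z.2) j₁ (X (θ₀ ++ q₁) k (R (θ₀ ++ q₁) k z.2) z.1 z.2) z.2)
          - (f (R (θ₀ ++ q₁) k z.2) (X (θ₀ ++ q₁) k (R (θ₀ ++ q₁) k z.2) z.1 z.2)
              (V (θ₀ ++ q₂) (R (θ₀ ++ q₁) k z.2) j₂ (X (θ₀ ++ q₁) k (R (θ₀ ++ q₁) k z.2) z.1 z.2) z.2)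
            - V (θ₀ ++ q₂) (R (θ₀ ++ q₁) k z.2) j₂ (X (θ₀ ++ q₁) k (R (θ₀ ++ q₁) k z.2) z.1 z.2) z.2)))
        = (fun w : (O × Ω) × ℕ => if w.2 + 1 ≤ k then
            (p k w.2)⁻¹ *
              ((f w.2 (X (θ₀ ++ q₁) k w.2 w.1.1 w.1.2)
                  (V (θ₀ ++ q₁) w.2 j₁ (X (θ₀ ++ q₁) k w.2 w.1.1 w.1.2) w.1.2)
                - V (θ₀ ++ q₁) w.2 j₁ (X (θ₀ ++ q₁) k w.2 w.1.1 w.1.2) w.1.2)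
              - (f w.2 (X (θ₀ ++ q₁) k w.2 w.1.1 w.1.2)
                  (V (θ₀ ++ q₂) w.2 j₂ (X (θ₀ ++ q₁) k w.2 w.1.1 w.1.2) w.1.2)
                - V (θ₀ ++ q₂) w.2 j₂ (X (θ₀ ++ q₁) k w.2 w.1.1 w.1.2) w.1.2))
            else 0) ∘ (fun z : O × Ω => (z, R (θ₀ ++ q₁) k z.2)) := by
      funext z
      have hle := hRle (θ₀ ++ q₁) k z.2 hk1 hk
      simp only [Function.comp_apply, if_pos (show R (θ₀ ++ q₁) k z.2 + 1 ≤ k by omega)]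
    rw [e]
    refine Measurable.comp (measurable_from_prod_countable_left ?_)
      (measurable_id.prodMk ((hR q₁ hq₁ k hk1 hk).comp measurable_snd))
    intro l
    by_cases hl : l + 1 ≤ k
    · simp only [if_pos hl]
      have hlk : l ≤ k := by omega
      have hlK : l ≤ K := by omega
      have hA := hX q₁ hq₁ l hlk
      have hv1 := (IH j₁ hj₁ q₁ l hlK).comp (hA.prodMk measurable_snd)
      have hv2 := (IH j₂ hj₂ q₂ l hlK).comp (hA.prodMk measurable_snd)
      exact ((((hf l hlK).comp (hA.prodMk hv1)).sub hv1).sub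
        (((hf l hlK).comp (hA.prodMk hv2)).sub hv2)).const_mul _
    · simp only [if_neg hl]; exact measurable_const
  have e : (fun z : O × Ω => V (θ₀ ++ q) k n z.1 z.2)
      = fun z : O × Ω =>
      ((M : ℝ) ^ n)⁻¹ * (∑ m ∈ Finset.range (M ^ n),
        (g (X ((θ₀ ++ q) ++ [0, -((m : ℤ) + 1)]) k 0 z.1 z.2)
          + ∑ l ∈ Finset.range k, f l (X ((θ₀ ++ q) ++ [0, (m : ℤ) + 1]) k l z.1 z.2) 0))
      + ∑ j ∈ Finset.Ico 1 n, ((M : ℝ) ^ (n - j))⁻¹ *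
          ∑ m ∈ Finset.range (M ^ (n - j)),
            (if 1 ≤ k then (p k (R ((θ₀ ++ q) ++ [(j : ℤ), (m : ℤ) + 1]) k z.2))⁻¹ else 0) *
            ((f (R ((θ₀ ++ q) ++ [(j : ℤ), (m : ℤ) + 1]) k z.2) (X ((θ₀ ++ q) ++ [(j : ℤ), (m : ℤ) + 1]) k (R ((θ₀ ++ q) ++ [(j : ℤ), (m : ℤ) + 1]) k z.2) z.1 z.2)
                (V ((θ₀ ++ q) ++ [(j : ℤ), (m : ℤ) + 1]) (R ((θ₀ ++ q) ++ [(j : ℤ), (m : ℤ) + 1]) k z.2) j (X ((θ₀ ++ q) ++ [(j : ℤ), (m : ℤ) + 1]) k (R ((θ₀ ++ q) ++ [(j : ℤ), (m : ℤ) + 1]) k z.2) z.1 z.2) z.2)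
              - V ((θ₀ ++ q) ++ [(j : ℤ), (m : ℤ) + 1]) (R ((θ₀ ++ q) ++ [(j : ℤ), (m : ℤ) + 1]) k z.2) j (X ((θ₀ ++ q) ++ [(j : ℤ), (m : ℤ) + 1]) k (R ((θ₀ ++ q) ++ [(j : ℤ), (m : ℤ) + 1]) k z.2) z.1 z.2) z.2)
            - (f (R ((θ₀ ++ q) ++ [(j : ℤ), (m : ℤ) + 1]) k z.2) (X ((θ₀ ++ q) ++ [(j : ℤ), (m : ℤ) + 1]) k (R ((θ₀ ++ q) ++ [(j : ℤ), (m : ℤ) + 1]) k z.2) z.1 z.2)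
                (V ((θ₀ ++ q) ++ [(j : ℤ), -((m : ℤ) + 1)]) (R ((θ₀ ++ q) ++ [(j : ℤ), (m : ℤ) + 1]) k z.2) (j - 1) (X ((θ₀ ++ q) ++ [(j : ℤ), (m : ℤ) + 1]) k (R ((θ₀ ++ q) ++ [(j : ℤ), (m : ℤ) + 1]) k z.2) z.1 z.2) z.2)
              - V ((θ₀ ++ q) ++ [(j : ℤ), -((m : ℤ) + 1)]) (R ((θ₀ ++ q) ++ [(j : ℤ), (m : ℤ) + 1]) k z.2) (j - 1) (X ((θ₀ ++ q) ++ [(j : ℤ), (m : ℤ) + 1]) k (R ((θ₀ ++ q) ++ [(j : ℤ), (m : ℤ) + 1]) k z.2) z.1 z.2) z.2)) :=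
    funext fun z => hVrec (θ₀ ++ q) k n z.1 z.2 hk hn
  rw [e]
  simp only [List.append_assoc]
  refine Measurable.add (Measurable.const_mul ?_ _) ?_
  · refine Finset.measurable_sum _ ?_
    intro m _
    refine Measurable.add (hg.comp (hX (q ++ [0, -((m : ℤ) + 1)]) (by simp) 0 (Nat.zero_le k))) ?_
    refine Finset.measurable_sum _ ?_
    intro l hl
    have hlk := Finset.mem_range.1 hl
    exact (hf l (by omega)).comp
      ((hX (q ++ [0, (m : ℤ) + 1]) (by simp) l (le_of_lt hlk)).prodMk measurable_const)
  · refine Finset.measurable_sum _ ?_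
    intro j hj
    refine Measurable.const_mul ?_ _
    refine Finset.measurable_sum _ ?_
    intro m _
    obtain ⟨hj1, hjn⟩ := Finset.mem_Ico.1 hj
    by_cases hk1 : 1 ≤ k
    · simp only [if_pos hk1]
      exact hterm (q ++ [(j : ℤ), (m : ℤ) + 1]) (q ++ [(j : ℤ), -((m : ℤ) + 1)])
        (by simp) (by simp) j (j - 1) hjn (by omega) hk1
    · simp only [if_neg hk1, zero_mul]
      exact measurable_const

/-- Auxiliary lemma: joint measurability in `(k, x, ω)`. -/
lemma mlp_aux2 {d K M : ℕ}
    {O : Set (Fin d → ℝ)}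
    {S : Type*} [MeasurableSpace S]
    {Ω : Type*} [mΩ : MeasurableSpace Ω]
    (f : ℕ → O → ℝ → ℝ) (hf : ∀ k, k ≤ K → Measurable (fun q : O × ℝ => f k q.1 q.2))
    (g : O → ℝ) (hg : Measurable g)
    (φ : ℕ → O → S → O) (hφ : ∀ k, k ≤ K → Measurable (fun q : O × S => φ k q.1 q.2))
    (W : List ℤ → ℕ → Ω → S)
    (R : List ℤ → ℕ → Ω → ℕ)
    (θ₀ : List ℤ)
    (hW : ∀ (q : List ℤ), q ≠ [] → ∀ k, k < K → Measurable (W (θ₀ ++ q) k))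
    (hR : ∀ (q : List ℤ), q ≠ [] → ∀ k, 1 ≤ k → k ≤ K → Measurable (R (θ₀ ++ q) k))
    (hRle : ∀ (θ : List ℤ) (k : ℕ) (ω : Ω), 1 ≤ k → k ≤ K → R θ k ω ≤ k - 1)
    (p : ℕ → ℕ → ℝ)
    (X : List ℤ → ℕ → ℕ → O → Ω → O)
    (hXk : ∀ (θ : List ℤ) (k : ℕ) (x : O) (ω : Ω), k ≤ K → X θ k k x ω = x)
    (hXl : ∀ (θ : List ℤ) (k l : ℕ) (x : O) (ω : Ω), l < k → k ≤ K →
      X θ k l x ω = φ l (X θ k (l + 1) x ω) (W θ l ω))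
    (V : List ℤ → ℕ → ℕ → O → Ω → ℝ)
    (hV0 : ∀ (θ : List ℤ) (k : ℕ) (x : O) (ω : Ω), V θ k 0 x ω = 0)
    (hVrec : ∀ (θ : List ℤ) (k n : ℕ) (x : O) (ω : Ω), k ≤ K → 1 ≤ n → V θ k n x ω =
      ((M : ℝ) ^ n)⁻¹ * (∑ m ∈ Finset.range (M ^ n),
        (g (X (θ ++ [0, -((m : ℤ) + 1)]) k 0 x ω)
          + ∑ l ∈ Finset.range k, f l (X (θ ++ [0, (m : ℤ) + 1]) k l x ω) 0))
      + ∑ j ∈ Finset.Ico 1 n, ((M : ℝ) ^ (n - j))⁻¹ *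
          ∑ m ∈ Finset.range (M ^ (n - j)),
            (if 1 ≤ k then (p k (R (θ ++ [(j : ℤ), (m : ℤ) + 1]) k ω))⁻¹ else 0) *
            ((f (R (θ ++ [(j : ℤ), (m : ℤ) + 1]) k ω) (X (θ ++ [(j : ℤ), (m : ℤ) + 1]) k (R (θ ++ [(j : ℤ), (m : ℤ) + 1]) k ω) x ω)
                (V (θ ++ [(j : ℤ), (m : ℤ) + 1]) (R (θ ++ [(j : ℤ), (m : ℤ) + 1]) k ω) j (X (θ ++ [(j : ℤ), (m : ℤ) + 1]) k (R (θ ++ [(j : ℤ), (m : ℤ) + 1]) k ω) x ω) ω)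
              - V (θ ++ [(j : ℤ), (m : ℤ) + 1]) (R (θ ++ [(j : ℤ), (m : ℤ) + 1]) k ω) j (X (θ ++ [(j : ℤ), (m : ℤ) + 1]) k (R (θ ++ [(j : ℤ), (m : ℤ) + 1]) k ω) x ω) ω)
            - (f (R (θ ++ [(j : ℤ), (m : ℤ) + 1]) k ω) (X (θ ++ [(j : ℤ), (m : ℤ) + 1]) k (R (θ ++ [(j : ℤ), (m : ℤ) + 1]) k ω) x ω)
                (V (θ ++ [(j : ℤ), -((m : ℤ) + 1)]) (R (θ ++ [(j : ℤ), (m : ℤ) + 1]) k ω) (j - 1) (X (θ ++ [(j : ℤ), (m : ℤ) + 1]) k (R (θ ++ [(j : ℤ), (m : ℤ) + 1]) k ω) x ω) ω)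
              - V (θ ++ [(j : ℤ), -((m : ℤ) + 1)]) (R (θ ++ [(j : ℤ), (m : ℤ) + 1]) k ω) (j - 1) (X (θ ++ [(j : ℤ), (m : ℤ) + 1]) k (R (θ ++ [(j : ℤ), (m : ℤ) + 1]) k ω) x ω) ω))) :
    ∀ (n : ℕ),
      Measurable (fun z : Fin (K + 1) × O × Ω => V θ₀ (z.1 : ℕ) n z.2.1 z.2.2) := by
  intro n
  have h := mlp_aux f hf g hg φ hφ W R θ₀ hW hR hRle p X hXk hXl V hV0 hVrec n
  have hswap : Measurable (fun w : (O × Ω) × Fin (K + 1) => V θ₀ (w.2 : ℕ) n w.1.1 w.1.2) := by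
    apply measurable_from_prod_countable_left
    intro k
    have := h [] (k : ℕ) (Fin.is_le k)
    simpa using this
  exact hswap.comp measurable_swap

theorem mlp_measurability
    (d K M : ℕ) (hd : 0 < d) (hK : 0 < K) (hM : 0 < M)
    (O : Set (Fin d → ℝ)) (hOmeas : MeasurableSet O) (hOne : O.Nonempty)
    (f : ℕ → O → ℝ → ℝ) (hf : ∀ k, k ≤ K → Measurable (fun q : O × ℝ => f k q.1 q.2))
    (g : O → ℝ) (hg : Measurable g)
    {S : Type*} [MeasurableSpace S]
    (φ : ℕ → O → S → O) (hφ : ∀ k, k ≤ K → Measurable (fun q : O × S => φ k q.1 q.2))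
    {Ω : Type*} [MeasurableSpace Ω] (P : Measure Ω) [IsProbabilityMeasure P]
    (W : List ℤ → ℕ → Ω → S) (hWmeas : ∀ θ k, Measurable (W θ k))
    (hWindep : iIndepFun
      (fun q : List ℤ × Fin (K + 1) => W q.1 q.2) P)
    (hWid : ∀ k, k ≤ K → ∀ θ ϑ : List ℤ, IdentDistrib (W θ k) (W ϑ k) P P)
    (R : List ℤ → ℕ → Ω → ℕ) (hRmeas : ∀ θ k, Measurable (R θ k))
    (hRindep : iIndepFun
      (fun (θ : List ℤ) (ω : Ω) (k : Fin (K + 1)) => R θ k ω) P)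
    (hRid : ∀ θ ϑ : List ℤ,
      IdentDistrib (fun (ω : Ω) (k : Fin (K + 1)) => R θ k ω)
        (fun (ω : Ω) (k : Fin (K + 1)) => R ϑ k ω) P P)
    (hRle : ∀ (θ : List ℤ) (k : ℕ) (ω : Ω), 1 ≤ k → k ≤ K → R θ k ω ≤ k - 1)
    (p : ℕ → ℕ → ℝ) (hp : ∀ k l, 1 ≤ k → k ≤ K → 0 < p k l)
    (hpR : ∀ k l, 1 ≤ k → k ≤ K →
      ENNReal.ofReal (p k l) * P {ω | R [0] k ω = l} = (P {ω | R [0] k ω = l}) ^ 2)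
    (hRW : Indep
      (⨆ θ : List ℤ,
        MeasurableSpace.comap (fun (ω : Ω) (k : Fin (K + 1)) => R θ k ω) inferInstance)
      (⨆ q : List ℤ × Fin (K + 1), MeasurableSpace.comap (W q.1 q.2) inferInstance) P)
    (X : List ℤ → ℕ → ℕ → O → Ω → O)
    (hXk : ∀ (θ : List ℤ) (k : ℕ) (x : O) (ω : Ω), k ≤ K → X θ k k x ω = x)
    (hXl : ∀ (θ : List ℤ) (k l : ℕ) (x : O) (ω : Ω), l < k → k ≤ K →
      X θ k l x ω = φ l (X θ k (l + 1) x ω) (W θ l ω))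
    (V : List ℤ → ℕ → ℕ → O → Ω → ℝ)
    (hV0 : ∀ (θ : List ℤ) (k : ℕ) (x : O) (ω : Ω), V θ k 0 x ω = 0)
    (hVrec : ∀ (θ : List ℤ) (k n : ℕ) (x : O) (ω : Ω), k ≤ K → 1 ≤ n → V θ k n x ω =
      ((M : ℝ) ^ n)⁻¹ * (∑ m ∈ Finset.range (M ^ n),
        (g (X (θ ++ [0, -((m : ℤ) + 1)]) k 0 x ω)
          + ∑ l ∈ Finset.range k, f l (X (θ ++ [0, (m : ℤ) + 1]) k l x ω) 0))
      + ∑ j ∈ Finset.Ico 1 n, ((M : ℝ) ^ (n - j))⁻¹ *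
          ∑ m ∈ Finset.range (M ^ (n - j)),
            (if 1 ≤ k then (p k (R (θ ++ [(j : ℤ), (m : ℤ) + 1]) k ω))⁻¹ else 0) *
            ((f (R (θ ++ [(j : ℤ), (m : ℤ) + 1]) k ω) (X (θ ++ [(j : ℤ), (m : ℤ) + 1]) k (R (θ ++ [(j : ℤ), (m : ℤ) + 1]) k ω) x ω)
                (V (θ ++ [(j : ℤ), (m : ℤ) + 1]) (R (θ ++ [(j : ℤ), (m : ℤ) + 1]) k ω) j (X (θ ++ [(j : ℤ), (m : ℤ) + 1]) k (R (θ ++ [(j : ℤ), (m : ℤ) + 1]) k ω) x ω) ω)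
              - V (θ ++ [(j : ℤ), (m : ℤ) + 1]) (R (θ ++ [(j : ℤ), (m : ℤ) + 1]) k ω) j (X (θ ++ [(j : ℤ), (m : ℤ) + 1]) k (R (θ ++ [(j : ℤ), (m : ℤ) + 1]) k ω) x ω) ω)
            - (f (R (θ ++ [(j : ℤ), (m : ℤ) + 1]) k ω) (X (θ ++ [(j : ℤ), (m : ℤ) + 1]) k (R (θ ++ [(j : ℤ), (m : ℤ) + 1]) k ω) x ω)
                (V (θ ++ [(j : ℤ), -((m : ℤ) + 1)]) (R (θ ++ [(j : ℤ), (m : ℤ) + 1]) k ω) (j - 1) (X (θ ++ [(j : ℤ), (m : ℤ) + 1]) k (R (θ ++ [(j : ℤ), (m : ℤ) + 1]) k ω) x ω) ω)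
              - V (θ ++ [(j : ℤ), -((m : ℤ) + 1)]) (R (θ ++ [(j : ℤ), (m : ℤ) + 1]) k ω) (j - 1) (X (θ ++ [(j : ℤ), (m : ℤ) + 1]) k (R (θ ++ [(j : ℤ), (m : ℤ) + 1]) k ω) x ω) ω)))
    :
    ∀ (θ : List ℤ) (n : ℕ),
      @Measurable (Fin (K + 1) × O × Ω) ℝ
        ((⊤ : MeasurableSpace (Fin (K + 1))).prod
          ((inferInstance : MeasurableSpace O).prod
            ((⨆ q : {l : List ℤ // l ≠ []} × {s : ℕ // 1 ≤ s ∧ s ≤ K},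
                MeasurableSpace.comap (R (θ ++ q.1.1) q.2.1) inferInstance) ⊔
             (⨆ q : {l : List ℤ // l ≠ []} × {s : ℕ // s < K},
                MeasurableSpace.comap (W (θ ++ q.1.1) q.2.1) inferInstance))))
        inferInstance
        (fun q => V θ (q.1 : ℕ) n q.2.1 q.2.2) := by
  intro θ n
  set G : MeasurableSpace Ω :=
    (⨆ q : {l : List ℤ // l ≠ []} × {s : ℕ // 1 ≤ s ∧ s ≤ K},
        MeasurableSpace.comap (R (θ ++ q.1.1) q.2.1) inferInstance) ⊔
      (⨆ q : {l : List ℤ // l ≠ []} × {s : ℕ // s < K},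
        MeasurableSpace.comap (W (θ ++ q.1.1) q.2.1) inferInstance) with hG
  have hW' : ∀ (q : List ℤ), q ≠ [] → ∀ k, k < K → @Measurable Ω S G _ (W (θ ++ q) k) := by
    intro q hq k hkK
    rw [measurable_iff_comap_le, hG]
    exact le_trans
      (le_iSup (fun q' : {l : List ℤ // l ≠ []} × {s : ℕ // s < K} =>
        MeasurableSpace.comap (W (θ ++ q'.1.1) q'.2.1) inferInstance) ⟨⟨q, hq⟩, ⟨k, hkK⟩⟩)
      le_sup_right
  have hR' : ∀ (q : List ℤ), q ≠ [] → ∀ k, 1 ≤ k → k ≤ K →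
      @Measurable Ω ℕ G _ (R (θ ++ q) k) := by
    intro q hq k hk1 hkK
    rw [measurable_iff_comap_le, hG]
    exact le_trans
      (le_iSup (fun q' : {l : List ℤ // l ≠ []} × {s : ℕ // 1 ≤ s ∧ s ≤ K} =>
        MeasurableSpace.comap (R (θ ++ q'.1.1) q'.2.1) inferInstance) ⟨⟨q, hq⟩, ⟨k, hk1, hkK⟩⟩)
      le_sup_left
  exact mlp_aux2 (mΩ := G) f hf g hg φ hφ W R θ hW' hR' hRle p X hXk hXl V hV0 hVrec n
end

section
/- Let (Ω,ℱ,ℙ) be a probability space, let 𝒢_i ⊆ ℱ and 𝒜_i ⊆ ℱ, i ∈ {1,2}, be sigma-algebras on Ω, let (E,ℰ), (S,𝒮), (T,𝒯) be measurable spaces, let U_i : S × Ω → T, i ∈ {1,2}, be identically distributed random fields, let Y_i : E × Ω → S, i ∈ {1,2}, be identically distributed random fields, assume for each i ∈ {1,2} that U_i is (𝒮⊗𝒢_i)/𝒯-measurable, that Y_i is (ℰ⊗𝒜_i)/𝒮-measurable, and that 𝒢_i and 𝒜_i are independent. Then (i) for each i ∈ {1,2} the map U_i(Y_i) : E × Ω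 → T, (e,ω) ↦ U_i(Y_i(e,ω),ω), is (ℰ⊗ℱ)/𝒯-measurable, and (ii) U_1(Y_1) and U_2(Y_2) are identically distributed random fields. -/
open MeasureTheory ProbabilityTheory

/-- Two random fields indexed by `A` with values in `T` are identically distributed
if all their finite-dimensional distributions coincide. -/
def IdentDistribRF {A Ω T : Type*} [MeasurableSpace Ω] [MeasurableSpace T]
    (P : MeasureTheory.Measure Ω) (U V : A → Ω → T) : Prop :=
  ∀ (n : ℕ) (a : Fin n → A) (B : Fin n → Set T), (∀ i, MeasurableSet (B i)) →
    P {ω | ∀ i, U (a i) ω ∈ B i} = P {ω | ∀ i, V (a i) ω ∈ B i}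

lemma prod_le_prod_aux {α β : Type*} {m : MeasurableSpace α} {m1 m2 : MeasurableSpace β}
    (h : m1 ≤ m2) : m.prod m1 ≤ m.prod m2 :=
  sup_le_sup le_rfl (MeasurableSpace.comap_mono h)

/-- Freezing/disintegration: if `X` is `A`-measurable and `G ⟂ A`, then for any
`mS'.prod G`-measurable set `C`, the measure of `{ω | (X ω, ω) ∈ C}` is obtained by
integrating the `G`-section measure against the law of `X`. -/
lemma freeze_aux {Ω S' : Type*} (G A : MeasurableSpace Ω) [F : MeasurableSpace Ω]
    {mS' : MeasurableSpace S'}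
    (P : Measure Ω) [IsProbabilityMeasure P]
    (hG : G ≤ F) (hA : A ≤ F)
    (hGA : Indep G A P) (X : Ω → S') (hX : @Measurable Ω S' A mS' X)
    {C : Set (S' × Ω)} (hC : MeasurableSet[mS'.prod G] C) :
    P ((fun ω => (X ω, ω)) ⁻¹' C)
      = ∫⁻ x, P.trim hG (Prod.mk x ⁻¹' C) ∂ (P.map X) := by
  have hXF : Measurable X := hX.mono hA le_rfl
  have hpair : @Measurable Ω (S' × Ω) F (mS'.prod G) (fun ω => (X ω, ω)) :=
    Measurable.prodMk hXF (measurable_id'' hG)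
  have hmeq : @Measure.prod S' Ω mS' G (P.map X) (P.trim hG)
      = @Measure.map Ω (S' × Ω) F (mS'.prod G) (fun ω => (X ω, ω)) P := by
    haveI hf1 : IsProbabilityMeasure (P.map X) := Measure.isProbabilityMeasure_map hXF.aemeasurable
    haveI hf2 : IsFiniteMeasure (P.trim hG) := isFiniteMeasure_trim hG
    refine @Measure.prod_eq S' Ω mS' G (P.map X) inferInstance (P.trim hG) inferInstance _ ?_
    intro s t hs ht
    rw [Measure.map_apply hpair (hs.prod ht)]
    have heq : (fun ω => (X ω, ω)) ⁻¹' (s ×ˢ t) = t ∩ (X ⁻¹' s) := by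
      ext ω; simp [Set.mem_prod, and_comm]
    rw [heq, (Indep_iff G A P).mp hGA t (X ⁻¹' s) ht (hX hs),
      Measure.map_apply hXF hs, trim_measurableSet_eq hG ht, mul_comm]
  haveI hf2 : IsFiniteMeasure (P.trim hG) := isFiniteMeasure_trim hG
  rw [← Measure.map_apply hpair hC, ← hmeq,
    @Measure.prod_apply S' Ω mS' G (P.map X) (P.trim hG) inferInstance _ hC]

theorem composition_identically_distributed {Ω E S T : Type*} [F : MeasurableSpace Ω]
    (P : Measure Ω) [IsProbabilityMeasure P]
    [mE : MeasurableSpace E] [mS : MeasurableSpace S] [mT : MeasurableSpace T]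
    (G A : Fin 2 → MeasurableSpace Ω) (hG : ∀ i, G i ≤ F) (hA : ∀ i, A i ≤ F)
    (U : Fin 2 → S → Ω → T) (Y : Fin 2 → E → Ω → S)
    (hUid : IdentDistribRF P (U 0) (U 1))
    (hYid : IdentDistribRF P (Y 0) (Y 1))
    (hU : ∀ i, @Measurable (S × Ω) T (mS.prod (G i)) mT (fun q => U i q.1 q.2))
    (hY : ∀ i, @Measurable (E × Ω) S (mE.prod (A i)) mS (fun q => Y i q.1 q.2))
    (hGA : ∀ i, Indep (G i) (A i) P) :
    (∀ i, Measurable (fun q : E × Ω => U i (Y i q.1 q.2) q.2)) ∧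
      IdentDistribRF P (fun e ω => U 0 (Y 0 e ω) ω) (fun e ω => U 1 (Y 1 e ω) ω) := by
  have hYF : ∀ i, Measurable (fun q : E × Ω => Y i q.1 q.2) :=
    fun i => (hY i).mono (prod_le_prod_aux (hA i)) le_rfl
  have hUF : ∀ i, Measurable (fun q : S × Ω => U i q.1 q.2) :=
    fun i => (hU i).mono (prod_le_prod_aux (hG i)) le_rfl
  constructor
  · intro i
    exact (hUF i).comp ((hYF i).prodMk measurable_snd)
  · intro n e B hB
    set X : Fin 2 → Ω → (Fin n → S) := fun i ω k => Y i (e k) ω with hXdef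
    have hXmeas : ∀ i, @Measurable Ω (Fin n → S) (A i) _ (X i) := by
      intro i
      letI : MeasurableSpace Ω := A i
      exact measurable_pi_lambda _
        (fun k => (hY i).comp (measurable_const.prodMk measurable_id))
    set C : Fin 2 → Set ((Fin n → S) × Ω) :=
      fun i => {p | ∀ k, U i (p.1 k) p.2 ∈ B k} with hCdef
    have hCmeas : ∀ i, MeasurableSet[(MeasurableSpace.pi).prod (G i)] (C i) := by
      intro i
      letI : MeasurableSpace Ω := G i
      have : C i = ⋂ k, (fun p : (Fin n → S) × Ω => U i (p.1 k) p.2) ⁻¹' (B k) := by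
        ext p; simp [hCdef]
      rw [this]
      exact MeasurableSet.iInter fun k =>
        ((hU i).comp' (f := fun p : (Fin n → S) × Ω => (p.1 k, p.2)) (((measurable_pi_apply k).comp' measurable_fst).prodMk measurable_snd))
          (hB k)
    have key : ∀ i, P {ω | ∀ k, U i (Y i (e k) ω) ω ∈ B k}
        = ∫⁻ x, P.trim (hG i) (Prod.mk x ⁻¹' (C i)) ∂ (P.map (X i)) := by
      intro i
      have h := freeze_aux (G i) (A i) P (hG i) (hA i) (hGA i) (X i) (hXmeas i) (hCmeas i)
      have hset : (fun ω => (X i ω, ω)) ⁻¹' (C i)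
          = {ω | ∀ k, U i (Y i (e k) ω) ω ∈ B k} := by
        ext ω; simp [hCdef, hXdef]
      rw [hset] at h
      exact h
    rw [key 0, key 1]
    have hlaw : P.map (X 0) = P.map (X 1) := by
      have hX0 : Measurable (X 0) := (hXmeas 0).mono (hA 0) le_rfl
      have hX1 : Measurable (X 1) := (hXmeas 1).mono (hA 1) le_rfl
      refine ext_of_generate_finite _ generateFrom_pi.symm isPiSystem_pi ?_ ?_
      · rintro _ ⟨t, ht, rfl⟩
        have htm : MeasurableSet (Set.pi Set.univ t) :=
          MeasurableSet.pi Set.countable_univ (fun k _ => ht k (Set.mem_univ k))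
        rw [Measure.map_apply hX0 htm, Measure.map_apply hX1 htm]
        have h0 : X 0 ⁻¹' Set.pi Set.univ t = {ω | ∀ k, Y 0 (e k) ω ∈ t k} := by
          ext ω; simp [hXdef, Set.mem_pi]
        have h1 : X 1 ⁻¹' Set.pi Set.univ t = {ω | ∀ k, Y 1 (e k) ω ∈ t k} := by
          ext ω; simp [hXdef, Set.mem_pi]
        rw [h0, h1]
        exact hYid n e t (fun k => ht k (Set.mem_univ k))
      · simp [Measure.map_apply hX0 MeasurableSet.univ,
          Measure.map_apply hX1 MeasurableSet.univ]
    rw [hlaw]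
    refine lintegral_congr (fun x => ?_)
    have hsec : ∀ i, MeasurableSet[G i] (Prod.mk x ⁻¹' (C i)) := by
      intro i
      letI : MeasurableSpace Ω := G i
      exact measurable_prodMk_left (hCmeas i)
    rw [trim_measurableSet_eq (hG 0) (hsec 0), trim_measurableSet_eq (hG 1) (hsec 1)]
    have h0 : Prod.mk x ⁻¹' (C 0) = {ω | ∀ k, U 0 (x k) ω ∈ B k} := by ext ω; simp [hCdef]
    have h1 : Prod.mk x ⁻¹' (C 1) = {ω | ∀ k, U 1 (x k) ω ∈ B k} := by ext ω; simp [hCdef]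
    rw [h0, h1]
    exact hUid n x B hB
end

section
/- Let K, N ∈ ℕ, let (Ω,ℱ,ℙ) be a probability space, let (S,𝒮) be a measurable space, let 𝒢_i ⊆ ℱ, i ∈ {1,…,N}, be independent sigma-algebras on Ω, let 𝒜_i ⊆ ℱ, i ∈ {1,…,N}, be independent sigma-algebras on Ω, let U_i : S × Ω → ℝ^K be (𝒮⊗𝒢_i)/ℬ(ℝ^K)-measurable random fields and V_i : S × Ω → ℝ^K be (𝒮⊗𝒜_i)/ℬ(ℝ^K)-measurable random fields, and assume for each i ∈ {1,…,N} that U_i and V_i are identically distributed. Then the random fields (s,ω) ↦ Σ_{i=1}^N U_i(s,ω) and (s,ω) ↦ Σ_{i=1}^N V_i(s,ω) are identically distributed. -/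
open MeasureTheory ProbabilityTheory
open Set

/-- Joint law of independent measurable functions is the product of the marginal laws. -/
lemma joint_law_eq_pi {Ω : Type*} [F : MeasurableSpace Ω] (P : Measure Ω)
    [IsProbabilityMeasure P] {N : ℕ} {E : Type*} [MeasurableSpace E]
    (G : Fin N → MeasurableSpace Ω) (hG : ∀ i, G i ≤ F) (hGindep : iIndep G P)
    (W : Fin N → Ω → E) (hW : ∀ i, @Measurable Ω E (G i) _ (W i)) :
    P.map (fun ω i => W i ω) = Measure.pi (fun i => P.map (W i)) := by
  have hWF : ∀ i, Measurable (W i) := fun i => (hW i).mono (hG i) le_rfl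
  refine (Measure.pi_eq fun s hs => ?_).symm
  rw [Measure.map_apply (measurable_pi_lambda _ hWF) (MeasurableSet.univ_pi hs)]
  have hpre : (fun ω i => W i ω) ⁻¹' (univ.pi s) = ⋂ i ∈ Finset.univ, W i ⁻¹' s i := by
    ext ω; simp [Set.mem_pi]
  rw [hpre, hGindep.meas_biInter (S := Finset.univ) (fun i _ => hW i (hs i))]
  simp_rw [Measure.map_apply (hWF _) (hs _)]

theorem sums_identically_distributed (K N : ℕ) (hK : 0 < K) (hN : 0 < N)
    {Ω S : Type*} [F : MeasurableSpace Ω] (P : Measure Ω) [IsProbabilityMeasure P]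
    [mS : MeasurableSpace S]
    (G A : Fin N → MeasurableSpace Ω) (hG : ∀ i, G i ≤ F) (hA : ∀ i, A i ≤ F)
    (hGindep : iIndep G P) (hAindep : iIndep A P)
    (U V : Fin N → S → Ω → (Fin K → ℝ))
    (hU : ∀ i, @Measurable (S × Ω) (Fin K → ℝ) (mS.prod (G i)) inferInstance
      (fun q => U i q.1 q.2))
    (hV : ∀ i, @Measurable (S × Ω) (Fin K → ℝ) (mS.prod (A i)) inferInstance
      (fun q => V i q.1 q.2))
    (hUV : ∀ i, IdentDistribRF P (U i) (V i)) :
    IdentDistribRF P (fun (s : S) (ω : Ω) => ∑ i, U i s ω)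
      (fun (s : S) (ω : Ω) => ∑ i, V i s ω) := by
  intro n a B hB
  -- the finite-dimensional "vectors" of the fields
  set W : Fin N → Ω → (Fin n → Fin K → ℝ) := fun i ω j => U i (a j) ω with hWdef
  set W' : Fin N → Ω → (Fin n → Fin K → ℝ) := fun i ω j => V i (a j) ω with hW'def
  -- measurability of `W i` w.r.t. `G i`
  have hWmeas : ∀ i, @Measurable Ω (Fin n → Fin K → ℝ) (G i) _ (W i) := by
    intro i
    apply @measurable_pi_lambda Ω (Fin n) (fun _ => Fin K → ℝ) (G i) _ _
    intro j
    have h1 : @Measurable Ω (S × Ω) (G i) (mS.prod (G i)) (fun ω => (a j, ω)) :=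
      @Measurable.prodMk Ω (G i) S Ω mS (G i) _ _ measurable_const measurable_id
    exact (hU i).comp h1
  have hW'meas : ∀ i, @Measurable Ω (Fin n → Fin K → ℝ) (A i) _ (W' i) := by
    intro i
    apply @measurable_pi_lambda Ω (Fin n) (fun _ => Fin K → ℝ) (A i) _ _
    intro j
    have h1 : @Measurable Ω (S × Ω) (A i) (mS.prod (A i)) (fun ω => (a j, ω)) :=
      @Measurable.prodMk Ω (A i) S Ω mS (A i) _ _ measurable_const measurable_id
    exact (hV i).comp h1
  have hWF : ∀ i, Measurable (W i) := fun i => (hWmeas i).mono (hG i) le_rfl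
  have hW'F : ∀ i, Measurable (W' i) := fun i => (hW'meas i).mono (hA i) le_rfl
  -- the marginal laws coincide
  have hlaw : ∀ i, P.map (W i) = P.map (W' i) := by
    intro i
    refine ext_of_generate_finite _ generateFrom_pi.symm isPiSystem_pi ?_ (by simp [Measure.map_apply (hWF i) MeasurableSet.univ, Measure.map_apply (hW'F i) MeasurableSet.univ])
    rintro _ ⟨s, hs, rfl⟩
    rw [Measure.map_apply (hWF i) (MeasurableSet.univ_pi fun j => hs j (mem_univ j)),
      Measure.map_apply (hW'F i) (MeasurableSet.univ_pi fun j => hs j (mem_univ j))]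
    have h1 : W i ⁻¹' (univ.pi s) = {ω | ∀ j, U i (a j) ω ∈ s j} := by
      ext ω; simp [Set.mem_pi, hWdef]
    have h2 : W' i ⁻¹' (univ.pi s) = {ω | ∀ j, V i (a j) ω ∈ s j} := by
      ext ω; simp [Set.mem_pi, hW'def]
    rw [h1, h2]
    exact hUV i n a s (fun j => hs j (mem_univ j))
  -- joint laws coincide
  have hjoint : P.map (fun ω i => W i ω) = P.map (fun ω i => W' i ω) := by
    rw [joint_law_eq_pi P G hG hGindep W hWmeas,
      joint_law_eq_pi P A hA hAindep W' hW'meas]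
    exact congrArg Measure.pi (funext hlaw)
  -- conclude by applying both joint laws to the same measurable set
  set T : Set (Fin N → Fin n → Fin K → ℝ) := {x | ∀ j, ∑ i, x i j ∈ B j} with hTdef
  have hT : MeasurableSet T := by
    have : T = ⋂ j, (fun x : Fin N → Fin n → Fin K → ℝ => ∑ i, x i j) ⁻¹' (B j) := by
      ext x; simp [hTdef]
    rw [this]
    exact MeasurableSet.iInter fun j =>
      (Finset.measurable_sum Finset.univ fun i _ =>
        (measurable_pi_apply j).comp (measurable_pi_apply i)) (hB j)
  have e1 : {ω | ∀ j, (∑ i, U i (a j) ω) ∈ B j} = (fun ω i => W i ω) ⁻¹' T := by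
    ext ω; simp [hTdef, hWdef]
  have e2 : {ω | ∀ j, (∑ i, V i (a j) ω) ∈ B j} = (fun ω i => W' i ω) ⁻¹' T := by
    ext ω; simp [hTdef, hW'def]
  calc P {ω | ∀ j, (∑ i, U i (a j) ω) ∈ B j}
      = P.map (fun ω i => W i ω) T := by
        rw [e1, Measure.map_apply (measurable_pi_lambda _ hWF) hT]
    _ = P.map (fun ω i => W' i ω) T := by rw [hjoint]
    _ = P {ω | ∀ j, (∑ i, V i (a j) ω) ∈ B j} := by
        rw [e2, Measure.map_apply (measurable_pi_lambda _ hW'F) hT]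
end

section
/- Under the Setting, (i) for every θ ∈ Θ the random fields {(m,n) ∈ ℕ₀² : n ≤ m ≤ K} × 𝒪 × Ω ∋ (k,l,x,ω) ↦ X^{θ,k,x}_l(ω) ∈ 𝒪 and (k,l,x,ω) ↦ X^{0,k,x}_l(ω) ∈ 𝒪 are identically distributed, and (ii) for all θ, ϑ ∈ Θ and all k,l,m ∈ ℕ₀ with m ≤ l ≤ k ≤ K the random fields 𝒪 × Ω ∋ (x,ω) ↦ X^{ϑ,l,X^{θ,k,x}_l(ω)}_m(ω) ∈ 𝒪 and (x,ω) ↦ X^{0,k,x}_m(ω) ∈ 𝒪 are identically distributed. -/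
open MeasureTheory ProbabilityTheory

/-- The joint law of finitely many of the independent random variables is the product of
the marginals. -/
lemma map_pi_eq_of_indep {Ω S ι : Type*} [MeasurableSpace Ω] [MeasurableSpace S]
    (P : MeasureTheory.Measure Ω) [IsProbabilityMeasure P]
    (f : ι → Ω → S) (hf : ∀ i, Measurable (f i))
    (hindep : iIndepFun f P)
    {n : ℕ} (e : Fin n → ι) (he : Function.Injective e) :
    MeasureTheory.Measure.map (fun ω j => f (e j) ω) P
      = MeasureTheory.Measure.pi (fun j => MeasureTheory.Measure.map (f (e j)) P) := by
  haveI : ∀ j : Fin n, IsProbabilityMeasure (MeasureTheory.Measure.map (f (e j)) P) :=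
    fun j => Measure.isProbabilityMeasure_map (hf _).aemeasurable
  have hV : Measurable (fun ω (j : Fin n) => f (e j) ω) :=
    measurable_pi_lambda _ (fun j => hf _)
  refine (MeasureTheory.Measure.pi_eq (μ := fun j => MeasureTheory.Measure.map (f (e j)) P)
    fun s hs => ?_).symm
  classical
  set sets : ι → Set S := fun i => if h : ∃ j, e j = i then s h.choose else Set.univ with hsets_def
  have hsets : ∀ j, sets (e j) = s j := by
    intro j
    have hex : ∃ j', e j' = e j := ⟨j, rfl⟩
    simp only [hsets_def, dif_pos hex]
    have := he hex.choose_spec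
    rw [this]
  have hmeas : ∀ i, i ∈ Finset.univ.image e → MeasurableSet (sets i) := by
    intro i hi
    obtain ⟨j, -, rfl⟩ := Finset.mem_image.1 hi
    rw [hsets]; exact hs j
  have hinter : (⋂ i ∈ Finset.univ.image e, f i ⁻¹' sets i)
      = (fun ω (j : Fin n) => f (e j) ω) ⁻¹' Set.pi Set.univ s := by
    ext ω
    simp only [Set.mem_iInter, Finset.mem_image, Finset.mem_univ, true_and,
      Set.mem_preimage, Set.mem_pi, Set.mem_univ, forall_true_left]
    constructor
    · intro h j
      have := h (e j) ⟨j, rfl⟩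
      rwa [hsets] at this
    · rintro h i ⟨j, rfl⟩
      rw [hsets]; exact h j
  rw [MeasureTheory.Measure.map_apply hV (MeasurableSet.univ_pi fun i => hs i), ← hinter,
    hindep.measure_inter_preimage_eq_mul (Finset.univ.image e) hmeas,
    Finset.prod_image (fun j _ j' _ h => he h)]
  refine Finset.prod_congr rfl fun j _ => ?_
  rw [hsets, MeasureTheory.Measure.map_apply (hf _) (hs j)]

/-- Two families obtained by selecting independent random variables with equal marginals
have the same joint law. -/
lemma map_fun_eq_of_indep {Ω S ι : Type*} [MeasurableSpace Ω] [MeasurableSpace S]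
    (P : MeasureTheory.Measure Ω) [IsProbabilityMeasure P]
    (f : ι → Ω → S) (hf : ∀ i, Measurable (f i))
    (hindep : iIndepFun f P)
    {n : ℕ} (e e' : Fin n → ι) (he : Function.Injective e) (he' : Function.Injective e')
    (hid : ∀ j, ProbabilityTheory.IdentDistrib (f (e j)) (f (e' j)) P P) :
    MeasureTheory.Measure.map (fun ω j => f (e j) ω) P
      = MeasureTheory.Measure.map (fun ω j => f (e' j) ω) P := by
  rw [map_pi_eq_of_indep P f hf hindep e he, map_pi_eq_of_indep P f hf hindep e' he']
  congr 1
  funext j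
  exact (hid j).map_eq

/-- Random fields which are the same measurable function of random elements with the same law
are identically distributed. -/
lemma identDistribRF_of_comp {A Ω E T : Type*} [MeasurableSpace Ω] [MeasurableSpace E]
    [MeasurableSpace T] (P : MeasureTheory.Measure Ω) (V V' : Ω → E)
    (hV : Measurable V) (hV' : Measurable V')
    (hmap : MeasureTheory.Measure.map V P = MeasureTheory.Measure.map V' P)
    (G : A → E → T) (hG : ∀ a, Measurable (G a)) :
    IdentDistribRF P (fun a ω => G a (V ω)) (fun a ω => G a (V' ω)) := by
  intro n a B hB
  have hC : MeasurableSet {v : E | ∀ i, G (a i) v ∈ B i} := by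
    have : {v : E | ∀ i, G (a i) v ∈ B i} = ⋂ i, (G (a i)) ⁻¹' (B i) := by
      ext v; simp [Set.mem_iInter]
    rw [this]
    exact MeasurableSet.iInter fun i => (hG _) (hB i)
  have h1 : {ω | ∀ i, G (a i) (V ω) ∈ B i} = V ⁻¹' {v | ∀ i, G (a i) v ∈ B i} := rfl
  have h2 : {ω | ∀ i, G (a i) (V' ω) ∈ B i} = V' ⁻¹' {v | ∀ i, G (a i) v ∈ B i} := rfl
  rw [h1, h2, ← MeasureTheory.Measure.map_apply hV hC, ← MeasureTheory.Measure.map_apply hV' hC,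
    hmap]

/-- Deterministic version of the recursion: `Yrec K φ n l x w` is the value at time `l`
starting from `x` at time `l + n`, driven by the noise vector `w`. -/
def Yrec {d : ℕ} (K : ℕ) {O : Set (Fin d → ℝ)} {S : Type*} (φ : ℕ → O → S → O) :
    ℕ → ℕ → O → (Fin (K + 1) → S) → O
  | 0, _, x, _ => x
  | n + 1, l, x, w =>
      φ l (Yrec K φ n (l + 1) x w) (w ⟨l % (K + 1), Nat.mod_lt _ K.succ_pos⟩)

lemma Yrec_measurable {d : ℕ} (K : ℕ) {O : Set (Fin d → ℝ)} {S : Type*} [MeasurableSpace S]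
    (φ : ℕ → O → S → O) (hφ : ∀ k, k ≤ K → Measurable (fun q : O × S => φ k q.1 q.2)) :
    ∀ (n l : ℕ), l + n ≤ K →
      Measurable (fun q : O × (Fin (K + 1) → S) => Yrec K φ n l q.1 q.2) := by
  intro n
  induction n with
  | zero => intro l _; exact measurable_fst
  | succ n ih =>
      intro l hl
      have h1 : Measurable (fun q : O × (Fin (K + 1) → S) =>
          (Yrec K φ n (l + 1) q.1 q.2, q.2 ⟨l % (K + 1), Nat.mod_lt _ K.succ_pos⟩)) :=
        (ih (l + 1) (by omega)).prodMk ((measurable_pi_apply _).comp measurable_snd)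
      exact (hφ l (by omega)).comp h1

lemma Yrec_congr {d : ℕ} (K : ℕ) {O : Set (Fin d → ℝ)} {S : Type*} (φ : ℕ → O → S → O) :
    ∀ (n l : ℕ) (x : O) (w w' : Fin (K + 1) → S), l + n ≤ K + 1 →
      (∀ j : Fin (K + 1), l ≤ (j : ℕ) → (j : ℕ) < l + n → w j = w' j) →
      Yrec K φ n l x w = Yrec K φ n l x w' := by
  intro n
  induction n with
  | zero => intro l x w w' _ _; rfl
  | succ n ih =>
      intro l x w w' hl h
      have hlK : l < K + 1 := by omega
      have hmod : l % (K + 1) = l := Nat.mod_eq_of_lt hlK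
      have hw : w ⟨l % (K + 1), Nat.mod_lt _ K.succ_pos⟩
          = w' ⟨l % (K + 1), Nat.mod_lt _ K.succ_pos⟩ := by
        apply h <;> simp [hmod] <;> omega
      show φ l (Yrec K φ n (l + 1) x w) _ = φ l (Yrec K φ n (l + 1) x w') _
      rw [hw, ih (l + 1) x w w' (by omega) (fun j h1 h2 => h j (by omega) (by omega))]

lemma Yrec_comp {d : ℕ} (K : ℕ) {O : Set (Fin d → ℝ)} {S : Type*} (φ : ℕ → O → S → O) :
    ∀ (a b l : ℕ) (x : O) (v : Fin (K + 1) → S),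
      Yrec K φ a l (Yrec K φ b (l + a) x v) v = Yrec K φ (a + b) l x v := by
  intro a
  induction a with
  | zero => intro b l x v; simp [Yrec]
  | succ a ih =>
      intro b l x v
      show φ l (Yrec K φ a (l + 1) (Yrec K φ b (l + (a + 1)) x v) v) _ = _
      have h1 : l + (a + 1) = (l + 1) + a := by omega
      have h2 : a + 1 + b = (a + b) + 1 := by omega
      rw [h1, ih b (l + 1) x v, h2]
      rfl

theorem X_identically_distributed
    (d K : ℕ) (hd : 0 < d) (hK : 0 < K)
    (O : Set (Fin d → ℝ)) (hOmeas : MeasurableSet O) (hOne : O.Nonempty)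
    {S : Type*} [MeasurableSpace S]
    (φ : ℕ → O → S → O) (hφ : ∀ k, k ≤ K → Measurable (fun q : O × S => φ k q.1 q.2))
    {Ω : Type*} [MeasurableSpace Ω] (P : Measure Ω) [IsProbabilityMeasure P]
    (W : List ℤ → ℕ → Ω → S) (hWmeas : ∀ θ k, Measurable (W θ k))
    (hWindep : iIndepFun
      (fun q : List ℤ × Fin (K + 1) => W q.1 q.2) P)
    (hWid : ∀ k, k ≤ K → ∀ θ ϑ : List ℤ, IdentDistrib (W θ k) (W ϑ k) P P)
    (X : List ℤ → ℕ → ℕ → O → Ω → O)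
    (hXk : ∀ (θ : List ℤ) (k : ℕ) (x : O) (ω : Ω), k ≤ K → X θ k k x ω = x)
    (hXl : ∀ (θ : List ℤ) (k l : ℕ) (x : O) (ω : Ω), l < k → k ≤ K →
      X θ k l x ω = φ l (X θ k (l + 1) x ω) (W θ l ω)) :
    (∀ θ : List ℤ,
      IdentDistribRF P
        (fun (q : {q : ℕ × ℕ // q.2 ≤ q.1 ∧ q.1 ≤ K} × O) (ω : Ω) =>
          X θ q.1.1.1 q.1.1.2 q.2 ω)
        (fun (q : {q : ℕ × ℕ // q.2 ≤ q.1 ∧ q.1 ≤ K} × O) (ω : Ω) =>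
          X [0] q.1.1.1 q.1.1.2 q.2 ω)) ∧
    (∀ (θ ϑ : List ℤ) (k l m : ℕ), m ≤ l → l ≤ k → k ≤ K →
      IdentDistribRF P
        (fun (x : O) (ω : Ω) => X ϑ l m (X θ k l x ω) ω)
        (fun (x : O) (ω : Ω) => X [0] k m x ω)) := by
  classical
  -- X as a function of the noise vector
  have hXYaux : ∀ (n : ℕ) (θ : List ℤ) (k l : ℕ) (x : O) (ω : Ω), l + n = k → k ≤ K →
      X θ k l x ω = Yrec K φ n l x (fun j : Fin (K + 1) => W θ (j : ℕ) ω) := by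
    intro n
    induction n with
    | zero =>
        intro θ k l x ω hk hK'
        have : l = k := by omega
        subst this
        exact hXk θ l x ω hK'
    | succ n ih =>
        intro θ k l x ω hk hK'
        have hlk : l < k := by omega
        have hlK : l < K + 1 := by omega
        rw [hXl θ k l x ω hlk hK', ih θ k (l + 1) x ω (by omega) hK']
        show _ = φ l _ (W θ ((⟨l % (K + 1), Nat.mod_lt _ K.succ_pos⟩ : Fin (K + 1)) : ℕ) ω)
        simp only [Fin.val_mk, Nat.mod_eq_of_lt hlK]
  have hXY : ∀ (θ : List ℤ) (k l : ℕ) (x : O) (ω : Ω), l ≤ k → k ≤ K →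
      X θ k l x ω = Yrec K φ (k - l) l x (fun j : Fin (K + 1) => W θ (j : ℕ) ω) :=
    fun θ k l x ω hlk hkK => hXYaux (k - l) θ k l x ω (by omega) hkK
  constructor
  · -- part (i)
    intro θ
    set G : ({q : ℕ × ℕ // q.2 ≤ q.1 ∧ q.1 ≤ K} × O) → (Fin (K + 1) → S) → O :=
      fun q w => Yrec K φ (q.1.1.1 - q.1.1.2) q.1.1.2 q.2 w with hG_def
    have hG : ∀ q, Measurable (G q) := by
      intro q
      have := Yrec_measurable K φ hφ (q.1.1.1 - q.1.1.2) q.1.1.2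
        (by have := q.1.2.1; have := q.1.2.2; omega)
      exact this.comp (measurable_const.prodMk measurable_id)
    have hmap : Measure.map (fun ω (j : Fin (K + 1)) => W θ (j : ℕ) ω) P
        = Measure.map (fun ω (j : Fin (K + 1)) => W [0] (j : ℕ) ω) P := by
      exact map_fun_eq_of_indep P (fun q : List ℤ × Fin (K + 1) => W q.1 q.2)
        (fun q => hWmeas q.1 q.2) hWindep (fun j => (θ, j)) (fun j => ([0], j))
        (fun j j' h => by simpa using congrArg Prod.snd h)
        (fun j j' h => by simpa using congrArg Prod.snd h)
        (fun j => hWid (j : ℕ) (Nat.lt_succ_iff.mp j.isLt) θ ([0]))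
    have h1 : (fun (q : {q : ℕ × ℕ // q.2 ≤ q.1 ∧ q.1 ≤ K} × O) (ω : Ω) =>
        X θ q.1.1.1 q.1.1.2 q.2 ω)
        = fun q ω => G q ((fun ω (j : Fin (K + 1)) => W θ (j : ℕ) ω) ω) := by
      funext q ω
      exact hXY θ q.1.1.1 q.1.1.2 q.2 ω q.1.2.1 q.1.2.2
    have h2 : (fun (q : {q : ℕ × ℕ // q.2 ≤ q.1 ∧ q.1 ≤ K} × O) (ω : Ω) =>
        X [0] q.1.1.1 q.1.1.2 q.2 ω)
        = fun q ω => G q ((fun ω (j : Fin (K + 1)) => W [0] (j : ℕ) ω) ω) := by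
      funext q ω
      exact hXY [0] q.1.1.1 q.1.1.2 q.2 ω q.1.2.1 q.1.2.2
    rw [h1, h2]
    exact identDistribRF_of_comp P _ _
      (measurable_pi_lambda _ fun j => hWmeas θ _)
      (measurable_pi_lambda _ fun j => hWmeas [0] _) hmap G hG
  · -- part (ii)
    intro θ ϑ k l m hml hlk hkK
    set V : Ω → (Fin (K + 1) → S) :=
      fun ω j => W (if (j : ℕ) < l then ϑ else θ) (j : ℕ) ω with hV_def
    have hVmeas : Measurable V :=
      measurable_pi_lambda _ fun j => hWmeas _ _
    set G : O → (Fin (K + 1) → S) → O := fun x w => Yrec K φ (k - m) m x w with hG_def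
    have hG : ∀ x, Measurable (G x) := by
      intro x
      exact (Yrec_measurable K φ hφ (k - m) m (by omega)).comp
        (measurable_const.prodMk measurable_id)
    have hmap : Measure.map V P
        = Measure.map (fun ω (j : Fin (K + 1)) => W [0] (j : ℕ) ω) P := by
      exact map_fun_eq_of_indep P (fun q : List ℤ × Fin (K + 1) => W q.1 q.2)
        (fun q => hWmeas q.1 q.2) hWindep
        (fun j => (if (j : ℕ) < l then ϑ else θ, j)) (fun j => ([0], j))
        (fun j j' h => by simpa using congrArg Prod.snd h)
        (fun j j' h => by simpa using congrArg Prod.snd h)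
        (fun j => hWid (j : ℕ) (Nat.lt_succ_iff.mp j.isLt) _ ([0]))
    have h1 : (fun (x : O) (ω : Ω) => X ϑ l m (X θ k l x ω) ω)
        = fun x ω => G x (V ω) := by
      funext x ω
      have e1 : X θ k l x ω = Yrec K φ (k - l) l x (V ω) := by
        rw [hXY θ k l x ω hlk hkK]
        refine Yrec_congr K φ (k - l) l x _ _ (by omega) ?_
        intro j hj1 hj2
        simp only [hV_def]
        rw [if_neg (by omega)]
      have e2 : X ϑ l m (X θ k l x ω) ω = Yrec K φ (l - m) m (X θ k l x ω) (V ω) := by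
        rw [hXY ϑ l m _ ω hml (le_trans hlk hkK)]
        refine Yrec_congr K φ (l - m) m _ _ _ (by omega) ?_
        intro j hj1 hj2
        simp only [hV_def]
        rw [if_pos (by omega)]
      rw [e2, e1]
      have hla : l = m + (l - m) := by omega
      have : Yrec K φ (l - m) m (Yrec K φ (k - l) (m + (l - m)) x (V ω)) (V ω)
          = Yrec K φ ((l - m) + (k - l)) m x (V ω) := Yrec_comp K φ (l - m) (k - l) m x (V ω)
      rw [← hla] at this
      rw [this]
      have : (l - m) + (k - l) = k - m := by omega
      rw [this]
    have h2 : (fun (x : O) (ω : Ω) => X [0] k m x ω)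
        = fun x ω => G x ((fun ω (j : Fin (K + 1)) => W [0] (j : ℕ) ω) ω) := by
      funext x ω
      exact hXY [0] k m x ω (le_trans hml hlk) hkK
    rw [h1, h2]
    exact identDistribRF_of_comp P _ _ hVmeas
      (measurable_pi_lambda _ fun j => hWmeas [0] _) hmap G hG
end

section
/- Let d,K ∈ ℕ, L ∈ ℝ, let 𝒪 ∈ ℬ(ℝ^d)\{∅} be a nonempty Borel set, let f : 𝒪 × ℝ → ℝ be Borel measurable with |f(x,a) − f(x,b)| ≤ L|a − b| for all x ∈ 𝒪, a,b ∈ ℝ, let (S,𝒮) be a measurable space, let φ_k : 𝒪 × S → 𝒪, k ∈ {0,…,K}, be (ℬ(𝒪)⊗𝒮)/ℬ(𝒪)-measurable, let (Ω,ℱ,ℙ) be a probability space, let W_k : Ω → S, k ∈ {0,…,K}, be independent random variables, for each k ∈ {0,…,K} define X^{k,x}_l ∈ 𝒪 by X^{k,x}_k = x and X^{k,x}_l = φ_l(X^{k,x}_{l+1}, W_l) for l < k, let v : 𝒪 → ℝ be Borel measurable, and assume for all x ∈ 𝒪 that Σ_{k=0}^K E[|f(X^{k,x}_0,0)|² + |v(X^{k,x}_0)|²]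 < ∞. Then there exists a Borel measurable u : 𝒪 → ℝ such that for all x ∈ 𝒪 it holds that Σ_{k=1}^K E[|u(X^{k,x}_1)|² + |f(X^{1,x}_0, v(X^{1,x}_0))|²] < ∞ and u(x) = E[f(X^{1,x}_0, v(X^{1,x}_0))]. -/
open MeasureTheory ProbabilityTheory

theorem welldefinedness_induction_step
    (d K : ℕ) (hd : 0 < d) (hK : 0 < K) (L : ℝ)
    (O : Set (Fin d → ℝ)) (hOmeas : MeasurableSet O) (hOne : O.Nonempty)
    (f : O → ℝ → ℝ) (hf : Measurable (fun q : O × ℝ => f q.1 q.2))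
    (hfL : ∀ (x : O) (a b : ℝ), |f x a - f x b| ≤ L * |a - b|)
    {S : Type*} [MeasurableSpace S]
    (φ : ℕ → O → S → O) (hφ : ∀ k, k ≤ K → Measurable (fun q : O × S => φ k q.1 q.2))
    {Ω : Type*} [MeasurableSpace Ω] (P : Measure Ω) [IsProbabilityMeasure P]
    (W : ℕ → Ω → S) (hWmeas : ∀ k, Measurable (W k))
    (hWindep : iIndepFun
      (fun k : Fin (K + 1) => W k) P)
    (X : ℕ → ℕ → O → Ω → O)
    (hXk : ∀ (k : ℕ) (x : O) (ω : Ω), k ≤ K → X k k x ω = x)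
    (hXl : ∀ (k l : ℕ) (x : O) (ω : Ω), l < k → k ≤ K →
      X k l x ω = φ l (X k (l + 1) x ω) (W l ω))
    (v : O → ℝ) (hv : Measurable v)
    (hBound : ∀ x : O, ∑ k ∈ Finset.range (K + 1),
      ∫⁻ ω, ENNReal.ofReal ((f (X k 0 x ω) 0) ^ 2 + (v (X k 0 x ω)) ^ 2) ∂P < ⊤) :
    ∃ u : O → ℝ, Measurable u ∧ ∀ x : O,
      (∑ k ∈ Finset.Icc 1 K,
        ∫⁻ ω, ENNReal.ofReal ((u (X k 1 x ω)) ^ 2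
          + (f (X 1 0 x ω) (v (X 1 0 x ω))) ^ 2) ∂P < ⊤) ∧
      u x = ∫ ω, f (X 1 0 x ω) (v (X 1 0 x ω)) ∂P := by
  -- L is nonnegative
  obtain ⟨x0, hx0⟩ := hOne
  have hL : 0 ≤ L := by
    have h := hfL ⟨x0, hx0⟩ 0 1
    have h0 : (0:ℝ) ≤ |f ⟨x0, hx0⟩ 0 - f ⟨x0, hx0⟩ 1| := abs_nonneg _
    simp only [show |(0:ℝ) - 1| = 1 by norm_num, mul_one] at h
    linarith
  set F : O → ℝ := fun z => f z (v z) with hFdef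
  have hF : Measurable F := hf.comp (measurable_id.prodMk hv)
  have hφ0 : Measurable (fun q : O × S => φ 0 q.1 q.2) := hφ 0 (Nat.zero_le K)
  -- the candidate u
  set u : O → ℝ := fun x => ∫ ω, F (φ 0 x (W 0 ω)) ∂P with hu
  have hg : Measurable (fun q : O × Ω => F (φ 0 q.1 (W 0 q.2))) :=
    hF.comp (hφ0.comp (measurable_fst.prodMk ((hWmeas 0).comp measurable_snd)))
  have humeas : Measurable u :=
    hg.stronglyMeasurable.integral_prod_right'.measurable
  -- measurability of X k l x
  have hXmeas : ∀ k l (x : O), l ≤ k → k ≤ K → Measurable (fun ω => X k l x ω) := by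
    intro k l x hlk hkK
    have key : ∀ m, m ≤ k → Measurable (fun ω => X k (k - m) x ω) := by
      intro m
      induction m with
      | zero =>
        intro _
        have h0 : (fun ω => X k (k - 0) x ω) = fun _ => x := by
          funext ω; simpa using hXk k x ω hkK
        rw [h0]; exact measurable_const
      | succ n ih =>
        intro hnk
        have h1 : k - (n + 1) < k := by omega
        have h2 : k - (n + 1) + 1 = k - n := by omega
        have h3 : (fun ω => X k (k - (n + 1)) x ω)
            = fun ω => φ (k - (n + 1)) (X k (k - n) x ω) (W (k - (n + 1)) ω) := by
          funext ω; rw [hXl k (k - (n + 1)) x ω h1 hkK, h2]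
        rw [h3]
        exact (hφ _ (by omega)).comp ((ih (by omega)).prodMk (hWmeas _))
    have hl : l = k - (k - l) := by omega
    rw [hl]; exact key (k - l) (by omega)
  -- X k 1 x is measurable wrt the σ-algebra generated by W 1, ..., W K
  have hXm0 : ∀ k (x : O), 1 ≤ k → k ≤ K →
      Measurable[⨆ i ∈ ({0}ᶜ : Set (Fin (K + 1))),
        MeasurableSpace.comap (W ↑i) inferInstance] (fun ω => X k 1 x ω) := by
    intro k x h1k hkK
    have key : ∀ m, m ≤ k - 1 → Measurable[⨆ i ∈ ({0}ᶜ : Set (Fin (K + 1))),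
        MeasurableSpace.comap (W ↑i) inferInstance] (fun ω => X k (k - m) x ω) := by
      intro m
      induction m with
      | zero =>
        intro _
        have h0 : (fun ω => X k (k - 0) x ω) = fun _ => x := by
          funext ω; simpa using hXk k x ω hkK
        rw [h0]; exact measurable_const
      | succ n ih =>
        intro hnk
        have h1 : k - (n + 1) < k := by omega
        have h2 : k - (n + 1) + 1 = k - n := by omega
        have h3 : (fun ω => X k (k - (n + 1)) x ω)
            = fun ω => φ (k - (n + 1)) (X k (k - n) x ω) (W (k - (n + 1)) ω) := by
          funext ω; rw [hXl k (k - (n + 1)) x ω h1 hkK, h2]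
        rw [h3]
        have hWl : Measurable[⨆ i ∈ ({0}ᶜ : Set (Fin (K + 1))),
            MeasurableSpace.comap (W ↑i) inferInstance] (W (k - (n + 1))) := by
          refine Measurable.of_comap_le ?_
          have hmem : (⟨k - (n + 1), by omega⟩ : Fin (K + 1)) ∈ ({0}ᶜ : Set (Fin (K + 1))) := by
            simp only [Set.mem_compl_iff, Set.mem_singleton_iff]
            intro hcon
            have := congrArg Fin.val hcon
            simp at this
            omega
          exact le_biSup (fun i : Fin (K + 1) => MeasurableSpace.comap (W ↑i) inferInstance) hmem
        exact (hφ _ (by omega)).comp (Measurable.prodMk (ih (by omega)) hWl)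
    have hres := key (k - 1) (by omega)
    have heq : k - (k - 1) = 1 := by omega
    rwa [heq] at hres
  -- independence of X k 1 x and W 0
  have hindep : ∀ k (x : O), 1 ≤ k → k ≤ K →
      IndepFun (fun ω => X k 1 x ω) (W 0) P := by
    intro k x h1k hkK
    have hii : iIndep (fun i : Fin (K + 1) =>
        MeasurableSpace.comap (W ↑i) inferInstance) P := hWindep.iIndep
    have hIndep := indep_iSup_of_disjoint
      (fun i : Fin (K + 1) => (hWmeas ↑i).comap_le) hii
      (disjoint_compl_left (a := ({0} : Set (Fin (K + 1)))))
    rw [IndepFun_iff_Indep]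
    refine indep_of_indep_of_le_right (indep_of_indep_of_le_left hIndep ?_) ?_
    · exact (hXm0 k x h1k hkK).comap_le
    · have h0mem : (0 : Fin (K + 1)) ∈ ({0} : Set (Fin (K + 1))) := rfl
      exact le_biSup (fun i : Fin (K + 1) =>
        MeasurableSpace.comap (W ↑i) inferInstance) h0mem
  -- replacing an independent copy
  have hprod : ∀ k (x : O), 1 ≤ k → k ≤ K → ∀ (H : O × S → ENNReal), Measurable H →
      ∫⁻ ω, (∫⁻ ω', H (X k 1 x ω, W 0 ω') ∂P) ∂P = ∫⁻ ω, H (X k 1 x ω, W 0 ω) ∂P := by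
    intro k x h1k hkK H hH
    have hY : Measurable (fun ω => X k 1 x ω) := hXmeas k 1 x h1k hkK
    have hmap : P.map (fun ω => (X k 1 x ω, W 0 ω))
        = (P.map (fun ω => X k 1 x ω)).prod (P.map (W 0)) :=
      (indepFun_iff_map_prod_eq_prod_map_map hY.aemeasurable
        (hWmeas 0).aemeasurable).mp (hindep k x h1k hkK)
    haveI : IsProbabilityMeasure (P.map (W 0)) :=
      Measure.isProbabilityMeasure_map (hWmeas 0).aemeasurable
    haveI : IsProbabilityMeasure (P.map (fun ω => X k 1 x ω)) :=
      Measure.isProbabilityMeasure_map hY.aemeasurable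
    calc ∫⁻ ω, (∫⁻ ω', H (X k 1 x ω, W 0 ω') ∂P) ∂P
        = ∫⁻ ω, (∫⁻ s, H (X k 1 x ω, s) ∂(P.map (W 0))) ∂P := by
          refine lintegral_congr fun ω => ?_
          exact (lintegral_map (hH.comp measurable_prodMk_left) (hWmeas 0)).symm
      _ = ∫⁻ y, ∫⁻ s, H (y, s) ∂(P.map (W 0)) ∂(P.map (fun ω => X k 1 x ω)) := by
          refine (lintegral_map (f := fun y => ∫⁻ s, H (y, s) ∂(P.map (W 0))) ?_ hY).symm
          exact Measurable.lintegral_prod_right' (f := fun p : O × S => H p) hH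
      _ = ∫⁻ p, H p ∂((P.map (fun ω => X k 1 x ω)).prod (P.map (W 0))) :=
          (lintegral_prod H hH.aemeasurable).symm
      _ = ∫⁻ p, H p ∂(P.map (fun ω => (X k 1 x ω, W 0 ω))) := by rw [hmap]
      _ = ∫⁻ ω, H (X k 1 x ω, W 0 ω) ∂P := lintegral_map hH (hY.prodMk (hWmeas 0))
  -- Jensen / Cauchy-Schwarz inequality
  have hjensen : ∀ y : O, ENNReal.ofReal ((u y) ^ 2)
      ≤ ∫⁻ ω, ENNReal.ofReal ((F (φ 0 y (W 0 ω))) ^ 2) ∂P := by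
    intro y
    set h : Ω → ℝ := fun ω => F (φ 0 y (W 0 ω)) with hh
    have hmeas : Measurable h := hF.comp (hφ0.comp (measurable_const.prodMk (hWmeas 0)))
    have hofReal : ∀ a : ℝ, ENNReal.ofReal (a ^ 2) = (‖a‖₊ : ENNReal) ^ 2 := by
      intro a
      rw [← enorm_eq_nnnorm, ← ofReal_norm_eq_enorm, ← ENNReal.ofReal_pow (norm_nonneg a)]
      congr 1
      rw [Real.norm_eq_abs, sq_abs]
    have h1 : (‖∫ ω, h ω ∂P‖₊ : ENNReal) ≤ ∫⁻ ω, (‖h ω‖₊ : ENNReal) ∂P :=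
      enorm_integral_le_lintegral_enorm _
    have h2 : (∫⁻ ω, (‖h ω‖₊ : ENNReal) ∂P) ^ 2 ≤ ∫⁻ ω, (‖h ω‖₊ : ENNReal) ^ 2 ∂P := by
      have hconj : Real.HolderConjugate 2 2 := ⟨by norm_num, by norm_num, by norm_num⟩
      have hHolder := ENNReal.lintegral_mul_le_Lp_mul_Lq P hconj
        (f := fun ω => (‖h ω‖₊ : ENNReal)) (g := fun _ => 1)
        hmeas.enorm.aemeasurable aemeasurable_const
      simp only [mul_one, ENNReal.one_rpow, lintegral_const, measure_univ, one_mul,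
        ENNReal.one_rpow] at hHolder
      have hHolder' : ∫⁻ ω, (‖h ω‖₊ : ENNReal) ∂P
          ≤ (∫⁻ ω, (‖h ω‖₊ : ENNReal) ^ (2:ℝ) ∂P) ^ (1 / (2:ℝ)) := by
        simpa using hHolder
      calc (∫⁻ ω, (‖h ω‖₊ : ENNReal) ∂P) ^ 2
          ≤ ((∫⁻ ω, (‖h ω‖₊ : ENNReal) ^ (2:ℝ) ∂P) ^ (1 / (2:ℝ))) ^ 2 :=
            pow_le_pow_left' hHolder' 2
        _ = ∫⁻ ω, (‖h ω‖₊ : ENNReal) ^ (2:ℝ) ∂P := by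
            rw [← ENNReal.rpow_natCast (((∫⁻ ω, (‖h ω‖₊ : ENNReal) ^ (2:ℝ) ∂P) ^ (1 / (2:ℝ)))) 2,
              ← ENNReal.rpow_mul]
            norm_num
        _ = ∫⁻ ω, (‖h ω‖₊ : ENNReal) ^ 2 ∂P := by
            refine lintegral_congr fun ω => ?_
            rw [← ENNReal.rpow_natCast ((‖h ω‖₊ : ENNReal)) 2]
            norm_num
    calc ENNReal.ofReal ((u y) ^ 2) = (‖∫ ω, h ω ∂P‖₊ : ENNReal) ^ 2 := by
          rw [hofReal]
      _ ≤ (∫⁻ ω, (‖h ω‖₊ : ENNReal) ∂P) ^ 2 := pow_le_pow_left' h1 2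
      _ ≤ ∫⁻ ω, (‖h ω‖₊ : ENNReal) ^ 2 ∂P := h2
      _ = ∫⁻ ω, ENNReal.ofReal ((h ω) ^ 2) ∂P := by
          refine lintegral_congr fun ω => ?_
          rw [hofReal]
  -- pointwise quadratic bound on F
  have hFsq : ∀ z : O, (F z) ^ 2 ≤ 2 * (1 + L ^ 2) * ((f z 0) ^ 2 + (v z) ^ 2) := by
    intro z
    have habs : |F z| ≤ |f z 0| + L * |v z| := by
      have h1 : |f z (v z) - f z 0| ≤ L * |v z - 0| := hfL z (v z) 0
      simp only [sub_zero] at h1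
      calc |F z| = |(f z (v z) - f z 0) + f z 0| := by ring_nf; rfl
        _ ≤ |f z (v z) - f z 0| + |f z 0| := abs_add_le _ _
        _ ≤ L * |v z| + |f z 0| := add_le_add_left h1 _
        _ = |f z 0| + L * |v z| := by ring
    nlinarith [sq_abs (F z), sq_abs (f z 0), sq_abs (v z), abs_nonneg (F z),
      abs_nonneg (f z 0), abs_nonneg (v z), sq_nonneg (|f z 0| - L * |v z|),
      mul_nonneg hL (abs_nonneg (v z)), sq_nonneg (1 - L), sq_nonneg (|f z 0| * L),
      mul_nonneg (mul_nonneg hL hL) (sq_nonneg (v z))]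
  -- finiteness of the key integrals
  have hterm : ∀ k (x : O), k ≤ K →
      ∫⁻ ω, ENNReal.ofReal ((F (X k 0 x ω)) ^ 2) ∂P < ⊤ := by
    intro k x hkK
    have hb := ENNReal.sum_lt_top.mp (hBound x) k (Finset.mem_range.mpr (by omega))
    calc ∫⁻ ω, ENNReal.ofReal ((F (X k 0 x ω)) ^ 2) ∂P
        ≤ ∫⁻ ω, ENNReal.ofReal (2 * (1 + L ^ 2))
            * ENNReal.ofReal ((f (X k 0 x ω) 0) ^ 2 + (v (X k 0 x ω)) ^ 2) ∂P := by
          refine lintegral_mono fun ω => ?_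
          rw [← ENNReal.ofReal_mul (by positivity)]
          exact ENNReal.ofReal_le_ofReal (hFsq _)
      _ = ENNReal.ofReal (2 * (1 + L ^ 2))
            * ∫⁻ ω, ENNReal.ofReal ((f (X k 0 x ω) 0) ^ 2 + (v (X k 0 x ω)) ^ 2) ∂P :=
          lintegral_const_mul' _ _ ENNReal.ofReal_ne_top
      _ < ⊤ := ENNReal.mul_lt_top ENNReal.ofReal_lt_top hb
  refine ⟨u, humeas, fun x => ?_⟩
  have hX10 : ∀ ω, X 1 0 x ω = φ 0 x (W 0 ω) := by
    intro ω
    rw [hXl 1 0 x ω (by omega) hK, hXk 1 x ω hK]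
  constructor
  · -- finiteness of the sum
    refine ENNReal.sum_lt_top.mpr fun k hk => ?_
    rw [Finset.mem_Icc] at hk
    obtain ⟨h1k, hkK⟩ := hk
    have hY : Measurable (fun ω => X k 1 x ω) := hXmeas k 1 x h1k hkK
    have hsplit : ∫⁻ ω, ENNReal.ofReal ((u (X k 1 x ω)) ^ 2
          + (f (X 1 0 x ω) (v (X 1 0 x ω))) ^ 2) ∂P
        = (∫⁻ ω, ENNReal.ofReal ((u (X k 1 x ω)) ^ 2) ∂P)
          + ∫⁻ ω, ENNReal.ofReal ((F (X 1 0 x ω)) ^ 2) ∂P := by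
      rw [← lintegral_add_left]
      · refine lintegral_congr fun ω => ?_
        rw [← ENNReal.ofReal_add (sq_nonneg _) (sq_nonneg _)]
      · exact (ENNReal.measurable_ofReal.comp ((humeas.comp hY).pow_const 2))
    rw [hsplit]
    refine ENNReal.add_lt_top.mpr ⟨?_, hterm 1 x hK⟩
    have hchain : ∫⁻ ω, ENNReal.ofReal ((u (X k 1 x ω)) ^ 2) ∂P
        ≤ ∫⁻ ω, ENNReal.ofReal ((F (X k 0 x ω)) ^ 2) ∂P := by
      have hHmeas : Measurable (fun q : O × S => ENNReal.ofReal ((F (φ 0 q.1 q.2)) ^ 2)) :=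
        ENNReal.measurable_ofReal.comp (((hF.comp hφ0)).pow_const 2)
      calc ∫⁻ ω, ENNReal.ofReal ((u (X k 1 x ω)) ^ 2) ∂P
          ≤ ∫⁻ ω, (∫⁻ ω', ENNReal.ofReal ((F (φ 0 (X k 1 x ω) (W 0 ω'))) ^ 2) ∂P) ∂P :=
            lintegral_mono fun ω => hjensen (X k 1 x ω)
        _ = ∫⁻ ω, ENNReal.ofReal ((F (φ 0 (X k 1 x ω) (W 0 ω))) ^ 2) ∂P :=
            hprod k x h1k hkK _ hHmeas
        _ = ∫⁻ ω, ENNReal.ofReal ((F (X k 0 x ω)) ^ 2) ∂P := by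
            refine lintegral_congr fun ω => ?_
            rw [hXl k 0 x ω (by omega) hkK]
    exact lt_of_le_of_lt hchain (hterm k x hkK)
  · -- the value of u
    show (∫ ω, F (φ 0 x (W 0 ω)) ∂P) = _
    refine integral_congr_ae (Filter.Eventually.of_forall fun ω => ?_)
    show F (φ 0 x (W 0 ω)) = f (X 1 0 x ω) (v (X 1 0 x ω))
    rw [hX10 ω]
end

section
/- Let d,K ∈ ℕ, L ∈ ℝ, let 𝒪 ∈ ℬ(ℝ^d)\{∅} be a nonempty Borel set, let f_k : 𝒪 × ℝ → ℝ, k ∈ {0,…,K}, be Borel measurable with |f_k(x,a) − f_k(x,b)| ≤ L|a − b| for all k, x ∈ 𝒪, a,b ∈ ℝ, let g : 𝒪 → ℝ be Borel measurable, let (S,𝒮) be a measurable space, let φ_k : 𝒪 × S → 𝒪, k ∈ {0,…,K}, be jointly measurable, let (Ω,ℱ,ℙ) be a probability space, let W_k : Ω → S, k ∈ {0,…,K}, be independent random variables, for each k define X^{k,x}_l by X^{k,x}_k = x and X^{k,x}_l = φ_l(X^{k,x}_{l+1}, W_l) for l < k, and assume E[|g(X^{k,x}_0)|² + Σ_{l=0}^{k−1}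 |f_l(X^{k,x}_l,0)|²] < ∞ for all k ∈ {0,…,K}, x ∈ 𝒪. Then there exist Borel measurable functions v_k : 𝒪 → ℝ, k ∈ {0,…,K}, such that for all k ∈ {1,…,K} and x ∈ 𝒪 it holds that E[|f_{k−1}(X^{k,x}_{k−1}, v_{k−1}(X^{k,x}_{k−1}))| + Σ_{l=1}^k |v_l(X^{k,x}_l)|²] < ∞, v_0(x) = g(x), and v_k(x) = E[f_{k−1}(X^{k,x}_{k−1}, v_{k−1}(X^{k,x}_{k−1}))]. -/
open MeasureTheory ProbabilityTheory
open scoped ENNReal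

noncomputable def vaux {α S Ω : Type*} [MeasurableSpace Ω]
    (g : α → ℝ) (f : ℕ → α → ℝ → ℝ) (φ : ℕ → α → S → α) (W : ℕ → Ω → S)
    (P : Measure Ω) : ℕ → α → ℝ
  | 0 => g
  | (k+1) => fun x => ∫ ω, f k (φ k x (W k ω)) (vaux g f φ W P k (φ k x (W k ω))) ∂P

def Dch {α S : Type*} (φ : ℕ → α → S → α) : ℕ → ℕ → α → (ℕ → S) → α
  | _, 0, x, _ => x
  | l, (n+1), x, w => φ l (Dch φ (l+1) n x w) (w l)

lemma Dch_congr {α S : Type*} (φ : ℕ → α → S → α) :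
    ∀ (n l : ℕ) (x : α) (w w' : ℕ → S),
      (∀ i, l ≤ i → i < l + n → w i = w' i) → Dch φ l n x w = Dch φ l n x w' := by
  intro n
  induction n with
  | zero => intro l x w w' _; rfl
  | succ n ih =>
    intro l x w w' h
    show φ l (Dch φ (l+1) n x w) (w l) = φ l (Dch φ (l+1) n x w') (w' l)
    rw [ih (l+1) x w w' (fun i h1 h2 => h i (by omega) (by omega)),
      h l (le_refl l) (by omega)]

lemma Dch_measurable {α S : Type*} [MeasurableSpace α] [MeasurableSpace S]
    (φ : ℕ → α → S → α) :
    ∀ (n l : ℕ), (∀ j, l ≤ j → j < l + n → Measurable (fun q : α × S => φ j q.1 q.2)) →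
      Measurable (fun q : α × (ℕ → S) => Dch φ l n q.1 q.2) := by
  intro n
  induction n with
  | zero => intro l _; exact measurable_fst
  | succ n ih =>
    intro l h
    have h1 : Measurable (fun q : α × (ℕ → S) => Dch φ (l+1) n q.1 q.2) :=
      ih (l+1) (fun j hj hj' => h j (by omega) (by omega))
    have h2 : Measurable (fun q : α × (ℕ → S) => (Dch φ (l+1) n q.1 q.2, q.2 l)) :=
      h1.prodMk ((measurable_pi_apply l).comp measurable_snd)
    exact (h l (le_refl l) (by omega)).comp h2

lemma freeze_lintegral {Ω β γ : Type*} [MeasurableSpace Ω] [MeasurableSpace β]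
    [MeasurableSpace γ] (P : Measure Ω) [IsProbabilityMeasure P] {Y : Ω → β} {Z : Ω → γ}
    (hY : Measurable Y) (hZ : Measurable Z) (hind : IndepFun Y Z P)
    {Φ : β × γ → ℝ≥0∞} (hΦ : Measurable Φ) :
    ∫⁻ ω, Φ (Y ω, Z ω) ∂P = ∫⁻ ω, ∫⁻ ω', Φ (Y ω, Z ω') ∂P ∂P := by
  have hmap := (indepFun_iff_map_prod_eq_prod_map_map hY.aemeasurable hZ.aemeasurable).mp hind
  haveI : IsProbabilityMeasure (P.map Y) := Measure.isProbabilityMeasure_map hY.aemeasurable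
  haveI : IsProbabilityMeasure (P.map Z) := Measure.isProbabilityMeasure_map hZ.aemeasurable
  calc ∫⁻ ω, Φ (Y ω, Z ω) ∂P
      = ∫⁻ p, Φ p ∂(P.map (fun ω => (Y ω, Z ω))) := by
        rw [lintegral_map hΦ (hY.prodMk hZ)]
    _ = ∫⁻ p, Φ p ∂((P.map Y).prod (P.map Z)) := by rw [hmap]
    _ = ∫⁻ y, ∫⁻ z, Φ (y, z) ∂(P.map Z) ∂(P.map Y) := lintegral_prod _ hΦ.aemeasurable
    _ = ∫⁻ y, ∫⁻ ω', Φ (y, Z ω') ∂P ∂(P.map Y) := by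
        refine lintegral_congr fun y => ?_
        exact lintegral_map (hΦ.comp measurable_prodMk_left) hZ
    _ = ∫⁻ ω, ∫⁻ ω', Φ (Y ω, Z ω') ∂P ∂P := by
        have hmeas : Measurable (fun y => ∫⁻ ω', Φ (y, Z ω') ∂P) :=
          (hΦ.comp (measurable_fst.prodMk (hZ.comp measurable_snd))).lintegral_prod_right'
        rw [lintegral_map hmeas hY]

lemma sq_lintegral_le {Ω : Type*} [MeasurableSpace Ω] (P : Measure Ω) [IsProbabilityMeasure P]
    {h : Ω → ℝ≥0∞} (hh : AEMeasurable h P) :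
    (∫⁻ ω, h ω ∂P) ^ 2 ≤ ∫⁻ ω, (h ω) ^ 2 ∂P := by
  have hconj : Real.HolderConjugate 2 2 := by constructor <;> norm_num
  have H := ENNReal.lintegral_mul_le_Lp_mul_Lq P hconj hh
    (aemeasurable_const (b := (1:ℝ≥0∞)))
  simp only [Pi.mul_apply, mul_one] at H
  have h1 : ∫⁻ (_ : Ω), (1:ℝ≥0∞) ^ (2:ℝ) ∂P = 1 := by simp
  rw [h1, ENNReal.one_rpow, mul_one] at H
  calc (∫⁻ ω, h ω ∂P) ^ 2
      ≤ ((∫⁻ ω, h ω ^ (2:ℝ) ∂P) ^ (1/2:ℝ)) ^ 2 := pow_le_pow_left₀ zero_le H 2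
    _ = ∫⁻ ω, h ω ^ 2 ∂P := by
        rw [← ENNReal.rpow_natCast ((∫⁻ ω, h ω ^ (2:ℝ) ∂P) ^ (1/2:ℝ)) 2,
          ← ENNReal.rpow_mul]
        norm_num

theorem welldefinedness_exact_solution
    (d K : ℕ) (hd : 0 < d) (hK : 0 < K) (L : ℝ)
    (O : Set (Fin d → ℝ)) (hOmeas : MeasurableSet O) (hOne : O.Nonempty)
    (f : ℕ → O → ℝ → ℝ) (hf : ∀ k, k ≤ K → Measurable (fun q : O × ℝ => f k q.1 q.2))
    (hfL : ∀ (k : ℕ) (x : O) (a b : ℝ), k ≤ K → |f k x a - f k x b| ≤ L * |a - b|)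
    (g : O → ℝ) (hg : Measurable g)
    {S : Type*} [MeasurableSpace S]
    (φ : ℕ → O → S → O) (hφ : ∀ k, k ≤ K → Measurable (fun q : O × S => φ k q.1 q.2))
    {Ω : Type*} [MeasurableSpace Ω] (P : Measure Ω) [IsProbabilityMeasure P]
    (W : ℕ → Ω → S) (hWmeas : ∀ k, Measurable (W k))
    (hWindep : iIndepFun
      (fun k : Fin (K + 1) => W k) P)
    (X : ℕ → ℕ → O → Ω → O)
    (hXk : ∀ (k : ℕ) (x : O) (ω : Ω), k ≤ K → X k k x ω = x)
    (hXl : ∀ (k l : ℕ) (x : O) (ω : Ω), l < k → k ≤ K →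
      X k l x ω = φ l (X k (l + 1) x ω) (W l ω))
    (hBound : ∀ (k : ℕ) (x : O), k ≤ K →
      ∫⁻ ω, ENNReal.ofReal ((g (X k 0 x ω)) ^ 2
        + ∑ l ∈ Finset.range k, (f l (X k l x ω) 0) ^ 2) ∂P < ⊤)
    :
    ∃ v : ℕ → O → ℝ, (∀ k, k ≤ K → Measurable (v k)) ∧ (∀ x : O, v 0 x = g x) ∧
      ∀ (k : ℕ) (x : O), 1 ≤ k → k ≤ K →
        (∫⁻ ω, ENNReal.ofReal
            (|f (k - 1) (X k (k - 1) x ω) (v (k - 1) (X k (k - 1) x ω))|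
              + ∑ l ∈ Finset.Icc 1 k, (v l (X k l x ω)) ^ 2) ∂P < ⊤) ∧
        v k x = ∫ ω, f (k - 1) (X k (k - 1) x ω) (v (k - 1) (X k (k - 1) x ω)) ∂P := by
  classical
  -- Ω is nonempty, pick a junk element of S
  have hΩne : Nonempty Ω := by
    rcases isEmpty_or_nonempty Ω with h | h
    · exfalso
      have h1 : P Set.univ = 1 := measure_univ
      rw [Set.univ_eq_empty_iff.mpr h] at h1
      simp at h1
    · exact h
  obtain ⟨ω₀⟩ := hΩne
  set s₀ : S := W 0 ω₀ with hs₀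
  set c : ℝ≥0∞ := ENNReal.ofReal (max L 1) with hc
  have hc1 : (1 : ℝ≥0∞) ≤ c := by
    rw [hc, ← ENNReal.ofReal_one]
    exact ENNReal.ofReal_le_ofReal (le_max_right L 1)
  have hcne : c ≠ ⊤ := ENNReal.ofReal_ne_top
  have hcpow : ∀ n : ℕ, (1 : ℝ≥0∞) ≤ c ^ n := fun n => one_le_pow_of_one_le' hc1 n
  set v : ℕ → O → ℝ := vaux g f φ W P with hv
  have hv0 : ∀ x : O, v 0 x = g x := fun x => rfl
  have hvsucc : ∀ (k : ℕ) (x : O),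
      v (k+1) x = ∫ ω, f k (φ k x (W k ω)) (v k (φ k x (W k ω))) ∂P := fun k x => rfl
  -- X in terms of Dch
  have hXD : ∀ (n l : ℕ) (x : O) (ω : Ω), l + n ≤ K →
      X (l + n) l x ω = Dch φ l n x (fun i => W i ω) := by
    intro n
    induction n with
    | zero => intro l x ω h; exact hXk l x ω (by omega)
    | succ n ih =>
      intro l x ω h
      rw [hXl (l + (n+1)) l x ω (by omega) (by omega)]
      show φ l (X (l + (n+1)) (l+1) x ω) (W l ω)
        = φ l (Dch φ (l+1) n x (fun i => W i ω)) ((fun i => W i ω) l)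
      have : l + (n + 1) = (l + 1) + n := by omega
      rw [this, ih (l+1) x ω (by omega)]
  have hXD' : ∀ (k l : ℕ) (x : O) (ω : Ω), l ≤ k → k ≤ K →
      X k l x ω = Dch φ l (k - l) x (fun i => W i ω) := by
    intro k l x ω hlk hkK
    have h := hXD (k - l) l x ω (by omega)
    rw [show l + (k - l) = k by omega] at h
    exact h
  have hXmeasω : ∀ (k l : ℕ) (x : O), l ≤ k → k ≤ K → Measurable (fun ω => X k l x ω) := by
    intro k l x hlk hkK
    have h : (fun ω => X k l x ω) = fun ω => Dch φ l (k - l) x (fun i => W i ω) :=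
      funext fun ω => hXD' k l x ω hlk hkK
    rw [h]
    have hD : Measurable (fun q : O × (ℕ → S) => Dch φ l (k-l) q.1 q.2) :=
      Dch_measurable φ (k-l) l (fun j hj hj' => hφ j (by omega))
    exact hD.comp (measurable_const.prodMk (measurable_pi_lambda _ (fun i => hWmeas i)))
  have hXcomp : ∀ (k l : ℕ), l ≤ k → k ≤ K → ∀ (x : O) (ω : Ω) (n j : ℕ), j + n = l →
      X l j (X k l x ω) ω = X k j x ω := by
    intro k l hlk hkK x ω n
    induction n with
    | zero =>
      intro j hj
      have : j = l := by omega
      subst this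
      exact hXk j (X k j x ω) ω (by omega)
    | succ n ih =>
      intro j hj
      have hjl : j < l := by omega
      rw [hXl l j (X k l x ω) ω hjl (by omega), hXl k j x ω (by omega) hkK,
        ih (j+1) (by omega)]
  have hY : ∀ (k : ℕ) (x : O) (ω : Ω), k + 1 ≤ K → X (k+1) k x ω = φ k x (W k ω) := by
    intro k x ω h
    rw [hXl (k+1) k x ω (by omega) h, hXk (k+1) x ω h]
  set Gr : ℕ → O → Ω → ℝ := fun l y ω =>
    |g (X l 0 y ω)| + ∑ j ∈ Finset.range l, |f j (X l j y ω) 0| with hGr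
  have hGr_nonneg : ∀ (l : ℕ) (y : O) (ω : Ω), 0 ≤ Gr l y ω := by
    intro l y ω
    rw [hGr]
    exact add_nonneg (abs_nonneg _) (Finset.sum_nonneg fun j _ => abs_nonneg _)
  have hGrmeas : ∀ (l : ℕ) (y : O), l ≤ K → Measurable (fun ω => Gr l y ω) := by
    intro l y hlK
    rw [hGr]
    refine Measurable.add ((hg.comp (hXmeasω l 0 y (by omega) hlK)).abs) ?_
    refine Finset.measurable_sum _ fun j hj => ?_
    simp only [Finset.mem_range] at hj
    exact ((hf j (by omega)).comp
      ((hXmeasω l j y (by omega) hlK).prodMk measurable_const)).abs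
  -- Claim B : square integrability of Gr along the chain
  have hGE2fin : ∀ (l : ℕ) (y : O), l ≤ K → ∫⁻ ω, ENNReal.ofReal (Gr l y ω ^ 2) ∂P < ⊤ := by
    intro l y hlK
    have hptw : ∀ ω : Ω, ENNReal.ofReal (Gr l y ω ^ 2)
        ≤ ENNReal.ofReal (2 * (l + 1))
          * ENNReal.ofReal ((g (X l 0 y ω)) ^ 2
            + ∑ j ∈ Finset.range l, (f j (X l j y ω) 0) ^ 2) := by
      intro ω
      rw [← ENNReal.ofReal_mul (by positivity)]
      refine ENNReal.ofReal_le_ofReal ?_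
      simp only [hGr]
      set a := g (X l 0 y ω)
      have hs : (∑ j ∈ Finset.range l, |f j (X l j y ω) 0|) ^ 2
          ≤ (l : ℝ) * ∑ j ∈ Finset.range l, (f j (X l j y ω) 0) ^ 2 := by
        have h1 := sq_sum_le_card_mul_sum_sq
          (s := Finset.range l) (f := fun j => |f j (X l j y ω) 0|)
        simpa [sq_abs] using h1
      have hsum_nonneg : (0:ℝ) ≤ ∑ j ∈ Finset.range l, (f j (X l j y ω) 0) ^ 2 :=
        Finset.sum_nonneg fun j _ => sq_nonneg _
      have habs : (0:ℝ) ≤ ∑ j ∈ Finset.range l, |f j (X l j y ω) 0| :=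
        Finset.sum_nonneg fun j _ => abs_nonneg _
      nlinarith [sq_nonneg (|a| - ∑ j ∈ Finset.range l, |f j (X l j y ω) 0|),
        sq_abs a, sq_nonneg a]
    calc ∫⁻ ω, ENNReal.ofReal (Gr l y ω ^ 2) ∂P
        ≤ ∫⁻ ω, ENNReal.ofReal (2 * (l + 1))
            * ENNReal.ofReal ((g (X l 0 y ω)) ^ 2
              + ∑ j ∈ Finset.range l, (f j (X l j y ω) 0) ^ 2) ∂P := lintegral_mono hptw
      _ = ENNReal.ofReal (2 * (l + 1))
            * ∫⁻ ω, ENNReal.ofReal ((g (X l 0 y ω)) ^ 2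
              + ∑ j ∈ Finset.range l, (f j (X l j y ω) 0) ^ 2) ∂P :=
          lintegral_const_mul' _ _ ENNReal.ofReal_ne_top
      _ < ⊤ := ENNReal.mul_lt_top ENNReal.ofReal_lt_top (hBound l y hlK)
  have hGEfin : ∀ (l : ℕ) (y : O), l ≤ K → ∫⁻ ω, ENNReal.ofReal (Gr l y ω) ∂P < ⊤ := by
    intro l y hlK
    have hptw : ∀ ω : Ω, ENNReal.ofReal (Gr l y ω)
        ≤ 1 + ENNReal.ofReal (Gr l y ω ^ 2) := by
      intro ω
      calc ENNReal.ofReal (Gr l y ω) ≤ ENNReal.ofReal (1 + Gr l y ω ^ 2) :=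
            ENNReal.ofReal_le_ofReal (by nlinarith [sq_nonneg (Gr l y ω - 1)])
        _ ≤ ENNReal.ofReal 1 + ENNReal.ofReal (Gr l y ω ^ 2) := ENNReal.ofReal_add_le
        _ = 1 + ENNReal.ofReal (Gr l y ω ^ 2) := by rw [ENNReal.ofReal_one]
    calc ∫⁻ ω, ENNReal.ofReal (Gr l y ω) ∂P
        ≤ ∫⁻ ω, (1 + ENNReal.ofReal (Gr l y ω ^ 2)) ∂P := lintegral_mono hptw
      _ = 1 + ∫⁻ ω, ENNReal.ofReal (Gr l y ω ^ 2) ∂P := by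
          rw [lintegral_add_left measurable_const]
          simp
      _ < ⊤ := ENNReal.add_lt_top.mpr ⟨ENNReal.one_lt_top, hGE2fin l y hlK⟩
  -- the Lipschitz bound in ℝ≥0∞ form
  have hfabs : ∀ (j : ℕ) (y : O) (a : ℝ), j ≤ K →
      ENNReal.ofReal |f j y a| ≤ ENNReal.ofReal |f j y 0| + c * ENNReal.ofReal |a| := by
    intro j y a hjK
    have h1 : |f j y a| ≤ |f j y 0| + max L 1 * |a| := by
      have h2 := hfL j y a 0 hjK
      rw [sub_zero] at h2
      have h3 : L * |a| ≤ max L 1 * |a| :=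
        mul_le_mul_of_nonneg_right (le_max_left _ _) (abs_nonneg a)
      calc |f j y a| = |f j y 0 + (f j y a - f j y 0)| := by ring_nf
        _ ≤ |f j y 0| + |f j y a - f j y 0| := abs_add_le _ _
        _ ≤ |f j y 0| + max L 1 * |a| := by linarith
    calc ENNReal.ofReal |f j y a| ≤ ENNReal.ofReal (|f j y 0| + max L 1 * |a|) :=
          ENNReal.ofReal_le_ofReal h1
      _ ≤ ENNReal.ofReal |f j y 0| + ENNReal.ofReal (max L 1 * |a|) := ENNReal.ofReal_add_le
      _ = ENNReal.ofReal |f j y 0| + c * ENNReal.ofReal |a| := by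
          rw [ENNReal.ofReal_mul (le_trans zero_le_one (le_max_right L 1)), hc]
  -- freezing lemma along the chain
  have hfreeze : ∀ (m l k : ℕ) (x : O), l ≤ k → k ≤ K →
      ∫⁻ ω, (ENNReal.ofReal (Gr l (X k l x ω) ω)) ^ m ∂P
        = ∫⁻ ω, ∫⁻ ω', (ENNReal.ofReal (Gr l (X k l x ω) ω')) ^ m ∂P ∂P := by
    intro m l k x hlk hkK
    have hlK : l ≤ K := le_trans hlk hkK
    set Slo : Finset (Fin (K+1)) := Finset.univ.filter (fun i => (i:ℕ) < l) with hSlo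
    set Shi : Finset (Fin (K+1)) := Finset.univ.filter (fun i => l ≤ (i:ℕ)) with hShi
    have hdisj : Disjoint Shi Slo := by
      rw [Finset.disjoint_left]
      intro i hi hi'
      simp only [hShi, hSlo, Finset.mem_filter, Finset.mem_univ, true_and] at hi hi'
      omega
    have hindUZ : IndepFun (fun ω (i : { x // x ∈ Shi }) => W i ω)
        (fun ω (i : { x // x ∈ Slo }) => W i ω) P :=
      hWindep.indepFun_finset Shi Slo hdisj (fun i => hWmeas i)
    set extlo : ({ x // x ∈ Slo } → S) → (ℕ → S) := fun z n =>
      if h : n < l then z ⟨⟨n, by omega⟩,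
        by simp only [hSlo, Finset.mem_filter, Finset.mem_univ, true_and]; exact h⟩
      else s₀ with hextlo
    set exthi : ({ x // x ∈ Shi } → S) → (ℕ → S) := fun u n =>
      if h : l ≤ n ∧ n < K + 1 then u ⟨⟨n, h.2⟩,
        by simp only [hShi, Finset.mem_filter, Finset.mem_univ, true_and]; exact h.1⟩
      else s₀ with hexthi
    have hextlo_meas : Measurable extlo := by
      refine measurable_pi_lambda _ fun n => ?_
      by_cases h : n < l
      · simp only [hextlo, dif_pos h]; exact measurable_pi_apply _
      · simp only [hextlo, dif_neg h]; exact measurable_const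
    have hexthi_meas : Measurable exthi := by
      refine measurable_pi_lambda _ fun n => ?_
      by_cases h : l ≤ n ∧ n < K + 1
      · simp only [hexthi, dif_pos h]; exact measurable_pi_apply _
      · simp only [hexthi, dif_neg h]; exact measurable_const
    set U : Ω → ({ x // x ∈ Shi } → S) := fun ω i => W i ω with hU
    set Z : Ω → ({ x // x ∈ Slo } → S) := fun ω i => W i ω with hZdef
    have hUmeas : Measurable U := measurable_pi_lambda _ fun i => hWmeas _
    have hZmeas : Measurable Z := measurable_pi_lambda _ fun i => hWmeas _
    set FY : ({ x // x ∈ Shi } → S) → O := fun u => Dch φ l (k - l) x (exthi u) with hFY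
    have hFYmeas : Measurable FY := by
      have hD : Measurable (fun q : O × (ℕ → S) => Dch φ l (k - l) q.1 q.2) :=
        Dch_measurable φ (k - l) l (fun j hj hj' => hφ j (by omega))
      exact hD.comp (measurable_const.prodMk hexthi_meas)
    have hXfac : ∀ ω, X k l x ω = FY (U ω) := by
      intro ω
      rw [hXD' k l x ω hlk hkK, hFY]
      refine Dch_congr φ (k - l) l x _ _ fun i hi1 hi2 => ?_
      have hi3 : i < K + 1 := by omega
      simp only [hexthi, hU, dif_pos (And.intro hi1 hi3)]
    set Φ : O × ({ x // x ∈ Slo } → S) → ℝ≥0∞ := fun p =>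
      (ENNReal.ofReal (|g (Dch φ 0 (l - 0) p.1 (extlo p.2))|
        + ∑ j ∈ Finset.range l, |f j (Dch φ j (l - j) p.1 (extlo p.2)) 0|)) ^ m with hΦ
    have hΦmeas : Measurable Φ := by
      rw [hΦ]
      refine Measurable.pow_const ?_ m
      refine ENNReal.measurable_ofReal.comp ?_
      have hDj : ∀ j : ℕ, j ≤ l → Measurable (fun p : O × ({ x // x ∈ Slo } → S) =>
          Dch φ j (l - j) p.1 (extlo p.2)) := fun j hj =>
        (Dch_measurable φ (l - j) j (fun i hi hi' => hφ i (by omega))).comp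
          (measurable_fst.prodMk (hextlo_meas.comp measurable_snd))
      refine Measurable.add ((hg.comp (hDj 0 (by omega))).abs) ?_
      refine Finset.measurable_sum _ fun j hj => ?_
      simp only [Finset.mem_range] at hj
      exact ((hf j (by omega)).comp ((hDj j (by omega)).prodMk measurable_const)).abs
    have hΦeq : ∀ (y : O) (ω' : Ω), Φ (y, Z ω') = (ENNReal.ofReal (Gr l y ω')) ^ m := by
      intro y ω'
      have hXj : ∀ j : ℕ, j ≤ l → X l j y ω' = Dch φ j (l - j) y (extlo (Z ω')) := by
        intro j hj
        rw [hXD' l j y ω' hj hlK]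
        refine Dch_congr φ (l - j) j y _ _ fun i hi1 hi2 => ?_
        have hil : i < l := by omega
        simp only [hextlo, hZdef, dif_pos hil]
      have hreal : |g (Dch φ 0 (l - 0) y (extlo (Z ω')))|
          + ∑ j ∈ Finset.range l, |f j (Dch φ j (l - j) y (extlo (Z ω'))) 0|
          = Gr l y ω' := by
        simp only [hGr]
        rw [← hXj 0 (by omega)]
        congr 1
        refine Finset.sum_congr rfl fun j hj => ?_
        simp only [Finset.mem_range] at hj
        rw [← hXj j (by omega)]
      rw [hΦ]
      simp only
      rw [hreal]
    have hYZind : IndepFun (FY ∘ U) Z P := hindUZ.comp hFYmeas measurable_id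
    have hmain := freeze_lintegral P (hFYmeas.comp hUmeas) hZmeas hYZind hΦmeas
    calc ∫⁻ ω, (ENNReal.ofReal (Gr l (X k l x ω) ω)) ^ m ∂P
        = ∫⁻ ω, Φ ((FY ∘ U) ω, Z ω) ∂P := by
          refine lintegral_congr fun ω => ?_
          have h1 := hΦeq (X k l x ω) ω
          rw [Function.comp_apply, ← hXfac ω, h1]
      _ = ∫⁻ ω, ∫⁻ ω', Φ ((FY ∘ U) ω, Z ω') ∂P ∂P := hmain
      _ = ∫⁻ ω, ∫⁻ ω', (ENNReal.ofReal (Gr l (X k l x ω) ω')) ^ m ∂P ∂P := by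
          refine lintegral_congr fun ω => lintegral_congr fun ω' => ?_
          rw [Function.comp_apply, ← hXfac ω, hΦeq (X k l x ω) ω']
  -- splitting of Gr along one step
  have hGrsplit : ∀ (k : ℕ) (x : O) (ω : Ω), k + 1 ≤ K →
      Gr (k+1) x ω = Gr k (X (k+1) k x ω) ω + |f k (X (k+1) k x ω) 0| := by
    intro k x ω hk1
    simp only [hGr]
    rw [Finset.sum_range_succ]
    have hc0 : X k 0 (X (k+1) k x ω) ω = X (k+1) 0 x ω :=
      hXcomp (k+1) k (by omega) hk1 x ω k 0 (by omega)
    have hcj : ∀ j, j < k → X k j (X (k+1) k x ω) ω = X (k+1) j x ω := fun j hj =>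
      hXcomp (k+1) k (by omega) hk1 x ω (k - j) j (by omega)
    rw [hc0]
    have hsum : ∑ j ∈ Finset.range k, |f j (X k j (X (k+1) k x ω) ω) 0|
        = ∑ j ∈ Finset.range k, |f j (X (k+1) j x ω) 0| := by
      refine Finset.sum_congr rfl fun j hj => ?_
      simp only [Finset.mem_range] at hj
      rw [hcj j hj]
    rw [hsum]
    ring
  -- Claim A : pointwise bound on |v k|
  have hA : ∀ k : ℕ, k ≤ K → ∀ x : O,
      ENNReal.ofReal |v k x| ≤ c ^ k * ∫⁻ ω, ENNReal.ofReal (Gr k x ω) ∂P := by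
    intro k
    induction k with
    | zero =>
      intro _ x
      have h1 : ∀ ω : Ω, Gr 0 x ω = |g x| := by
        intro ω
        simp only [hGr, Finset.range_zero, Finset.sum_empty, add_zero,
          hXk 0 x ω (by omega)]
      have h2 : ∫⁻ ω, ENNReal.ofReal (Gr 0 x ω) ∂P = ENNReal.ofReal |g x| := by
        rw [lintegral_congr fun ω => by rw [h1 ω]]
        simp
      rw [h2, pow_zero, one_mul, hv0 x]
    | succ k ih =>
      intro hk1 x
      have hkK : k ≤ K := by omega
      have hstep1 : ENNReal.ofReal |v (k+1) x|
          ≤ ∫⁻ ω, ENNReal.ofReal |f k (X (k+1) k x ω) (v k (X (k+1) k x ω))| ∂P := by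
        have heq : v (k+1) x = ∫ ω, f k (X (k+1) k x ω) (v k (X (k+1) k x ω)) ∂P := by
          rw [hvsucc k x]
          refine integral_congr_ae (Filter.Eventually.of_forall fun ω => ?_)
          show f k (φ k x (W k ω)) (v k (φ k x (W k ω)))
            = f k (X (k+1) k x ω) (v k (X (k+1) k x ω))
          rw [hY k x ω hk1]
        rw [heq]
        calc ENNReal.ofReal |∫ ω, f k (X (k+1) k x ω) (v k (X (k+1) k x ω)) ∂P|
            = ‖∫ ω, f k (X (k+1) k x ω) (v k (X (k+1) k x ω)) ∂P‖ₑ :=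
              (Real.enorm_eq_ofReal_abs _).symm
          _ ≤ ∫⁻ ω, ‖f k (X (k+1) k x ω) (v k (X (k+1) k x ω))‖ₑ ∂P :=
              enorm_integral_le_lintegral_enorm _
          _ = ∫⁻ ω, ENNReal.ofReal |f k (X (k+1) k x ω) (v k (X (k+1) k x ω))| ∂P :=
              lintegral_congr fun ω => Real.enorm_eq_ofReal_abs _
      have hm1 : Measurable (fun ω => ENNReal.ofReal |f k (X (k+1) k x ω) 0|) := by
        refine ENNReal.measurable_ofReal.comp ?_
        exact ((hf k hkK).comp ((hXmeasω (k+1) k x (by omega) hk1).prodMk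
          measurable_const)).abs
      have hptw : ∀ ω : Ω, ENNReal.ofReal |f k (X (k+1) k x ω) (v k (X (k+1) k x ω))|
          ≤ ENNReal.ofReal |f k (X (k+1) k x ω) 0|
            + c ^ (k+1) * ∫⁻ ω', ENNReal.ofReal (Gr k (X (k+1) k x ω) ω') ∂P := by
        intro ω
        refine le_trans (hfabs k (X (k+1) k x ω) (v k (X (k+1) k x ω)) hkK) ?_
        refine add_le_add_right ?_ _
        calc c * ENNReal.ofReal |v k (X (k+1) k x ω)|
            ≤ c * (c ^ k * ∫⁻ ω', ENNReal.ofReal (Gr k (X (k+1) k x ω) ω') ∂P) :=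
              mul_le_mul_right (ih hkK (X (k+1) k x ω)) c
          _ = c ^ (k+1) * ∫⁻ ω', ENNReal.ofReal (Gr k (X (k+1) k x ω) ω') ∂P := by
              rw [← mul_assoc, pow_succ, mul_comm (c ^ k) c]
      calc ENNReal.ofReal |v (k+1) x|
          ≤ ∫⁻ ω, (ENNReal.ofReal |f k (X (k+1) k x ω) 0|
              + c ^ (k+1) * ∫⁻ ω', ENNReal.ofReal (Gr k (X (k+1) k x ω) ω') ∂P) ∂P :=
            hstep1.trans (lintegral_mono hptw)
        _ = ∫⁻ ω, ENNReal.ofReal |f k (X (k+1) k x ω) 0| ∂P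
              + c ^ (k+1) * ∫⁻ ω, ∫⁻ ω', ENNReal.ofReal (Gr k (X (k+1) k x ω) ω') ∂P ∂P := by
            rw [lintegral_add_left hm1, lintegral_const_mul' _ _
              (ENNReal.pow_ne_top hcne)]
        _ = ∫⁻ ω, ENNReal.ofReal |f k (X (k+1) k x ω) 0| ∂P
              + c ^ (k+1) * ∫⁻ ω, ENNReal.ofReal (Gr k (X (k+1) k x ω) ω) ∂P := by
            have hfr := hfreeze 1 k (k+1) x (by omega) hk1
            simp only [pow_one] at hfr
            rw [hfr]
        _ ≤ c ^ (k+1) * ∫⁻ ω, ENNReal.ofReal |f k (X (k+1) k x ω) 0| ∂P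
              + c ^ (k+1) * ∫⁻ ω, ENNReal.ofReal (Gr k (X (k+1) k x ω) ω) ∂P :=
            add_le_add_left (le_mul_of_one_le_left zero_le (hcpow (k+1))) _
        _ = c ^ (k+1) * ∫⁻ ω, (ENNReal.ofReal |f k (X (k+1) k x ω) 0|
              + ENNReal.ofReal (Gr k (X (k+1) k x ω) ω)) ∂P := by
            rw [← mul_add, lintegral_add_left hm1]
        _ = c ^ (k+1) * ∫⁻ ω, ENNReal.ofReal (Gr (k+1) x ω) ∂P := by
            congr 1
            refine lintegral_congr fun ω => ?_
            rw [hGrsplit k x ω hk1,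
              ENNReal.ofReal_add (hGr_nonneg _ _ _) (abs_nonneg _), add_comm]
  -- measurability of v
  have hvmeas : ∀ k : ℕ, k ≤ K → Measurable (v k) := by
    intro k
    induction k with
    | zero => intro _; exact hg
    | succ k ih =>
      intro hk1
      have heq : v (k+1) = fun x => ∫ ω, f k (φ k x (W k ω)) (v k (φ k x (W k ω))) ∂P :=
        funext fun x => hvsucc k x
      rw [heq]
      have hφm : Measurable (fun q : O × Ω => φ k q.1 (W k q.2)) :=
        (hφ k (by omega)).comp (measurable_fst.prodMk ((hWmeas k).comp measurable_snd))
      have hsm : StronglyMeasurable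
          (fun q : O × Ω => f k (φ k q.1 (W k q.2)) (v k (φ k q.1 (W k q.2)))) :=
        ((hf k (by omega)).comp (hφm.prodMk ((ih (by omega)).comp hφm))).stronglyMeasurable
      exact hsm.integral_prod_right'.measurable
  refine ⟨v, hvmeas, hv0, ?_⟩
  intro k x hk1 hkK'
  obtain ⟨m, rfl⟩ : ∃ m, k = m + 1 := ⟨k - 1, by omega⟩
  have hkK : m + 1 ≤ K := hkK'
  simp only [Nat.add_sub_cancel]
  constructor
  · -- finiteness
    have hGrsub : ∀ (l : ℕ) (ω : Ω), l ≤ m + 1 →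
        Gr l (X (m+1) l x ω) ω ≤ Gr (m+1) x ω := by
      intro l ω hl
      simp only [hGr]
      have hc0 : X l 0 (X (m+1) l x ω) ω = X (m+1) 0 x ω :=
        hXcomp (m+1) l hl hkK x ω l 0 (by omega)
      have hcj : ∀ j, j < l → X l j (X (m+1) l x ω) ω = X (m+1) j x ω := fun j hj =>
        hXcomp (m+1) l hl hkK x ω (l - j) j (by omega)
      rw [hc0]
      refine add_le_add_right ?_ _
      calc ∑ j ∈ Finset.range l, |f j (X l j (X (m+1) l x ω) ω) 0|
          = ∑ j ∈ Finset.range l, |f j (X (m+1) j x ω) 0| :=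
            Finset.sum_congr rfl fun j hj => by
              simp only [Finset.mem_range] at hj; rw [hcj j hj]
        _ ≤ ∑ j ∈ Finset.range (m+1), |f j (X (m+1) j x ω) 0| :=
            Finset.sum_le_sum_of_subset_of_nonneg
              (Finset.range_subset_range.mpr hl) (fun j _ _ => abs_nonneg _)
    have hterm : ∀ l : ℕ, l ≤ m + 1 →
        ∫⁻ ω, ENNReal.ofReal (v l (X (m+1) l x ω) ^ 2) ∂P < ⊤ := by
      intro l hl
      have hlK : l ≤ K := by omega
      have hptw : ∀ ω : Ω, ENNReal.ofReal (v l (X (m+1) l x ω) ^ 2)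
          ≤ c ^ (2*l) * ∫⁻ ω', (ENNReal.ofReal (Gr l (X (m+1) l x ω) ω')) ^ 2 ∂P := by
        intro ω
        have h1 : ENNReal.ofReal (v l (X (m+1) l x ω) ^ 2)
            = (ENNReal.ofReal |v l (X (m+1) l x ω)|) ^ 2 := by
          rw [← ENNReal.ofReal_pow (abs_nonneg _), sq_abs]
        rw [h1]
        calc (ENNReal.ofReal |v l (X (m+1) l x ω)|) ^ 2
            ≤ (c ^ l * ∫⁻ ω', ENNReal.ofReal (Gr l (X (m+1) l x ω) ω') ∂P) ^ 2 :=
              pow_le_pow_left₀ zero_le (hA l hlK _) 2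
          _ = c ^ (2*l) * (∫⁻ ω', ENNReal.ofReal (Gr l (X (m+1) l x ω) ω') ∂P) ^ 2 := by
              rw [mul_pow, ← pow_mul, mul_comm l 2]
          _ ≤ c ^ (2*l) * ∫⁻ ω', (ENNReal.ofReal (Gr l (X (m+1) l x ω) ω')) ^ 2 ∂P :=
              mul_le_mul_right (sq_lintegral_le P
                ((ENNReal.measurable_ofReal.comp (hGrmeas l _ hlK)).aemeasurable)) _
      calc ∫⁻ ω, ENNReal.ofReal (v l (X (m+1) l x ω) ^ 2) ∂P
          ≤ ∫⁻ ω, c ^ (2*l) * ∫⁻ ω', (ENNReal.ofReal (Gr l (X (m+1) l x ω) ω')) ^ 2 ∂P ∂P :=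
            lintegral_mono hptw
        _ = c ^ (2*l) * ∫⁻ ω, ∫⁻ ω', (ENNReal.ofReal (Gr l (X (m+1) l x ω) ω')) ^ 2 ∂P ∂P :=
            lintegral_const_mul' _ _ (ENNReal.pow_ne_top hcne)
        _ = c ^ (2*l) * ∫⁻ ω, (ENNReal.ofReal (Gr l (X (m+1) l x ω) ω)) ^ 2 ∂P := by
            rw [← hfreeze 2 l (m+1) x hl hkK]
        _ ≤ c ^ (2*l) * ∫⁻ ω, ENNReal.ofReal (Gr (m+1) x ω ^ 2) ∂P := by
            refine mul_le_mul_right (lintegral_mono fun ω => ?_) _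
            rw [ENNReal.ofReal_pow (hGr_nonneg _ _ _)]
            exact pow_le_pow_left₀ zero_le
              (ENNReal.ofReal_le_ofReal (hGrsub l ω hl)) 2
        _ < ⊤ := ENNReal.mul_lt_top
            (ENNReal.pow_lt_top (lt_top_iff_ne_top.mpr hcne)) (hGE2fin (m+1) x hkK)
    have hmK : m ≤ K := by omega
    have hfterm : ∫⁻ ω, ENNReal.ofReal
        |f m (X (m+1) m x ω) (v m (X (m+1) m x ω))| ∂P < ⊤ := by
      have hfGr : ∀ ω : Ω, |f m (X (m+1) m x ω) 0| ≤ Gr (m+1) x ω := by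
        intro ω
        simp only [hGr]
        have h1 : |f m (X (m+1) m x ω) 0|
            ≤ ∑ j ∈ Finset.range (m+1), |f j (X (m+1) j x ω) 0| :=
          Finset.single_le_sum (f := fun j => |f j (X (m+1) j x ω) 0|)
            (fun j _ => abs_nonneg _) (Finset.self_mem_range_succ m)
        have h2 : (0:ℝ) ≤ |g (X (m+1) 0 x ω)| := abs_nonneg _
        linarith
      have hptw : ∀ ω : Ω, ENNReal.ofReal |f m (X (m+1) m x ω) (v m (X (m+1) m x ω))|
          ≤ ENNReal.ofReal (Gr (m+1) x ω)
            + c ^ (m+1) * ∫⁻ ω', ENNReal.ofReal (Gr m (X (m+1) m x ω) ω') ∂P := by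
        intro ω
        refine le_trans (hfabs m (X (m+1) m x ω) _ hmK) ?_
        refine add_le_add (ENNReal.ofReal_le_ofReal (hfGr ω)) ?_
        calc c * ENNReal.ofReal |v m (X (m+1) m x ω)|
            ≤ c * (c ^ m * ∫⁻ ω', ENNReal.ofReal (Gr m (X (m+1) m x ω) ω') ∂P) :=
              mul_le_mul_right (hA m hmK _) c
          _ = c ^ (m+1) * ∫⁻ ω', ENNReal.ofReal (Gr m (X (m+1) m x ω) ω') ∂P := by
              rw [← mul_assoc, pow_succ, mul_comm (c ^ m) c]
      have hmGr : Measurable (fun ω => ENNReal.ofReal (Gr (m+1) x ω)) :=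
        ENNReal.measurable_ofReal.comp (hGrmeas (m+1) x hkK)
      calc ∫⁻ ω, ENNReal.ofReal |f m (X (m+1) m x ω) (v m (X (m+1) m x ω))| ∂P
          ≤ ∫⁻ ω, (ENNReal.ofReal (Gr (m+1) x ω)
              + c ^ (m+1) * ∫⁻ ω', ENNReal.ofReal (Gr m (X (m+1) m x ω) ω') ∂P) ∂P :=
            lintegral_mono hptw
        _ = ∫⁻ ω, ENNReal.ofReal (Gr (m+1) x ω) ∂P
              + c ^ (m+1) * ∫⁻ ω, ∫⁻ ω', ENNReal.ofReal (Gr m (X (m+1) m x ω) ω') ∂P ∂P := by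
            rw [lintegral_add_left hmGr, lintegral_const_mul' _ _ (ENNReal.pow_ne_top hcne)]
        _ = ∫⁻ ω, ENNReal.ofReal (Gr (m+1) x ω) ∂P
              + c ^ (m+1) * ∫⁻ ω, ENNReal.ofReal (Gr m (X (m+1) m x ω) ω) ∂P := by
            have hfr := hfreeze 1 m (m+1) x (by omega) hkK
            simp only [pow_one] at hfr
            rw [hfr]
        _ ≤ ∫⁻ ω, ENNReal.ofReal (Gr (m+1) x ω) ∂P
              + c ^ (m+1) * ∫⁻ ω, ENNReal.ofReal (Gr (m+1) x ω) ∂P :=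
            add_le_add_right (mul_le_mul_right (lintegral_mono fun ω =>
              ENNReal.ofReal_le_ofReal (hGrsub m ω (by omega))) _) _
        _ < ⊤ := ENNReal.add_lt_top.mpr ⟨hGEfin (m+1) x hkK,
            ENNReal.mul_lt_top (ENNReal.pow_lt_top (lt_top_iff_ne_top.mpr hcne))
              (hGEfin (m+1) x hkK)⟩
    have hsplit : ∀ ω : Ω, ENNReal.ofReal
        (|f m (X (m+1) m x ω) (v m (X (m+1) m x ω))|
          + ∑ l ∈ Finset.Icc 1 (m+1), v l (X (m+1) l x ω) ^ 2)
        ≤ ENNReal.ofReal |f m (X (m+1) m x ω) (v m (X (m+1) m x ω))|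
          + ∑ l ∈ Finset.Icc 1 (m+1), ENNReal.ofReal (v l (X (m+1) l x ω) ^ 2) := by
      intro ω
      refine le_trans ENNReal.ofReal_add_le (add_le_add_right ?_ _)
      exact le_of_eq (ENNReal.ofReal_sum_of_nonneg (fun l _ => sq_nonneg _))
    have hmeasf : Measurable (fun ω => ENNReal.ofReal
        |f m (X (m+1) m x ω) (v m (X (m+1) m x ω))|) := by
      have hXm : Measurable (fun ω => X (m+1) m x ω) := hXmeasω (m+1) m x (by omega) hkK
      exact ENNReal.measurable_ofReal.comp (((hf m hmK).comp
        (hXm.prodMk ((hvmeas m hmK).comp hXm))).abs)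
    have hmeasl : ∀ l ∈ Finset.Icc 1 (m+1), Measurable
        (fun ω => ENNReal.ofReal (v l (X (m+1) l x ω) ^ 2)) := by
      intro l hl
      simp only [Finset.mem_Icc] at hl
      exact ENNReal.measurable_ofReal.comp
        (((hvmeas l (by omega)).comp (hXmeasω (m+1) l x hl.2 hkK)).pow_const 2)
    calc ∫⁻ ω, ENNReal.ofReal
          (|f m (X (m+1) m x ω) (v m (X (m+1) m x ω))|
            + ∑ l ∈ Finset.Icc 1 (m+1), v l (X (m+1) l x ω) ^ 2) ∂P
        ≤ ∫⁻ ω, (ENNReal.ofReal |f m (X (m+1) m x ω) (v m (X (m+1) m x ω))|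
            + ∑ l ∈ Finset.Icc 1 (m+1), ENNReal.ofReal (v l (X (m+1) l x ω) ^ 2)) ∂P :=
          lintegral_mono hsplit
      _ = ∫⁻ ω, ENNReal.ofReal |f m (X (m+1) m x ω) (v m (X (m+1) m x ω))| ∂P
            + ∫⁻ ω, ∑ l ∈ Finset.Icc 1 (m+1),
                ENNReal.ofReal (v l (X (m+1) l x ω) ^ 2) ∂P := lintegral_add_left hmeasf _
      _ = ∫⁻ ω, ENNReal.ofReal |f m (X (m+1) m x ω) (v m (X (m+1) m x ω))| ∂P
            + ∑ l ∈ Finset.Icc 1 (m+1),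
                ∫⁻ ω, ENNReal.ofReal (v l (X (m+1) l x ω) ^ 2) ∂P := by
          rw [lintegral_finset_sum _ hmeasl]
      _ < ⊤ := ENNReal.add_lt_top.mpr ⟨hfterm, ENNReal.sum_lt_top.mpr
          fun l hl => hterm l (by simp only [Finset.mem_Icc] at hl; omega)⟩
  · -- the defining equation
    rw [hvsucc m x]
    refine integral_congr_ae (Filter.Eventually.of_forall fun ω => ?_)
    show f m (φ m x (W m ω)) (v m (φ m x (W m ω)))
      = f m (X (m+1) m x ω) (v m (X (m+1) m x ω))
    rw [hY m x ω hkK]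
end

section
/- Let d,K ∈ ℕ, L ∈ ℝ, let 𝒪 ∈ ℬ(ℝ^d)\{∅} be a nonempty Borel set, let f_k : 𝒪 × ℝ → ℝ, k ∈ {0,…,K}, be Borel measurable with |f_k(x,a) − f_k(x,b)| ≤ L|a − b| for all k, x, a, b, let g : 𝒪 → ℝ be Borel measurable, let (S,𝒮) be a measurable space, let φ_k : 𝒪 × S → 𝒪 be jointly measurable, let W_k : Ω → S, k ∈ {0,…,K}, be independent random variables on a probability space (Ω,ℱ,ℙ), define X^{k,x}_l by X^{k,x}_k = x and X^{k,x}_l = φ_l(X^{k,x}_{l+1}, W_l) for l < k, assume E[|g(X^{k,x}_0)|² + Σ_{l=0}^{k−1} |f_l(X^{k,x}_l,0)|²] < ∞ for all k, x, and let v_k : 𝒪 → ℝ be Borel measurable functions satisfying v_0 = g and v_k(x) = E[f_{k−1}(X^{k,x}_{k−1}, v_{k−1}(X^{k,x}_{k−1}))] for all k ∈ {1,…,K}, x ∈ 𝒪. Then for all k,l ∈ {0,…,K} with k ≥ l and all x ∈ 𝒪 it holds that E[|v_l(X^{k,x}_l)|] + Σ_{s=l}^{k−1} E[|f_s(X^{k,x}_s,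 v_s(X^{k,x}_s)) − v_s(X^{k,x}_s)|] < ∞ and v_k(x) = E[v_l(X^{k,x}_l)] + Σ_{s=l}^{k−1} E[f_s(X^{k,x}_s, v_s(X^{k,x}_s)) − v_s(X^{k,x}_s)]. -/
open MeasureTheory ProbabilityTheory

theorem exact_solution_alternative_representation
    (d K : ℕ) (hd : 0 < d) (hK : 0 < K) (L : ℝ)
    (O : Set (Fin d → ℝ)) (hOmeas : MeasurableSet O) (hOne : O.Nonempty)
    (f : ℕ → O → ℝ → ℝ) (hf : ∀ k, k ≤ K → Measurable (fun q : O × ℝ => f k q.1 q.2))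
    (hfL : ∀ (k : ℕ) (x : O) (a b : ℝ), k ≤ K → |f k x a - f k x b| ≤ L * |a - b|)
    (g : O → ℝ) (hg : Measurable g)
    {S : Type*} [MeasurableSpace S]
    (φ : ℕ → O → S → O) (hφ : ∀ k, k ≤ K → Measurable (fun q : O × S => φ k q.1 q.2))
    {Ω : Type*} [MeasurableSpace Ω] (P : Measure Ω) [IsProbabilityMeasure P]
    (W : ℕ → Ω → S) (hWmeas : ∀ k, Measurable (W k))
    (hWindep : iIndepFun
      (fun k : Fin (K + 1) => W k) P)
    (X : ℕ → ℕ → O → Ω → O)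
    (hXk : ∀ (k : ℕ) (x : O) (ω : Ω), k ≤ K → X k k x ω = x)
    (hXl : ∀ (k l : ℕ) (x : O) (ω : Ω), l < k → k ≤ K →
      X k l x ω = φ l (X k (l + 1) x ω) (W l ω))
    (hBound : ∀ (k : ℕ) (x : O), k ≤ K →
      ∫⁻ ω, ENNReal.ofReal ((g (X k 0 x ω)) ^ 2
        + ∑ l ∈ Finset.range k, (f l (X k l x ω) 0) ^ 2) ∂P < ⊤)
    (v : ℕ → O → ℝ) (hvmeas : ∀ k, k ≤ K → Measurable (v k))
    (hv0 : ∀ x : O, v 0 x = g x)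
    (hvrec : ∀ (k : ℕ) (x : O), 1 ≤ k → k ≤ K →
      v k x = ∫ ω, f (k - 1) (X k (k - 1) x ω) (v (k - 1) (X k (k - 1) x ω)) ∂P) :
    ∀ (k l : ℕ) (x : O), l ≤ k → k ≤ K →
      (Integrable (fun ω => v l (X k l x ω)) P ∧
        ∀ s : ℕ, l ≤ s → s < k →
          Integrable (fun ω => f s (X k s x ω) (v s (X k s x ω)) - v s (X k s x ω)) P) ∧
      v k x = (∫ ω, v l (X k l x ω) ∂P)
        + ∑ s ∈ Finset.Ico l k,
            ∫ ω, (f s (X k s x ω) (v s (X k s x ω)) - v s (X k s x ω)) ∂P := by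
  have hL0 : 0 ≤ L := by
    obtain ⟨y, hy⟩ := hOne
    have h1 := hfL 0 ⟨y, hy⟩ 1 0 (Nat.zero_le K)
    have h2 : (0:ℝ) ≤ |f 0 ⟨y, hy⟩ 1 - f 0 ⟨y, hy⟩ 0| := abs_nonneg _
    simpa using h2.trans h1
  intro k l x hlk hkK
  -- factorization of X k m x through the W's with indices in [m, k)
  have fact : ∀ m, m ≤ k →
      ∃ F : ((Finset.univ.filter (fun i : Fin (K+1) => m ≤ (i:ℕ) ∧ (i:ℕ) < k)) → S) → O,
        Measurable F ∧ ∀ ω, X k m x ω = F (fun i => W (i : Fin (K+1)) ω) := by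
    have key : ∀ n m, m + n = k →
        ∃ F : ((Finset.univ.filter (fun i : Fin (K+1) => m ≤ (i:ℕ) ∧ (i:ℕ) < k)) → S) → O,
          Measurable F ∧ ∀ ω, X k m x ω = F (fun i => W (i : Fin (K+1)) ω) := by
      intro n
      induction n with
      | zero =>
        intro m hm
        have hmk : m = k := by omega
        subst hmk
        exact ⟨fun _ => x, measurable_const, fun ω => hXk _ x ω hkK⟩
      | succ n ih =>
        intro m hm
        have hmk : m < k := by omega
        obtain ⟨F', hF'meas, hF'⟩ := ih (m+1) (by omega)
        have hmem : (⟨m, by omega⟩ : Fin (K+1)) ∈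
            Finset.univ.filter (fun i : Fin (K+1) => m ≤ (i:ℕ) ∧ (i:ℕ) < k) := by
          simp only [Finset.mem_filter, Finset.mem_univ, true_and]; omega
        have hsub : ∀ j : (Finset.univ.filter (fun i : Fin (K+1) => m+1 ≤ (i:ℕ) ∧ (i:ℕ) < k)),
            (j : Fin (K+1)) ∈ Finset.univ.filter (fun i : Fin (K+1) => m ≤ (i:ℕ) ∧ (i:ℕ) < k) := by
          intro j
          have := j.2
          simp only [Finset.mem_filter, Finset.mem_univ, true_and] at this ⊢
          omega
        refine ⟨fun w => φ m (F' (fun j => w ⟨j, hsub j⟩)) (w ⟨⟨m, by omega⟩, hmem⟩), ?_, ?_⟩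
        · exact (hφ m (by omega)).comp
            ((hF'meas.comp (measurable_pi_lambda _ fun j => measurable_pi_apply _)).prodMk
              (measurable_pi_apply _))
        · intro ω
          rw [hXl k m x ω hmk hkK, hF' ω]
    intro m hm
    exact key (k - m) m (by omega)
  -- measurability of X k m x
  have hXmeas : ∀ m, m ≤ k → Measurable (X k m x) := by
    intro m hm
    obtain ⟨F, hFmeas, hF⟩ := fact m hm
    have : X k m x = fun ω => F (fun i => W (i : Fin (K+1)) ω) := funext hF
    rw [this]
    exact hFmeas.comp (measurable_pi_lambda _ fun i => hWmeas _)
  -- independence of X k (s+1) x and W s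
  have hindep : ∀ s, s < k → IndepFun (X k (s+1) x) (W s) P := by
    intro s hs
    obtain ⟨F, hFmeas, hF⟩ := fact (s+1) (by omega)
    have hsK1 : s < K + 1 := by omega
    have hdisj : Disjoint ({(⟨s, hsK1⟩ : Fin (K+1))} : Finset (Fin (K+1)))
        (Finset.univ.filter (fun i : Fin (K+1) => s+1 ≤ (i:ℕ) ∧ (i:ℕ) < k)) := by
      simp only [Finset.disjoint_left, Finset.mem_singleton, Finset.mem_filter,
        Finset.mem_univ, true_and]
      rintro a rfl
      show ¬(s + 1 ≤ s ∧ s < k)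
      omega
    have h0 := hWindep.indepFun_finset {(⟨s, hsK1⟩ : Fin (K+1))}
      (Finset.univ.filter (fun i : Fin (K+1) => s+1 ≤ (i:ℕ) ∧ (i:ℕ) < k)) hdisj
      (fun i => hWmeas i)
    have h1 := (h0.comp (measurable_pi_apply
        (⟨⟨s, hsK1⟩, Finset.mem_singleton_self _⟩ :
          ({(⟨s, hsK1⟩ : Fin (K+1))} : Finset (Fin (K+1))))) hFmeas).symm
    have heq : (fun a => F ((fun a (i : (Finset.univ.filter
        (fun i : Fin (K+1) => s+1 ≤ (i:ℕ) ∧ (i:ℕ) < k))) => W (i : Fin (K+1)) a) a))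
        = X k (s+1) x := by
      funext ω
      exact (hF ω).symm
    rw [show (X k (s+1) x) = _ from heq.symm]
    exact h1
  -- the kernel-like functions
  set h : ℕ → O × S → ℝ := fun s q => f s (φ s q.1 q.2) (v s (φ s q.1 q.2)) with hh_def
  have hh : ∀ s, s < k → Measurable (h s) := by
    intro s hs
    have hsK : s ≤ K := by omega
    have m1 : Measurable (fun q : O × S => φ s q.1 q.2) := hφ s hsK
    exact (hf s hsK).comp (m1.prodMk ((hvmeas s hsK).comp m1))
  -- pointwise identity
  have hpt : ∀ s, s < k → ∀ ω, f s (X k s x ω) (v s (X k s x ω)) = h s (X k (s+1) x ω, W s ω) := by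
    intro s hs ω
    simp only [hh_def]
    rw [hXl k s x ω hs hkK]
  -- v (s+1) as an integral of h s
  have hvs : ∀ s, s < k → ∀ y : O, v (s+1) y = ∫ ω, h s (y, W s ω) ∂P := by
    intro s hs y
    have h1 := hvrec (s+1) y (by omega) (by omega)
    simp only [Nat.add_sub_cancel] at h1
    rw [h1]
    refine integral_congr_ae (Filter.Eventually.of_forall fun ω => ?_)
    show f s (X (s+1) s y ω) (v s (X (s+1) s y ω)) = h s (y, W s ω)
    rw [hXl (s+1) s y ω (by omega) (by omega), hXk (s+1) y ω (by omega)]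
  -- the joint law is the product law
  have hmap : ∀ s, s < k → P.map (fun ω => (X k (s+1) x ω, W s ω))
      = (P.map (X k (s+1) x)).prod (P.map (W s)) := by
    intro s hs
    exact (indepFun_iff_map_prod_eq_prod_map_map
      (hXmeas (s+1) (by omega)).aemeasurable (hWmeas s).aemeasurable).1 (hindep s hs)
  haveI hprobY : ∀ m, m ≤ k → IsProbabilityMeasure (P.map (X k m x)) := fun m hm =>
    Measure.isProbabilityMeasure_map (hXmeas m hm).aemeasurable
  haveI hprobW : ∀ s, IsProbabilityMeasure (P.map (W s)) := fun s =>
    Measure.isProbabilityMeasure_map (hWmeas s).aemeasurable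
  -- integrability of f s (X k s x ·) 0 and g (X k 0 x ·)
  have habs_sq : ∀ a : ℝ, |a| ≤ 1 + a ^ 2 := by
    intro a
    nlinarith [abs_nonneg a, sq_abs a, sq_nonneg (|a| - 1)]
  have hfin_of_sq : ∀ (u : Ω → ℝ), Measurable u →
      (∫⁻ ω, ENNReal.ofReal ((u ω) ^ 2) ∂P < ⊤) → Integrable u P := by
    intro u humeas hufin
    refine ⟨humeas.aestronglyMeasurable, ?_⟩
    rw [hasFiniteIntegral_def]
    calc ∫⁻ ω, (‖u ω‖₊ : ENNReal) ∂P
        ≤ ∫⁻ ω, 1 + ENNReal.ofReal ((u ω) ^ 2) ∂P := by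
          refine lintegral_mono fun ω => ?_
          rw [← ENNReal.ofReal_one, ← ENNReal.ofReal_add zero_le_one (sq_nonneg _)]
          rw [show ((‖u ω‖₊ : ENNReal)) = ENNReal.ofReal |u ω| by
            rw [← enorm_eq_nnnorm, Real.enorm_eq_ofReal_abs]]
          exact ENNReal.ofReal_le_ofReal (habs_sq _)
      _ = 1 + ∫⁻ ω, ENNReal.ofReal ((u ω) ^ 2) ∂P := by
          rw [lintegral_add_left measurable_const]
          simp
      _ < ⊤ := by
          exact ENNReal.add_lt_top.2 ⟨ENNReal.one_lt_top, hufin⟩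
  have hIntG : Integrable (fun ω => g (X k 0 x ω)) P := by
    refine hfin_of_sq _ (hg.comp (hXmeas 0 (by omega))) ?_
    refine lt_of_le_of_lt (lintegral_mono fun ω => ENNReal.ofReal_le_ofReal ?_) (hBound k x hkK)
    have : (0:ℝ) ≤ ∑ l ∈ Finset.range k, (f l (X k l x ω) 0) ^ 2 :=
      Finset.sum_nonneg fun _ _ => sq_nonneg _
    linarith
  have hInt0 : ∀ s, s < k → Integrable (fun ω => f s (X k s x ω) 0) P := by
    intro s hs
    have hsK : s ≤ K := by omega
    refine hfin_of_sq _ ((hf s hsK).comp ((hXmeas s (by omega)).prodMk measurable_const)) ?_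
    refine lt_of_le_of_lt (lintegral_mono fun ω => ENNReal.ofReal_le_ofReal ?_) (hBound k x hkK)
    have h1 : (f s (X k s x ω) 0) ^ 2 ≤ ∑ l ∈ Finset.range k, (f l (X k l x ω) 0) ^ 2 :=
      Finset.single_le_sum (f := fun l => (f l (X k l x ω) 0) ^ 2)
        (fun _ _ => sq_nonneg _) (Finset.mem_range.2 hs)
    nlinarith [sq_nonneg (g (X k 0 x ω))]
  -- Lipschitz step : integrability of v s (X k s x ·) implies that of f s (X k s x ·) (v s ...)
  have lip : ∀ s, s < k → Integrable (fun ω => v s (X k s x ω)) P →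
      Integrable (fun ω => f s (X k s x ω) (v s (X k s x ω))) P := by
    intro s hs hA
    have hsK : s ≤ K := by omega
    have hmeas : Measurable (fun ω => f s (X k s x ω) (v s (X k s x ω))) :=
      (hf s hsK).comp ((hXmeas s (by omega)).prodMk
        ((hvmeas s hsK).comp (hXmeas s (by omega))))
    refine Integrable.mono' ((hInt0 s hs).abs.add (hA.abs.const_mul L))
      hmeas.aestronglyMeasurable ?_
    refine Filter.Eventually.of_forall fun ω => ?_
    have h1 := hfL s (X k s x ω) (v s (X k s x ω)) 0 hsK
    rw [Real.norm_eq_abs]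
    calc |f s (X k s x ω) (v s (X k s x ω))|
        ≤ |f s (X k s x ω) (v s (X k s x ω)) - f s (X k s x ω) 0| + |f s (X k s x ω) 0| := by
          have h2 := abs_add_le (f s (X k s x ω) (v s (X k s x ω)) - f s (X k s x ω) 0)
            (f s (X k s x ω) 0)
          simpa using h2
      _ ≤ L * |v s (X k s x ω)| + |f s (X k s x ω) 0| := by
          have := h1
          simp only [sub_zero] at this
          linarith
      _ = |f s (X k s x ω) 0| + L * |v s (X k s x ω)| := by ring
  -- main integrability chain
  have chain : ∀ s, s ≤ k → Integrable (fun ω => v s (X k s x ω)) P := by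
    intro s
    induction s with
    | zero =>
      intro _
      have : (fun ω => v 0 (X k 0 x ω)) = fun ω => g (X k 0 x ω) := funext fun ω => hv0 _
      rw [this]
      exact hIntG
    | succ s ih =>
      intro hsk
      have hs : s < k := by omega
      have hB := lip s hs (ih (by omega))
      have hsK : s ≤ K := by omega
      refine ⟨((hvmeas (s+1) (by omega)).comp (hXmeas (s+1) hsk)).aestronglyMeasurable, ?_⟩
      rw [hasFiniteIntegral_def]
      calc ∫⁻ ω, (‖v (s+1) (X k (s+1) x ω)‖₊ : ENNReal) ∂P
          = ∫⁻ y, (‖v (s+1) y‖₊ : ENNReal) ∂(P.map (X k (s+1) x)) := by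
            rw [lintegral_map (hvmeas (s+1) (by omega)).nnnorm.coe_nnreal_ennreal (hXmeas (s+1) hsk)]
        _ ≤ ∫⁻ y, ∫⁻ w, (‖h s (y, w)‖₊ : ENNReal) ∂(P.map (W s)) ∂(P.map (X k (s+1) x)) := by
            refine lintegral_mono fun y => ?_
            rw [hvs s hs y]
            calc (‖∫ ω, h s (y, W s ω) ∂P‖₊ : ENNReal)
                ≤ ∫⁻ ω, (‖h s (y, W s ω)‖₊ : ENNReal) ∂P :=
                  enorm_integral_le_lintegral_enorm _
              _ = ∫⁻ w, (‖h s (y, w)‖₊ : ENNReal) ∂(P.map (W s)) := by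
                  have hmy : Measurable (fun w : S => (‖h s (y, w)‖₊ : ENNReal)) :=
                    ((hh s hs).comp measurable_prodMk_left).nnnorm.coe_nnreal_ennreal
                  rw [lintegral_map hmy (hWmeas s)]
        _ = ∫⁻ q, (‖h s q‖₊ : ENNReal) ∂((P.map (X k (s+1) x)).prod (P.map (W s))) := by
            rw [lintegral_prod _ ((hh s hs).nnnorm.coe_nnreal_ennreal).aemeasurable]
        _ = ∫⁻ q, (‖h s q‖₊ : ENNReal) ∂(P.map (fun ω => (X k (s+1) x ω, W s ω))) := by
            rw [hmap s hs]
        _ = ∫⁻ ω, (‖h s (X k (s+1) x ω, W s ω)‖₊ : ENNReal) ∂P := by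
            rw [lintegral_map (hh s hs).nnnorm.coe_nnreal_ennreal ((hXmeas (s+1) hsk).prodMk (hWmeas s))]
        _ = ∫⁻ ω, (‖f s (X k s x ω) (v s (X k s x ω))‖₊ : ENNReal) ∂P := by
            refine lintegral_congr fun ω => ?_
            rw [hpt s hs ω]
        _ < ⊤ := hB.hasFiniteIntegral
  -- key one-step identity
  have key : ∀ s, s < k →
      ∫ ω, v (s+1) (X k (s+1) x ω) ∂P = ∫ ω, f s (X k s x ω) (v s (X k s x ω)) ∂P := by
    intro s hs
    have hsk : s + 1 ≤ k := hs
    have hB := lip s hs (chain s (by omega))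
    have hpair : Measurable (fun ω => (X k (s+1) x ω, W s ω)) :=
      (hXmeas (s+1) hsk).prodMk (hWmeas s)
    have hint_prod : Integrable (h s) ((P.map (X k (s+1) x)).prod (P.map (W s))) := by
      rw [← hmap s hs]
      rw [integrable_map_measure (hh s hs).aestronglyMeasurable hpair.aemeasurable]
      have : (h s) ∘ (fun ω => (X k (s+1) x ω, W s ω))
          = fun ω => f s (X k s x ω) (v s (X k s x ω)) := by
        funext ω
        exact (hpt s hs ω).symm
      rw [this]
      exact hB
    haveI := hprobY (s+1) hsk
    haveI := hprobW s
    calc ∫ ω, v (s+1) (X k (s+1) x ω) ∂P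
        = ∫ y, v (s+1) y ∂(P.map (X k (s+1) x)) :=
          (integral_map (hXmeas (s+1) hsk).aemeasurable
            (hvmeas (s+1) (by omega)).aestronglyMeasurable).symm
      _ = ∫ y, (∫ w, h s (y, w) ∂(P.map (W s))) ∂(P.map (X k (s+1) x)) := by
          refine integral_congr_ae (Filter.Eventually.of_forall fun y => ?_)
          show v (s+1) y = ∫ w, h s (y, w) ∂(P.map (W s))
          have hmy : AEStronglyMeasurable (fun w : S => h s (y, w)) (P.map (W s)) :=
            ((hh s hs).comp measurable_prodMk_left).aestronglyMeasurable
          rw [hvs s hs y, integral_map (hWmeas s).aemeasurable hmy]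
      _ = ∫ q, h s q ∂((P.map (X k (s+1) x)).prod (P.map (W s))) :=
          (integral_prod _ hint_prod).symm
      _ = ∫ q, h s q ∂(P.map (fun ω => (X k (s+1) x ω, W s ω))) := by rw [hmap s hs]
      _ = ∫ ω, h s (X k (s+1) x ω, W s ω) ∂P :=
          integral_map hpair.aemeasurable (hh s hs).aestronglyMeasurable
      _ = ∫ ω, f s (X k s x ω) (v s (X k s x ω)) ∂P := by
          refine integral_congr_ae (Filter.Eventually.of_forall fun ω => ?_)
          exact (hpt s hs ω).symm
  -- final downward induction
  have main : ∀ n m, m + n = k →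
      (Integrable (fun ω => v m (X k m x ω)) P ∧
        ∀ s : ℕ, m ≤ s → s < k →
          Integrable (fun ω => f s (X k s x ω) (v s (X k s x ω)) - v s (X k s x ω)) P) ∧
      v k x = (∫ ω, v m (X k m x ω) ∂P)
        + ∑ s ∈ Finset.Ico m k,
            ∫ ω, (f s (X k s x ω) (v s (X k s x ω)) - v s (X k s x ω)) ∂P := by
    intro n
    induction n with
    | zero =>
      intro m hm
      have hmk : m = k := by omega
      subst hmk
      constructor
      · constructor
        · exact chain m le_rfl
        · intro s hs1 hs2
          omega
      · rw [Finset.Ico_self, Finset.sum_empty, add_zero]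
        have : (fun ω => v m (X m m x ω)) = fun _ => v m x := funext fun ω => by
          rw [hXk m x ω hkK]
        rw [this, integral_const]
        simp
    | succ n ih =>
      intro m hm
      have hmk : m < k := by omega
      obtain ⟨⟨ihA, ihB⟩, ihEq⟩ := ih (m+1) (by omega)
      have hAm := chain m (by omega)
      have hBm := lip m hmk hAm
      constructor
      · constructor
        · exact hAm
        · intro s hs1 hs2
          rcases Nat.eq_or_lt_of_le hs1 with hsm | hsm
          · subst hsm
            exact hBm.sub hAm
          · exact ihB s hsm hs2
      · rw [ihEq, Finset.sum_eq_sum_Ico_succ_bot hmk]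
        rw [key m hmk, integral_sub hBm hAm]
        ring
  have := main (k - l) l (by omega)
  exact this
end

section
/- Let d,K ∈ ℕ, L_0,…,L_K ∈ ℝ, let 𝒪 ∈ ℬ(ℝ^d)\{∅} be a nonempty Borel set, let f_k : 𝒪 × ℝ → ℝ, k ∈ {0,…,K}, be Borel measurable with |(f_k(x,a) − a) − (f_k(x,b) − b)| ≤ L_k|a − b| for all k, x, a, b, let g : 𝒪 → ℝ be Borel measurable, let (S,𝒮) be a measurable space, let φ_k : 𝒪 × S → 𝒪 be jointly measurable, let W_k : Ω → S, k ∈ {0,…,K}, be independent random variables on a probability space (Ω,ℱ,ℙ), define X^{k,x}_l by X^{k,x}_k = x and X^{k,x}_l = φ_l(X^{k,x}_{l+1}, W_l) for l < k, assume E[|g(X^{k,x}_0)|² + Σ_{l=0}^{k−1} |f_l(X^{k,x}_l,0)|²] < ∞ for all k, x, and let v_0,…,v_K : 𝒪 → ℝ be Borel measurable functions satisfying v_0 = g and v_k(x) = E[f_{k−1}(X^{k,x}_{k−1}, v_{k−1}(X^{k,x}_{k−1}))] for all k ∈ {1,…,K}, x ∈ 𝒪. Then for all k ∈ {0,…,K}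 and x ∈ 𝒪 it holds that (E[|v_k(X^{K,x}_k)|²])^{1/2} ≤ exp(Σ_{l=0}^{K−1} L_l)·[(E[|g(X^{K,x}_0)|²])^{1/2} + Σ_{l=0}^{K−1} (E[|f_l(X^{K,x}_l,0)|²])^{1/2}]. -/
open MeasureTheory ProbabilityTheory

lemma aux_ofReal_sq (t : ℝ) :
    ENNReal.ofReal (t ^ 2) = (‖t‖₊ : ENNReal) ^ (2 : ℝ) := by
  rw [show ((2:ℝ)) = ((2:ℕ):ℝ) by norm_num, ENNReal.rpow_natCast,
    (show ∀ t : ℝ, ((‖t‖₊ : ENNReal)) = ENNReal.ofReal |t| from fun t => Real.enorm_eq_ofReal_abs t), ← ENNReal.ofReal_pow (abs_nonneg t), sq_abs]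

lemma aux_cauchy {Ω : Type*} [MeasurableSpace Ω] (P : Measure Ω)
    [IsProbabilityMeasure P] {u : Ω → ENNReal} (hu : AEMeasurable u P) :
    (∫⁻ ω, u ω ∂P) ^ (2 : ℝ) ≤ ∫⁻ ω, (u ω) ^ (2 : ℝ) ∂P := by
  have hpq : (2 : ℝ).HolderConjugate 2 := ⟨by norm_num, by norm_num, by norm_num⟩
  have h := ENNReal.lintegral_mul_le_Lp_mul_Lq P hpq hu
    (aemeasurable_const (b := (1 : ENNReal)))
  simp only [Pi.mul_apply, mul_one, ENNReal.one_rpow, lintegral_const, measure_univ,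
    ENNReal.one_rpow, one_mul] at h
  calc (∫⁻ ω, u ω ∂P) ^ (2 : ℝ)
      ≤ ((∫⁻ ω, u ω ^ (2 : ℝ) ∂P) ^ ((1 : ℝ) / 2)) ^ (2 : ℝ) :=
        ENNReal.rpow_le_rpow h (by norm_num)
    _ = ∫⁻ ω, u ω ^ (2 : ℝ) ∂P := by
        rw [← ENNReal.rpow_mul]; norm_num

lemma aux_jensen {Ω : Type*} [MeasurableSpace Ω] (P : Measure Ω)
    [IsProbabilityMeasure P] {h : Ω → ℝ} (hm : AEMeasurable h P) :
    ENNReal.ofReal ((∫ ω, h ω ∂P) ^ 2) ≤ ∫⁻ ω, ENNReal.ofReal ((h ω) ^ 2) ∂P := by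
  rw [aux_ofReal_sq]
  calc ((‖∫ ω, h ω ∂P‖₊ : ENNReal)) ^ (2 : ℝ)
      ≤ (∫⁻ ω, (‖h ω‖₊ : ENNReal) ∂P) ^ (2 : ℝ) :=
        ENNReal.rpow_le_rpow (enorm_integral_le_lintegral_enorm _) (by norm_num)
    _ ≤ ∫⁻ ω, (‖h ω‖₊ : ENNReal) ^ (2 : ℝ) ∂P := aux_cauchy P hm.enorm
    _ = ∫⁻ ω, ENNReal.ofReal ((h ω) ^ 2) ∂P := by
        refine lintegral_congr fun ω => ?_
        rw [aux_ofReal_sq]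

lemma aux_indep_lintegral {Ω : Type*} [MeasurableSpace Ω] (P : Measure Ω)
    [IsProbabilityMeasure P] {β γ : Type*} [MeasurableSpace β] [MeasurableSpace γ]
    {Y : Ω → β} {Z : Ω → γ} (hY : Measurable Y) (hZ : Measurable Z)
    (hindep : IndepFun Y Z P) {H : β × γ → ENNReal} (hH : Measurable H) :
    ∫⁻ ω, H (Y ω, Z ω) ∂P = ∫⁻ ω, ∫⁻ ω', H (Y ω, Z ω') ∂P ∂P := by
  have hmap := (indepFun_iff_map_prod_eq_prod_map_map hY.aemeasurable hZ.aemeasurable).mp hindep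
  haveI : IsProbabilityMeasure (P.map Y) := Measure.isProbabilityMeasure_map hY.aemeasurable
  haveI : IsProbabilityMeasure (P.map Z) := Measure.isProbabilityMeasure_map hZ.aemeasurable
  calc ∫⁻ ω, H (Y ω, Z ω) ∂P
      = ∫⁻ p, H p ∂(P.map fun ω => (Y ω, Z ω)) := (lintegral_map hH (hY.prodMk hZ)).symm
    _ = ∫⁻ p, H p ∂((P.map Y).prod (P.map Z)) := by rw [hmap]
    _ = ∫⁻ y, ∫⁻ z, H (y, z) ∂(P.map Z) ∂(P.map Y) := lintegral_prod _ hH.aemeasurable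
    _ = ∫⁻ ω, ∫⁻ z, H (Y ω, z) ∂(P.map Z) ∂P := lintegral_map hH.lintegral_prod_right' hY
    _ = ∫⁻ ω, ∫⁻ ω', H (Y ω, Z ω') ∂P ∂P := by
        refine lintegral_congr fun ω => ?_
        exact lintegral_map (hH.comp measurable_prodMk_left) hZ

theorem a_priori_estimates
    (d K : ℕ) (hd : 0 < d) (hK : 0 < K) (L : ℕ → ℝ)
    (O : Set (Fin d → ℝ)) (hOmeas : MeasurableSet O) (hOne : O.Nonempty)
    (f : ℕ → O → ℝ → ℝ) (hf : ∀ k, k ≤ K → Measurable (fun q : O × ℝ => f k q.1 q.2))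
    (hfL : ∀ (k : ℕ) (x : O) (a b : ℝ), k ≤ K →
      |(f k x a - a) - (f k x b - b)| ≤ L k * |a - b|)
    (g : O → ℝ) (hg : Measurable g)
    {S : Type*} [MeasurableSpace S]
    (φ : ℕ → O → S → O) (hφ : ∀ k, k ≤ K → Measurable (fun q : O × S => φ k q.1 q.2))
    {Ω : Type*} [MeasurableSpace Ω] (P : Measure Ω) [IsProbabilityMeasure P]
    (W : ℕ → Ω → S) (hWmeas : ∀ k, Measurable (W k))
    (hWindep : iIndepFun
      (fun k : Fin (K + 1) => W k) P)
    (X : ℕ → ℕ → O → Ω → O)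
    (hXk : ∀ (k : ℕ) (x : O) (ω : Ω), k ≤ K → X k k x ω = x)
    (hXl : ∀ (k l : ℕ) (x : O) (ω : Ω), l < k → k ≤ K →
      X k l x ω = φ l (X k (l + 1) x ω) (W l ω))
    (hBound : ∀ (k : ℕ) (x : O), k ≤ K →
      ∫⁻ ω, ENNReal.ofReal ((g (X k 0 x ω)) ^ 2
        + ∑ l ∈ Finset.range k, (f l (X k l x ω) 0) ^ 2) ∂P < ⊤)
    (v : ℕ → O → ℝ) (hvmeas : ∀ k, k ≤ K → Measurable (v k))
    (hv0 : ∀ x : O, v 0 x = g x)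
    (hvrec : ∀ (k : ℕ) (x : O), 1 ≤ k → k ≤ K →
      v k x = ∫ ω, f (k - 1) (X k (k - 1) x ω) (v (k - 1) (X k (k - 1) x ω)) ∂P) :
    ∀ (k : ℕ) (x : O), k ≤ K →
      (∫⁻ ω, ENNReal.ofReal ((v k (X K k x ω)) ^ 2) ∂P) ^ ((1 : ℝ) / 2)
        ≤ ENNReal.ofReal (Real.exp (∑ l ∈ Finset.range K, L l)) *
          ((∫⁻ ω, ENNReal.ofReal ((g (X K 0 x ω)) ^ 2) ∂P) ^ ((1 : ℝ) / 2)
            + ∑ l ∈ Finset.range K,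
                (∫⁻ ω, ENNReal.ofReal ((f l (X K l x ω) 0) ^ 2) ∂P) ^ ((1 : ℝ) / 2)) := by
  intro k x hk
  -- L is nonnegative
  have hL : ∀ l, l ≤ K → 0 ≤ L l := by
    intro l hl
    have h := hfL l x 1 0 hl
    rw [show |(1 : ℝ) - 0| = 1 by norm_num, mul_one] at h
    exact (abs_nonneg _).trans h
  -- measurability of the chain
  have measX : ∀ l, l ≤ K → Measurable fun ω => X K l x ω := by
    have H : ∀ n l, l ≤ K → K - l ≤ n → Measurable fun ω => X K l x ω := by
      intro n
      induction n with
      | zero =>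
        intro l hl hn
        have hlK : l = K := by omega
        have he : (fun ω => X K l x ω) = fun _ => x := by
          rw [hlK]; exact funext fun ω => hXk K x ω le_rfl
        rw [he]; exact measurable_const
      | succ n ih =>
        intro l hl hn
        rcases eq_or_lt_of_le hl with h | h
        · have he : (fun ω => X K l x ω) = fun _ => x := by
            rw [h]; exact funext fun ω => hXk K x ω le_rfl
          rw [he]; exact measurable_const
        · have he : (fun ω => X K l x ω)
              = fun ω => φ l (X K (l + 1) x ω) (W l ω) :=
            funext fun ω => hXl K l x ω h le_rfl
          rw [he]
          exact (hφ l h.le).comp ((ih (l + 1) h (by omega)).prodMk (hWmeas l))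
    exact fun l hl => H (K - l) l hl le_rfl
  -- independence of X K m x and W (m-1)
  have hindep : ∀ m, 1 ≤ m → m ≤ K →
      IndepFun (fun ω => X K m x ω) (W (m - 1)) P := by
    intro m hm1 hmK
    set s : Set (Fin (K + 1)) := {i | m ≤ (i : ℕ)} with hs
    set 𝒢 : MeasurableSpace Ω :=
      ⨆ i ∈ s, MeasurableSpace.comap (W i) inferInstance with h𝒢
    have hXG : ∀ n l, m ≤ l → l ≤ K → K - l ≤ n →
        Measurable[𝒢] fun ω => X K l x ω := by
      intro n
      induction n with
      | zero =>
        intro l hml hlK hn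
        have hlK' : l = K := by omega
        have he : (fun ω => X K l x ω) = fun _ => x := by
          rw [hlK']; exact funext fun ω => hXk K x ω le_rfl
        rw [he]; exact measurable_const
      | succ n ih =>
        intro l hml hlK hn
        rcases eq_or_lt_of_le hlK with h | h
        · have he : (fun ω => X K l x ω) = fun _ => x := by
            rw [h]; exact funext fun ω => hXk K x ω le_rfl
          rw [he]; exact measurable_const
        · have he : (fun ω => X K l x ω)
              = fun ω => φ l (X K (l + 1) x ω) (W l ω) :=
            funext fun ω => hXl K l x ω h le_rfl
          rw [he]
          have hWl : Measurable[𝒢] (W l) := by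
            have hle : MeasurableSpace.comap (W (⟨l, by omega⟩ : Fin (K + 1))) inferInstance
                ≤ 𝒢 := by
              refine le_iSup₂ (f := fun (i : Fin (K + 1)) (_ : i ∈ s) =>
                MeasurableSpace.comap (W i) inferInstance) (⟨l, by omega⟩ : Fin (K + 1)) ?_
              simpa [hs] using hml
            exact (Measurable.of_comap_le le_rfl).mono hle le_rfl
          exact (hφ l h.le).comp ((ih (l + 1) (by omega) h (by omega)).prodMk hWl)
    have hXm : Measurable[𝒢] fun ω => X K m x ω := hXG (K - m) m le_rfl hmK le_rfl
    have hIndep𝒢 : Indep 𝒢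
        (MeasurableSpace.comap (W (⟨m - 1, by omega⟩ : Fin (K + 1))) inferInstance) P := by
      have h1 : iIndep (fun i : Fin (K + 1) =>
          MeasurableSpace.comap (W i) inferInstance) P := hWindep.iIndep
      have hdisj : Disjoint s ({(⟨m - 1, by omega⟩ : Fin (K + 1))} : Set (Fin (K + 1))) := by
        rw [Set.disjoint_singleton_right]
        simp only [hs, Set.mem_setOf_eq]
        omega
      have h2 := indep_iSup_of_disjoint (fun i : Fin (K + 1) => (hWmeas i).comap_le) h1 hdisj
      simpa using h2
    have hfin : Indep (MeasurableSpace.comap (fun ω => X K m x ω) inferInstance)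
        (MeasurableSpace.comap (W (m - 1)) inferInstance) P := by
      have : W (⟨m - 1, by omega⟩ : Fin (K + 1)) = W (m - 1) := rfl
      rw [← this]
      exact indep_of_indep_of_le_left hIndep𝒢 hXm.comap_le
    exact hfin
  -- one-step estimate
  have key : ∀ m, 1 ≤ m → m ≤ K →
      (∫⁻ ω, ENNReal.ofReal ((v m (X K m x ω)) ^ 2) ∂P) ^ ((1 : ℝ) / 2)
        ≤ ENNReal.ofReal (1 + L (m - 1)) *
            (∫⁻ ω, ENNReal.ofReal ((v (m - 1) (X K (m - 1) x ω)) ^ 2) ∂P) ^ ((1 : ℝ) / 2)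
          + (∫⁻ ω, ENNReal.ofReal ((f (m - 1) (X K (m - 1) x ω) 0) ^ 2) ∂P) ^ ((1 : ℝ) / 2) := by
    intro m hm1 hmK
    set j := m - 1 with hj
    have hjm : j + 1 = m := by omega
    have hjK : j < K := by omega
    set Gf : O × S → ℝ := fun q => f j (φ j q.1 q.2) (v j (φ j q.1 q.2)) with hGf
    have hφj : Measurable (fun q : O × S => φ j q.1 q.2) := hφ j (by omega)
    have hGfmeas : Measurable Gf :=
      (hf j (by omega)).comp (hφj.prodMk ((hvmeas j (by omega)).comp hφj))
    have hvm : ∀ y : O, v m y = ∫ ω', Gf (y, W j ω') ∂P := by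
      intro y
      rw [hvrec m y hm1 hmK]
      simp only [← hj]
      refine integral_congr_ae (Filter.Eventually.of_forall fun ω => ?_)
      have h1 : X m j y ω = φ j (X m (j + 1) y ω) (W j ω) := hXl m j y ω (by omega) hmK
      show f j (X m j y ω) (v j (X m j y ω)) = Gf (y, W j ω)
      rw [h1, hjm, hXk m y ω hmK]
    have hXKj : ∀ ω, X K j x ω = φ j (X K m x ω) (W j ω) := by
      intro ω
      have h1 := hXl K j x ω (by omega) le_rfl
      rwa [hjm] at h1
    -- step 1: Jensen + independence
    have step1 : ∫⁻ ω, ENNReal.ofReal ((v m (X K m x ω)) ^ 2) ∂P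
        ≤ ∫⁻ ω, ENNReal.ofReal ((f j (X K j x ω) (v j (X K j x ω))) ^ 2) ∂P := by
      have hH : Measurable fun q : O × S => ENNReal.ofReal ((Gf q) ^ 2) :=
        ENNReal.measurable_ofReal.comp (hGfmeas.pow_const 2)
      calc ∫⁻ ω, ENNReal.ofReal ((v m (X K m x ω)) ^ 2) ∂P
          ≤ ∫⁻ ω, ∫⁻ ω', ENNReal.ofReal ((Gf (X K m x ω, W j ω')) ^ 2) ∂P ∂P := by
            refine lintegral_mono fun ω => ?_
            rw [hvm (X K m x ω)]
            exact aux_jensen P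
              ((hGfmeas.comp (measurable_const.prodMk (hWmeas j))).aemeasurable)
        _ = ∫⁻ ω, ENNReal.ofReal ((Gf (X K m x ω, W j ω)) ^ 2) ∂P := by
            refine (aux_indep_lintegral P (measX m hmK) (hWmeas j) ?_ hH).symm
            have := hindep m hm1 hmK
            rwa [← hj] at this
        _ = ∫⁻ ω, ENNReal.ofReal ((f j (X K j x ω) (v j (X K j x ω))) ^ 2) ∂P := by
            refine lintegral_congr fun ω => ?_
            rw [hGf]
            simp only []
            rw [← hXKj ω]
    -- step 2: Minkowski
    set a : Ω → ENNReal := fun ω => (‖v j (X K j x ω)‖₊ : ENNReal) with ha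
    set b : Ω → ENNReal := fun ω => (‖f j (X K j x ω) 0‖₊ : ENNReal) with hb
    set c : ENNReal := ENNReal.ofReal (1 + L j) with hc
    have h1L : (0 : ℝ) ≤ 1 + L j := by have := hL j (by omega); linarith
    have hameas : AEMeasurable a P :=
      (((hvmeas j (by omega)).comp (measX j (by omega))).enorm).aemeasurable
    have hbmeas : AEMeasurable b P :=
      ((((hf j (by omega)).comp
        ((measX j (by omega)).prodMk measurable_const)).enorm)).aemeasurable
    have hpt : ∀ ω, (‖f j (X K j x ω) (v j (X K j x ω))‖₊ : ENNReal) ≤ c * a ω + b ω := by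
      intro ω
      have hre : |f j (X K j x ω) (v j (X K j x ω))|
          ≤ (1 + L j) * |v j (X K j x ω)| + |f j (X K j x ω) 0| := by
        set y := X K j x ω
        set t := v j y
        have h1 := hfL j y t 0 (by omega)
        calc |f j y t| = |((f j y t - t) - (f j y 0 - 0)) + (t + f j y 0)| := by
              congr 1; ring
          _ ≤ |(f j y t - t) - (f j y 0 - 0)| + |t + f j y 0| := abs_add_le _ _
          _ ≤ L j * |t - 0| + (|t| + |f j y 0|) := add_le_add h1 (abs_add_le _ _)
          _ = (1 + L j) * |t| + |f j y 0| := by rw [sub_zero]; ring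
      rw [(show ∀ t : ℝ, ((‖t‖₊ : ENNReal)) = ENNReal.ofReal |t| from fun t => Real.enorm_eq_ofReal_abs t), ha, hb, hc]
      simp only []
      rw [(show ∀ t : ℝ, ((‖t‖₊ : ENNReal)) = ENNReal.ofReal |t| from fun t => Real.enorm_eq_ofReal_abs t), (show ∀ t : ℝ, ((‖t‖₊ : ENNReal)) = ENNReal.ofReal |t| from fun t => Real.enorm_eq_ofReal_abs t),
        ← ENNReal.ofReal_mul h1L, ← ENNReal.ofReal_add (by positivity) (abs_nonneg _)]
      exact ENNReal.ofReal_le_ofReal hre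
    have step2 : (∫⁻ ω, ENNReal.ofReal ((f j (X K j x ω) (v j (X K j x ω))) ^ 2) ∂P) ^ ((1 : ℝ) / 2)
        ≤ c * (∫⁻ ω, ENNReal.ofReal ((v j (X K j x ω)) ^ 2) ∂P) ^ ((1 : ℝ) / 2)
          + (∫⁻ ω, ENNReal.ofReal ((f j (X K j x ω) 0) ^ 2) ∂P) ^ ((1 : ℝ) / 2) := by
      have hcne : c ≠ ⊤ := ENNReal.ofReal_ne_top
      calc (∫⁻ ω, ENNReal.ofReal ((f j (X K j x ω) (v j (X K j x ω))) ^ 2) ∂P) ^ ((1 : ℝ) / 2)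
          ≤ (∫⁻ ω, ((fun ω => c * a ω) + b) ω ^ (2 : ℝ) ∂P) ^ ((1 : ℝ) / 2) := by
            refine ENNReal.rpow_le_rpow (lintegral_mono fun ω => ?_) (by norm_num)
            rw [aux_ofReal_sq]
            exact ENNReal.rpow_le_rpow (hpt ω) (by norm_num)
        _ ≤ (∫⁻ ω, (c * a ω) ^ (2 : ℝ) ∂P) ^ ((1 : ℝ) / 2)
            + (∫⁻ ω, b ω ^ (2 : ℝ) ∂P) ^ ((1 : ℝ) / 2) :=
            ENNReal.lintegral_Lp_add_le (hameas.const_mul c) hbmeas one_le_two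
        _ = c * (∫⁻ ω, a ω ^ (2 : ℝ) ∂P) ^ ((1 : ℝ) / 2)
            + (∫⁻ ω, b ω ^ (2 : ℝ) ∂P) ^ ((1 : ℝ) / 2) := by
            congr 1
            rw [show (fun ω => (c * a ω) ^ (2 : ℝ)) = fun ω => c ^ (2 : ℝ) * a ω ^ (2 : ℝ) from
              funext fun ω => ENNReal.mul_rpow_of_nonneg _ _ (by norm_num)]
            rw [lintegral_const_mul' _ _ (by simp [hcne]),
              ENNReal.mul_rpow_of_nonneg _ _ (by norm_num : (0:ℝ) ≤ 1/2),
              ← ENNReal.rpow_mul]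
            norm_num
        _ = c * (∫⁻ ω, ENNReal.ofReal ((v j (X K j x ω)) ^ 2) ∂P) ^ ((1 : ℝ) / 2)
            + (∫⁻ ω, ENNReal.ofReal ((f j (X K j x ω) 0) ^ 2) ∂P) ^ ((1 : ℝ) / 2) := by
            have e1 : ∫⁻ ω, a ω ^ (2 : ℝ) ∂P
                = ∫⁻ ω, ENNReal.ofReal ((v j (X K j x ω)) ^ 2) ∂P :=
              lintegral_congr fun ω => (aux_ofReal_sq _).symm
            have e2 : ∫⁻ ω, b ω ^ (2 : ℝ) ∂P
                = ∫⁻ ω, ENNReal.ofReal ((f j (X K j x ω) 0) ^ 2) ∂P :=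
              lintegral_congr fun ω => (aux_ofReal_sq _).symm
            rw [e1, e2]
    exact le_trans (ENNReal.rpow_le_rpow step1 (by norm_num)) step2
  -- induction
  have main : ∀ m, m ≤ K →
      (∫⁻ ω, ENNReal.ofReal ((v m (X K m x ω)) ^ 2) ∂P) ^ ((1 : ℝ) / 2)
        ≤ ENNReal.ofReal (Real.exp (∑ l ∈ Finset.range m, L l)) *
          ((∫⁻ ω, ENNReal.ofReal ((v 0 (X K 0 x ω)) ^ 2) ∂P) ^ ((1 : ℝ) / 2)
            + ∑ l ∈ Finset.range m,
                (∫⁻ ω, ENNReal.ofReal ((f l (X K l x ω) 0) ^ 2) ∂P) ^ ((1 : ℝ) / 2)) := by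
    intro m
    induction m with
    | zero => intro _; simp
    | succ n ih =>
      intro hn
      have hih := ih (by omega)
      have hkey := key (n + 1) (by omega) hn
      simp only [Nat.add_sub_cancel] at hkey
      have hexp1 : (1 : ENNReal) ≤ ENNReal.ofReal (Real.exp (∑ l ∈ Finset.range (n+1), L l)) := by
        rw [show (1 : ENNReal) = ENNReal.ofReal 1 by simp]
        refine ENNReal.ofReal_le_ofReal ?_
        rw [← Real.exp_zero]
        refine Real.exp_le_exp.mpr ?_
        refine Finset.sum_nonneg fun l hl => hL l ?_
        have := Finset.mem_range.mp hl; omega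
      calc (∫⁻ ω, ENNReal.ofReal ((v (n+1) (X K (n+1) x ω)) ^ 2) ∂P) ^ ((1 : ℝ) / 2)
          ≤ ENNReal.ofReal (1 + L n) *
              (∫⁻ ω, ENNReal.ofReal ((v n (X K n x ω)) ^ 2) ∂P) ^ ((1 : ℝ) / 2)
            + (∫⁻ ω, ENNReal.ofReal ((f n (X K n x ω) 0) ^ 2) ∂P) ^ ((1 : ℝ) / 2) := hkey
        _ ≤ ENNReal.ofReal (Real.exp (L n)) *
              (ENNReal.ofReal (Real.exp (∑ l ∈ Finset.range n, L l)) *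
                ((∫⁻ ω, ENNReal.ofReal ((v 0 (X K 0 x ω)) ^ 2) ∂P) ^ ((1 : ℝ) / 2)
                  + ∑ l ∈ Finset.range n,
                      (∫⁻ ω, ENNReal.ofReal ((f l (X K l x ω) 0) ^ 2) ∂P) ^ ((1 : ℝ) / 2)))
            + (∫⁻ ω, ENNReal.ofReal ((f n (X K n x ω) 0) ^ 2) ∂P) ^ ((1 : ℝ) / 2) := by
            refine add_le_add (mul_le_mul' (ENNReal.ofReal_le_ofReal ?_) hih) le_rfl
            rw [add_comm]; exact Real.add_one_le_exp (L n)
        _ = ENNReal.ofReal (Real.exp (∑ l ∈ Finset.range (n+1), L l)) *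
              ((∫⁻ ω, ENNReal.ofReal ((v 0 (X K 0 x ω)) ^ 2) ∂P) ^ ((1 : ℝ) / 2)
                + ∑ l ∈ Finset.range n,
                    (∫⁻ ω, ENNReal.ofReal ((f l (X K l x ω) 0) ^ 2) ∂P) ^ ((1 : ℝ) / 2))
            + (∫⁻ ω, ENNReal.ofReal ((f n (X K n x ω) 0) ^ 2) ∂P) ^ ((1 : ℝ) / 2) := by
            rw [← mul_assoc, ← ENNReal.ofReal_mul (Real.exp_nonneg _), ← Real.exp_add,
              Finset.sum_range_succ, add_comm (L n)]
        _ ≤ ENNReal.ofReal (Real.exp (∑ l ∈ Finset.range (n+1), L l)) *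
              ((∫⁻ ω, ENNReal.ofReal ((v 0 (X K 0 x ω)) ^ 2) ∂P) ^ ((1 : ℝ) / 2)
                + ∑ l ∈ Finset.range n,
                    (∫⁻ ω, ENNReal.ofReal ((f l (X K l x ω) 0) ^ 2) ∂P) ^ ((1 : ℝ) / 2))
            + ENNReal.ofReal (Real.exp (∑ l ∈ Finset.range (n+1), L l)) *
              (∫⁻ ω, ENNReal.ofReal ((f n (X K n x ω) 0) ^ 2) ∂P) ^ ((1 : ℝ) / 2) := by
            exact add_le_add le_rfl (le_mul_of_one_le_left zero_le hexp1)
        _ = ENNReal.ofReal (Real.exp (∑ l ∈ Finset.range (n+1), L l)) *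
              ((∫⁻ ω, ENNReal.ofReal ((v 0 (X K 0 x ω)) ^ 2) ∂P) ^ ((1 : ℝ) / 2)
                + ∑ l ∈ Finset.range (n+1),
                    (∫⁻ ω, ENNReal.ofReal ((f l (X K l x ω) 0) ^ 2) ∂P) ^ ((1 : ℝ) / 2)) := by
            rw [← mul_add, add_assoc, ← Finset.sum_range_succ]
  -- conclude
  have hmain := main k hk
  simp only [hv0] at hmain
  refine hmain.trans ?_
  refine mul_le_mul' (ENNReal.ofReal_le_ofReal (Real.exp_le_exp.mpr
      (Finset.sum_le_sum_of_subset_of_nonneg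
        (Finset.range_subset_range.mpr hk)
        (fun l hl _ => hL l (by have := Finset.mem_range.mp hl; omega)))))
    (add_le_add le_rfl (Finset.sum_le_sum_of_subset (Finset.range_subset_range.mpr hk)))
end

section
/- Let K ∈ ℕ and L_0,…,L_{K−1} ∈ [0,∞) with Σ_{j=0}^{K−1} L_j > 0, and define α_k^{(q)} ∈ [0,∞) for q ∈ ℕ₀, k ∈ {0,…,K} by α_K^{(0)} = 1, α_k^{(0)} = 0 for k < K, and, for q ≥ 1 and k ∈ {0,…,K−1}, α_k^{(q)} = ([Σ_{j=k}^{K−1} L_j]^q − [Σ_{j=k+1}^{K−1} L_j]^q) / (q!·[Σ_{j=0}^{K−1} L_j]^q). Then for all k ∈ {0,…,K−1} and q ∈ ℕ₀ it holds that α_k^{(q+1)}·Σ_{j=0}^{K−1} L_j ≥ L_k·Σ_{j=k+1}^K α_j^{(q)}. -/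
open MeasureTheory ProbabilityTheory

private lemma aux_pow (q : ℕ) (x h : ℝ) (hx : 0 ≤ x) (hh : 0 ≤ h) :
    x ^ (q + 1) + ((q : ℝ) + 1) * x ^ q * h ≤ (x + h) ^ (q + 1) := by
  induction q with
  | zero => simp
  | succ n ih =>
    have h1 : (x + h) ^ (n + 2) = (x + h) * (x + h) ^ (n + 1) := by ring
    have h2 := mul_le_mul_of_nonneg_left ih (add_nonneg hx hh)
    have h3 : x ^ (n + 2) + ((n : ℝ) + 1 + 1) * x ^ (n + 1) * h ≤
        (x + h) * (x ^ (n + 1) + ((n : ℝ) + 1) * x ^ n * h) := by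
      have hexp : (x + h) * (x ^ (n + 1) + ((n : ℝ) + 1) * x ^ n * h)
          = x ^ (n + 2) + ((n : ℝ) + 1 + 1) * x ^ (n + 1) * h
            + ((n : ℝ) + 1) * (x ^ n * h * h) := by ring
      have hnn : 0 ≤ ((n : ℝ) + 1) * (x ^ n * h * h) :=
        mul_nonneg (by positivity)
          (mul_nonneg (mul_nonneg (pow_nonneg hx n) hh) hh)
      linarith
    push_cast
    calc x ^ (n + 2) + ((n : ℝ) + 1 + 1) * x ^ (n + 1) * h
        ≤ (x + h) * (x ^ (n + 1) + ((n : ℝ) + 1) * x ^ n * h) := h3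
      _ ≤ (x + h) * (x + h) ^ (n + 1) := h2
      _ = (x + h) ^ (n + 2) := by ring

theorem special_alphas (K : ℕ) (hK : 0 < K) (L : ℕ → ℝ)
    (hL : ∀ k, k < K → 0 ≤ L k) (hLpos : 0 < ∑ j ∈ Finset.range K, L j)
    (a : ℕ → ℕ → ℝ) (hanonneg : ∀ q k, k ≤ K → 0 ≤ a q k)
    (ha0K : a 0 K = 1) (ha0 : ∀ k, k < K → a 0 k = 0)
    (haK : ∀ q, 1 ≤ q → a q K = 0)
    (ha : ∀ q, 1 ≤ q → ∀ k, k < K → a q k =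
      ((∑ j ∈ Finset.Ico k K, L j) ^ q - (∑ j ∈ Finset.Ico (k + 1) K, L j) ^ q)
        / ((Nat.factorial q : ℝ) * (∑ j ∈ Finset.range K, L j) ^ q)) :
    ∀ k, k < K → ∀ q : ℕ,
      L k * ∑ j ∈ Finset.Icc (k + 1) K, a q j
        ≤ a (q + 1) k * ∑ j ∈ Finset.range K, L j := by
  intro k hk q
  set S := ∑ j ∈ Finset.range K, L j with hS
  set x := ∑ j ∈ Finset.Ico (k + 1) K, L j with hx
  have hxnn : 0 ≤ x := Finset.sum_nonneg fun j hj => hL j (Finset.mem_Ico.mp hj).2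
  have hLk : 0 ≤ L k := hL k hk
  have hTk : ∑ j ∈ Finset.Ico k K, L j = L k + x :=
    Finset.sum_eq_sum_Ico_succ_bot hk L
  -- the sum splits
  have hsplit : ∑ j ∈ Finset.Icc (k + 1) K, a q j
      = (∑ j ∈ Finset.Ico (k + 1) K, a q j) + a q K := by
    rw [← Finset.Ico_add_one_right_eq_Icc, Finset.sum_Ico_succ_top (by omega : k + 1 ≤ K)]
  have hsum : ∑ j ∈ Finset.Icc (k + 1) K, a q j
      = x ^ q / ((Nat.factorial q : ℝ) * S ^ q) := by
    rcases Nat.eq_zero_or_pos q with hq | hq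
    · subst hq
      rw [hsplit, ha0K, Finset.sum_eq_zero (fun j hj => ha0 j (Finset.mem_Ico.mp hj).2)]
      simp
    · have hq1 : 1 ≤ q := hq
      rw [hsplit, haK q hq1, add_zero]
      have hterm : ∀ j ∈ Finset.Ico (k + 1) K, a q j =
          ((∑ i ∈ Finset.Ico j K, L i) ^ q - (∑ i ∈ Finset.Ico (j + 1) K, L i) ^ q)
            / ((Nat.factorial q : ℝ) * S ^ q) := fun j hj =>
        ha q hq1 j (Finset.mem_Ico.mp hj).2
      rw [Finset.sum_congr rfl hterm, ← Finset.sum_div]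
      congr 1
      rw [Finset.sum_Ico_eq_sum_range]
      have := Finset.sum_range_sub' (fun i => (∑ j ∈ Finset.Ico (k + 1 + i) K, L j) ^ q)
        (K - (k + 1))
      simp only [← add_assoc] at this
      rw [this]
      have hKk : k + 1 + (K - (k + 1)) = K := by omega
      rw [hKk]
      simp [Finset.Ico_self, zero_pow (by omega : q ≠ 0)]
      rfl
  rw [hsum, ha (q + 1) (by omega) k hk, hTk]
  have hSpos : 0 < S := hLpos
  have hSq : (0 : ℝ) < S ^ q := pow_pos hSpos q
  have hfac : (0 : ℝ) < (Nat.factorial q : ℝ) := by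
    exact_mod_cast Nat.factorial_pos q
  have key := aux_pow q x (L k) hxnn hLk
  have hfact : ((Nat.factorial (q + 1) : ℝ)) = ((q : ℝ) + 1) * (Nat.factorial q : ℝ) := by
    rw [Nat.factorial_succ]; push_cast; ring
  rw [hfact]
  rw [← hx, div_mul_eq_mul_div, ← mul_div_assoc,
    div_le_div_iff₀ (by positivity) (by positivity)]
  have hdiff : ((q : ℝ) + 1) * x ^ q * L k ≤ (x + L k) ^ (q + 1) - x ^ (q + 1) := by
    linarith
  have hc : (0 : ℝ) ≤ (Nat.factorial q : ℝ) * S ^ q * S := by positivity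
  calc L k * x ^ q * (((q : ℝ) + 1) * (Nat.factorial q : ℝ) * S ^ (q + 1))
      = (((q : ℝ) + 1) * x ^ q * L k) * ((Nat.factorial q : ℝ) * S ^ q * S) := by ring
    _ ≤ ((x + L k) ^ (q + 1) - x ^ (q + 1)) * ((Nat.factorial q : ℝ) * S ^ q * S) :=
        mul_le_mul_of_nonneg_right hdiff hc
    _ = ((L k + x) ^ (q + 1) - x ^ (q + 1)) * S * ((Nat.factorial q : ℝ) * S ^ q) := by
        ring
end

section
/- Let M ∈ ℕ, N ∈ ℕ₀, α, β, κ ∈ [0,∞), and let e_{n,q} ∈ [0,∞), n,q ∈ ℕ₀, satisfy for all n ∈ {0,…,N} and q ∈ ℕ₀ that e_{n,q} ≤ α·√(κ^q)/√(q!·M^n) + β·Σ_{l=0}^{n−1} e_{l,q+1}/√(M^{n−1−l}). Then e_{N,0} ≤ α·exp(κM/2)·(1+β)^N / M^{N/2}. -/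
open MeasureTheory ProbabilityTheory

theorem gronwall_type_inequality (M : ℕ) (hM : 0 < M) (N : ℕ)
    (α β κ : ℝ) (hα : 0 ≤ α) (hβ : 0 ≤ β) (hκ : 0 ≤ κ)
    (e : ℕ → ℕ → ℝ) (he : ∀ n q, 0 ≤ e n q)
    (hrec : ∀ n, n ≤ N → ∀ q : ℕ, e n q ≤
      α * Real.sqrt (κ ^ q) / Real.sqrt ((Nat.factorial q : ℝ) * (M : ℝ) ^ n)
      + β * ∑ l ∈ Finset.range n, e l (q + 1) / Real.sqrt ((M : ℝ) ^ (n - 1 - l))) :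
    e N 0 ≤ α * Real.exp (κ * M / 2) * (1 + β) ^ N / Real.sqrt ((M : ℝ) ^ N) := by
  have hM1 : (1:ℝ) ≤ (M:ℝ) := by exact_mod_cast hM
  have hMpos : (0:ℝ) < (M:ℝ) := by positivity
  set E : ℝ := Real.exp (κ * M / 2) with hE
  have hEpos : 0 < E := Real.exp_pos _
  -- key pointwise bound : (κM)^q ≤ exp(κM) * q!
  have hfact : ∀ q : ℕ, (κ * M) ^ q ≤ Real.exp (κ * M) * (Nat.factorial q : ℝ) := by
    intro q
    have hx : 0 ≤ κ * M := by positivity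
    have h1 : (κ * M) ^ q / (Nat.factorial q : ℝ) ≤ Real.exp (κ * M) := by
      have hsum : ∑ i ∈ Finset.range (q+1), (κ*M) ^ i / (Nat.factorial i : ℝ)
          ≤ Real.exp (κ * M) := Real.sum_le_exp_of_nonneg hx (q+1)
      refine le_trans ?_ hsum
      refine Finset.single_le_sum (f := fun i => (κ*M) ^ i / (Nat.factorial i : ℝ))
        (fun i _ => by positivity) (Finset.self_mem_range_succ q)
    have hfq : (0:ℝ) < (Nat.factorial q : ℝ) := by
      exact_mod_cast Nat.factorial_pos q
    calc (κ * M) ^ q = (κ * M) ^ q / (Nat.factorial q : ℝ) * (Nat.factorial q : ℝ) := by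
          field_simp
      _ ≤ Real.exp (κ * M) * (Nat.factorial q : ℝ) := by
          exact mul_le_mul_of_nonneg_right h1 hfq.le
  have key : ∀ n, n ≤ N → ∀ q, e n q ≤ α * (1+β)^n * E / Real.sqrt ((M:ℝ)^(n+q)) := by
    intro n
    induction n using Nat.strong_induction_on with
    | _ n ih =>
      intro hn q
      have hSpos : 0 < Real.sqrt ((M:ℝ)^(n+q)) := Real.sqrt_pos.mpr (by positivity)
      have h1 : α * Real.sqrt (κ ^ q) / Real.sqrt ((Nat.factorial q : ℝ) * (M:ℝ)^n)
          ≤ α * E / Real.sqrt ((M:ℝ)^(n+q)) := by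
        have hDpos : 0 < Real.sqrt ((Nat.factorial q : ℝ) * (M:ℝ)^n) := by
          have : (0:ℝ) < (Nat.factorial q : ℝ) * (M:ℝ)^n := by positivity
          exact Real.sqrt_pos.mpr this
        rw [div_le_div_iff₀ hDpos hSpos]
        have hmain : Real.sqrt (κ ^ q) * Real.sqrt ((M:ℝ)^(n+q))
            ≤ E * Real.sqrt ((Nat.factorial q : ℝ) * (M:ℝ)^n) := by
          rw [← Real.sqrt_mul (by positivity)]
          have hEeq : E = Real.sqrt (Real.exp (κ * M)) := by
            rw [hE, ← Real.exp_half]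
          rw [hEeq, ← Real.sqrt_mul (Real.exp_nonneg _)]
          apply Real.sqrt_le_sqrt
          have : κ ^ q * (M:ℝ)^(n+q) = (κ * M)^q * (M:ℝ)^n := by
            rw [pow_add, mul_pow]; ring
          rw [this, ← mul_assoc]
          exact mul_le_mul_of_nonneg_right (hfact q) (by positivity)
        calc α * Real.sqrt (κ ^ q) * Real.sqrt ((M:ℝ)^(n+q))
            = α * (Real.sqrt (κ ^ q) * Real.sqrt ((M:ℝ)^(n+q))) := by ring
          _ ≤ α * (E * Real.sqrt ((Nat.factorial q : ℝ) * (M:ℝ)^n)) :=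
              mul_le_mul_of_nonneg_left hmain hα
          _ = α * E * Real.sqrt ((Nat.factorial q : ℝ) * (M:ℝ)^n) := by ring
      have h2 : β * ∑ l ∈ Finset.range n, e l (q+1) / Real.sqrt ((M:ℝ)^(n-1-l))
          ≤ ((1+β)^n - 1) * (α * E / Real.sqrt ((M:ℝ)^(n+q))) := by
        have hterm : ∀ l ∈ Finset.range n,
            e l (q+1) / Real.sqrt ((M:ℝ)^(n-1-l))
            ≤ (1+β)^l * (α * E / Real.sqrt ((M:ℝ)^(n+q))) := by
          intro l hl
          rw [Finset.mem_range] at hl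
          have hil := ih l hl (le_trans hl.le hn) (q+1)
          have hDpos : 0 < Real.sqrt ((M:ℝ)^(n-1-l)) := Real.sqrt_pos.mpr (by positivity)
          have step : e l (q+1) / Real.sqrt ((M:ℝ)^(n-1-l))
              ≤ (α * (1+β)^l * E / Real.sqrt ((M:ℝ)^(l+(q+1)))) / Real.sqrt ((M:ℝ)^(n-1-l)) :=
            (div_le_div_iff_of_pos_right hDpos).mpr hil
          refine step.trans (le_of_eq ?_)
          rw [div_div, ← Real.sqrt_mul (by positivity), ← pow_add]
          have : l + (q+1) + (n-1-l) = n + q := by omega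
          rw [this]; ring
        have hsum := Finset.sum_le_sum hterm
        calc β * ∑ l ∈ Finset.range n, e l (q+1) / Real.sqrt ((M:ℝ)^(n-1-l))
            ≤ β * ∑ l ∈ Finset.range n, (1+β)^l * (α * E / Real.sqrt ((M:ℝ)^(n+q))) :=
              mul_le_mul_of_nonneg_left hsum hβ
          _ = (∑ l ∈ Finset.range n, (1+β)^l) * ((1+β) - 1) * (α * E / Real.sqrt ((M:ℝ)^(n+q))) := by
              rw [← Finset.sum_mul]; ring
          _ = ((1+β)^n - 1) * (α * E / Real.sqrt ((M:ℝ)^(n+q))) := by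
              rw [geom_sum_mul]
      have h0 : 0 ≤ α * E / Real.sqrt ((M:ℝ)^(n+q)) := by positivity
      calc e n q ≤ _ := hrec n hn q
        _ ≤ α * E / Real.sqrt ((M:ℝ)^(n+q))
            + ((1+β)^n - 1) * (α * E / Real.sqrt ((M:ℝ)^(n+q))) := add_le_add h1 h2
        _ = (1+β)^n * (α * E / Real.sqrt ((M:ℝ)^(n+q))) := by ring
        _ = α * (1+β)^n * E / Real.sqrt ((M:ℝ)^(n+q)) := by ring
  have h := key N le_rfl 0
  rw [Nat.add_zero] at h
  calc e N 0 ≤ α * (1+β)^N * E / Real.sqrt ((M:ℝ)^N) := h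
    _ = α * E * (1+β)^N / Real.sqrt ((M:ℝ)^N) := by ring
end
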